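/- arXiv:cond-mat/0404483 — 8 statements merged into one kernel-verified Lean document; each statement's English description precedes it below -/
import Mathlib

section
/- For every integer d ≥ 1, the function R : ℝ → ℝ is continuous, R(E) = 0 for E ≤ −2d, R(E) = 1 for E ≥ 2d, and R is strictly increasing on the interval [−2d, 2d]. Consequently, for every ρ ∈ (0,1) there is a unique E ∈ (−2d, 2d) with R(E) = ρ. -/
open MeasureTheory

private lemma countable_cos_fiber (c : ℝ) : {t : ℝ | Real.cos t = c}.Countable := by
  by_cases h : -1 ≤ c ∧ c ≤ 1
  · have hc : Real.cos (Real.arccos c) = c := Real.cos_arccos h.1 h.2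
    have hsub : {t : ℝ | Real.cos t = c} ⊆
        (Set.range fun k : ℤ => Real.arccos c - 2 * k * Real.pi) ∪
        (Set.range fun k : ℤ => 2 * k * Real.pi - Real.arccos c) := by
      intro t ht
      have ht' : Real.cos t = Real.cos (Real.arccos c) := by rw [hc]; exact ht
      rcases Real.cos_eq_cos_iff.mp ht' with ⟨k, hk | hk⟩
      · refine Or.inl ⟨k, ?_⟩
        show Real.arccos c - 2 * (k:ℝ) * Real.pi = t
        linarith
      · refine Or.inr ⟨k, ?_⟩
        show 2 * (k:ℝ) * Real.pi - Real.arccos c = t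
        linarith
    exact ((Set.countable_range _).union (Set.countable_range _)).mono hsub
  · have : {t : ℝ | Real.cos t = c} = ∅ := by
      ext t
      simp only [Set.mem_setOf_eq, Set.mem_empty_iff_false, iff_false]
      intro ht
      exact h ⟨ht ▸ Real.neg_one_le_cos t, ht ▸ Real.cos_le_one t⟩
    rw [this]; exact Set.countable_empty

private lemma sumcos_level_null : ∀ n : ℕ, 1 ≤ n → ∀ c : ℝ,
    volume {k : Fin n → ℝ | ∑ i, Real.cos (k i) = c} = 0 := by
  intro n hn
  induction n, hn using Nat.le_induction with
  | base =>
    intro c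
    have hmp := MeasureTheory.volume_preserving_funUnique (Fin 1) ℝ
    have hset : {k : Fin 1 → ℝ | ∑ i, Real.cos (k i) = c}
        = (MeasurableEquiv.funUnique (Fin 1) ℝ) ⁻¹' {t : ℝ | Real.cos t = c} := by
      ext k
      simp [Fin.sum_univ_one, MeasurableEquiv.funUnique, Equiv.funUnique]
    have h0 : (volume : Measure ℝ) {t : ℝ | Real.cos t = c} = 0 :=
      (countable_cos_fiber c).measure_zero _
    rw [hset]
    exact (hmp.measure_preimage (MeasureTheory.NullMeasurableSet.of_null h0)).trans h0
  | succ n hn ih =>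
    intro c
    have hmp := MeasureTheory.volume_preserving_piFinSuccAbove (fun _ : Fin (n+1) => ℝ) 0
    set e := MeasurableEquiv.piFinSuccAbove (fun _ : Fin (n+1) => ℝ) 0 with he
    set T : Set (ℝ × (Fin n → ℝ)) := {p | Real.cos p.1 + ∑ j, Real.cos (p.2 j) = c} with hT
    have hcont : Continuous fun p : ℝ × (Fin n → ℝ) =>
        Real.cos p.1 + ∑ j, Real.cos (p.2 j) := by
      apply Continuous.add
      · exact Real.continuous_cos.comp continuous_fst
      · exact continuous_finset_sum _ fun j _ =>
          Real.continuous_cos.comp ((continuous_apply j).comp continuous_snd)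
    have hTm : MeasurableSet T := hcont.measurable (measurableSet_singleton c)
    have hT0 : (volume : Measure (ℝ × (Fin n → ℝ))) T = 0 := by
      rw [MeasureTheory.Measure.volume_eq_prod, MeasureTheory.Measure.measure_prod_null hTm]
      filter_upwards with t
      have hslice : (Prod.mk t ⁻¹' T) = {y : Fin n → ℝ | ∑ j, Real.cos (y j) = c - Real.cos t} := by
        ext y
        simp only [Set.mem_preimage, Set.mem_setOf_eq, hT]
        constructor <;> intro hy <;> linarith
      rw [hslice]
      exact ih (c - Real.cos t)
    have hpre : {k : Fin (n+1) → ℝ | ∑ i, Real.cos (k i) = c} = e ⁻¹' T := by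
      ext k
      simp [hT, he, MeasurableEquiv.piFinSuccAbove_apply, Fin.sum_univ_succ,
        Fin.insertNthEquiv_symm_apply, Fin.removeNth, Fin.succAbove_zero, Fin.tail]
    rw [hpre, hmp.measure_preimage (MeasureTheory.NullMeasurableSet.of_null hT0)]
    exact hT0


/-- The tight-binding dispersion relation `ε(k) = -2 Σᵢ cos kᵢ`. -/
noncomputable def eps (d : ℕ) (k : Fin d → ℝ) : ℝ := -2 * ∑ i, Real.cos (k i)

/-- `R(E) = (2π)^{-d} λ({k ∈ [-π,π]^d : ε(k) < E})`. -/
noncomputable def Rfun (d : ℕ) (E : ℝ) : ℝ :=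
  (volume {k : Fin d → ℝ | (∀ i, k i ∈ Set.Icc (-Real.pi) Real.pi) ∧ eps d k < E}).toReal
    / (2 * Real.pi) ^ d

namespace Stmt1Aux

def Aset (d : ℕ) (E : ℝ) : Set (Fin d → ℝ) :=
  {k | (∀ i, k i ∈ Set.Icc (-Real.pi) Real.pi) ∧ eps d k < E}

lemma Rfun_eq (d : ℕ) (E : ℝ) :
    Rfun d E = (volume (Aset d E)).toReal / (2 * Real.pi) ^ d := rfl

lemma eps_continuous (d : ℕ) : Continuous (eps d) :=
  continuous_const.mul (continuous_finset_sum _ fun i _ =>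
    Real.continuous_cos.comp (continuous_apply i))

def cube (d : ℕ) : Set (Fin d → ℝ) := Set.pi Set.univ fun _ : Fin d => Set.Icc (-Real.pi) Real.pi

lemma mem_cube (d : ℕ) (k : Fin d → ℝ) :
    k ∈ cube d ↔ ∀ i, k i ∈ Set.Icc (-Real.pi) Real.pi := by
  simp only [cube, Set.mem_pi, Set.mem_univ, forall_true_left]

lemma Aset_eq (d : ℕ) (E : ℝ) : Aset d E = cube d ∩ eps d ⁻¹' Set.Iio E := by
  ext k
  simp only [Aset, Set.mem_setOf_eq, Set.mem_inter_iff, Set.mem_preimage, Set.mem_Iio,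
    mem_cube]

lemma Aset_subset_cube (d : ℕ) (E : ℝ) : Aset d E ⊆ cube d := fun k hk =>
  (mem_cube d k).2 hk.1

lemma cube_measurable (d : ℕ) : MeasurableSet (cube d) :=
  MeasurableSet.univ_pi fun _ => measurableSet_Icc

lemma volume_cube (d : ℕ) : volume (cube d) = ENNReal.ofReal ((2 * Real.pi) ^ d) := by
  rw [cube, volume_pi_pi]
  have h : (volume : Measure ℝ) (Set.Icc (-Real.pi) Real.pi) = ENNReal.ofReal (2 * Real.pi) := by
    rw [Real.volume_Icc]; ring_nf
  rw [Finset.prod_congr rfl fun i _ => h, Finset.prod_const, Finset.card_univ, Fintype.card_fin,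
    ← ENNReal.ofReal_pow (by positivity)]

lemma volume_Aset_ne_top (d : ℕ) (E : ℝ) : volume (Aset d E) ≠ ⊤ :=
  ((measure_mono (Aset_subset_cube d E)).trans_lt
    (by rw [volume_cube]; exact ENNReal.ofReal_lt_top)).ne

lemma eps_mem (d : ℕ) (k : Fin d → ℝ) : -(2*(d:ℝ)) ≤ eps d k ∧ eps d k ≤ 2*(d:ℝ) := by
  have h1 : ∑ i, Real.cos (k i) ≤ (d : ℝ) := by
    calc ∑ i : Fin d, Real.cos (k i) ≤ ∑ _i : Fin d, (1:ℝ) :=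
          Finset.sum_le_sum fun i _ => Real.cos_le_one _
      _ = d := by simp
  have h2 : -(d : ℝ) ≤ ∑ i, Real.cos (k i) := by
    calc -(d:ℝ) = ∑ _i : Fin d, (-1:ℝ) := by simp
      _ ≤ ∑ i : Fin d, Real.cos (k i) := Finset.sum_le_sum fun i _ => Real.neg_one_le_cos _
  constructor <;> · simp only [eps]; nlinarith

lemma levelset_null (d : ℕ) (hd : 1 ≤ d) (c : ℝ) :
    volume {k : Fin d → ℝ | eps d k = c} = 0 := by
  have h : {k : Fin d → ℝ | eps d k = c} = {k | ∑ i, Real.cos (k i) = -(c/2)} := by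
    ext k; simp only [Set.mem_setOf_eq, eps]
    constructor <;> intro hk <;> linarith
  rw [h]; exact sumcos_level_null d hd _

lemma Aset_mono (d : ℕ) : Monotone (fun E => Aset d E) := by
  intro E1 E2 h k hk
  exact ⟨hk.1, lt_of_lt_of_le hk.2 h⟩

lemma volume_Aset_bot (d : ℕ) (E : ℝ) (hE : E ≤ -(2*(d:ℝ))) : Aset d E = ∅ := by
  ext k
  simp only [Aset, Set.mem_setOf_eq, Set.mem_empty_iff_false, iff_false, not_and]
  intro _
  exact not_lt.2 (le_trans hE (eps_mem d k).1)

lemma volume_Aset_top (d : ℕ) (hd : 1 ≤ d) (E : ℝ) (hE : 2*(d:ℝ) ≤ E) :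
    volume (Aset d E) = ENNReal.ofReal ((2 * Real.pi) ^ d) := by
  refine le_antisymm ?_ ?_
  · rw [← volume_cube]
    exact measure_mono (Aset_subset_cube d E)
  · rw [← volume_cube]
    have hsub : cube d ⊆ Aset d E ∪ {k | eps d k = 2*(d:ℝ)} := by
      intro k hk
      rcases lt_or_eq_of_le (eps_mem d k).2 with h | h
      · exact Or.inl ⟨fun i => hk i (Set.mem_univ i), lt_of_lt_of_le h hE⟩
      · exact Or.inr h
    calc volume (cube d) ≤ volume (Aset d E ∪ {k | eps d k = 2*(d:ℝ)}) := measure_mono hsub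
      _ ≤ volume (Aset d E) + volume {k : Fin d → ℝ | eps d k = 2*(d:ℝ)} := measure_union_le _ _
      _ = volume (Aset d E) := by rw [levelset_null d hd, add_zero]


lemma volume_strictmono (d : ℕ) (hd : 1 ≤ d) {E1 E2 : ℝ}
    (h1 : -(2*(d:ℝ)) ≤ E1) (h2 : E2 ≤ 2*(d:ℝ)) (h12 : E1 < E2) :
    volume (Aset d E1) < volume (Aset d E2) := by
  have hd0 : (0:ℝ) < d := by exact_mod_cast hd
  set c : ℝ := (E1 + E2) / 2 with hc
  have hcE : E1 < c ∧ c < E2 := ⟨by rw [hc]; linarith, by rw [hc]; linarith⟩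
  have hcI : -(2*(d:ℝ)) < c ∧ c < 2*(d:ℝ) := ⟨by linarith [hcE.1], by linarith [hcE.2]⟩
  set x : ℝ := -c / (2*d) with hx
  have hx1 : -1 < x := by
    rw [hx, lt_div_iff₀ (by linarith)]
    linarith [hcI.2]
  have hx2 : x < 1 := by
    rw [hx, div_lt_one (by linarith)]
    linarith [hcI.1]
  set a : ℝ := Real.arccos x with ha
  have ha1 : 0 < a := Real.arccos_pos.2 hx2
  have ha2 : a < Real.pi :=
    lt_of_le_of_ne (Real.arccos_le_pi x) fun h => absurd (Real.arccos_eq_pi.1 h) (by linarith)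
  have hcos : Real.cos a = x := Real.cos_arccos hx1.le hx2.le
  set k0 : Fin d → ℝ := fun _ => a with hk0
  have hepsk0 : eps d k0 = c := by
    rw [eps]
    simp only [hk0, hcos, Finset.sum_const, Finset.card_univ, Fintype.card_fin, smul_eq_mul]
    rw [hx]
    field_simp
    ring_nf
    exact mul_inv_cancel_right₀ hd0.ne' c
  set U : Set (Fin d → ℝ) :=
    eps d ⁻¹' Set.Ioo E1 E2 ∩ Set.pi Set.univ (fun _ : Fin d => Set.Ioo (-Real.pi) Real.pi)
    with hU
  have hUopen : IsOpen U :=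
    ((eps_continuous d).isOpen_preimage _ isOpen_Ioo).inter
      (isOpen_set_pi Set.finite_univ fun i _ => isOpen_Ioo)
  have hk0U : k0 ∈ U := by
    constructor
    · rw [Set.mem_preimage, hepsk0]; exact ⟨hcE.1, hcE.2⟩
    · intro i _
      exact ⟨by linarith [Real.pi_pos], ha2⟩
  have hUpos : 0 < volume U := hUopen.measure_pos volume ⟨k0, hk0U⟩
  have hUA2 : U ⊆ Aset d E2 := by
    intro k hk
    refine ⟨fun i => ?_, hk.1.2⟩
    have := hk.2 i (Set.mem_univ i)
    exact ⟨this.1.le, this.2.le⟩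
  have hdisj : Disjoint (Aset d E1) U := by
    rw [Set.disjoint_left]
    intro k hk1 hkU
    exact absurd hk1.2 (not_lt.2 hkU.1.1.le)
  have hunion : Aset d E1 ∪ U ⊆ Aset d E2 :=
    Set.union_subset (Aset_mono d h12.le) hUA2
  calc volume (Aset d E1) < volume (Aset d E1) + volume U :=
        ENNReal.lt_add_right (volume_Aset_ne_top d E1) hUpos.ne'
    _ = volume (Aset d E1 ∪ U) := (measure_union hdisj hUopen.measurableSet).symm
    _ ≤ volume (Aset d E2) := measure_mono hunion

lemma Aset_measurable (d : ℕ) (E : ℝ) : MeasurableSet (Aset d E) := by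
  rw [Aset_eq]
  exact (cube_measurable d).inter
    ((eps_continuous d).measurable measurableSet_Iio)

lemma g_monotone (d : ℕ) : Monotone (fun E => (volume (Aset d E)).toReal) :=
  fun E1 E2 h => ENNReal.toReal_mono (volume_Aset_ne_top d E2)
    (measure_mono (Aset_mono d h))

lemma g_continuous (d : ℕ) (hd : 1 ≤ d) :
    Continuous (fun E => (volume (Aset d E)).toReal) := by
  set g : ℝ → ℝ := fun E => (volume (Aset d E)).toReal with hg
  rw [continuous_iff_continuousAt]
  intro a
  -- left limit
  have hleft : Filter.Tendsto (fun n : ℕ => g (a - 1/(n+1))) Filter.atTop (nhds (g a)) := by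
    have hsm : Monotone (fun n : ℕ => Aset d (a - 1/(n+1))) := by
      intro n m hnm
      apply Aset_mono d
      have : 1/((m:ℝ)+1) ≤ 1/((n:ℝ)+1) :=
        one_div_le_one_div_of_le (by positivity) (by exact_mod_cast by omega)
      linarith
    have hU : (⋃ n : ℕ, Aset d (a - 1/(n+1))) = Aset d a := by
      apply Set.Subset.antisymm
      · refine Set.iUnion_subset fun n => Aset_mono d ?_
        have : (0:ℝ) < 1/((n:ℝ)+1) := by positivity
        linarith
      · intro k hk
        obtain ⟨n, hn⟩ := exists_nat_one_div_lt (sub_pos.2 hk.2)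
        exact Set.mem_iUnion.2 ⟨n, hk.1, by push_cast at hn ⊢; linarith⟩
    have ht := tendsto_measure_iUnion_atTop (μ := volume) hsm
    rw [hU] at ht
    exact (ENNReal.tendsto_toReal (volume_Aset_ne_top d a)).comp ht
  -- right limit
  have hright : Filter.Tendsto (fun n : ℕ => g (a + 1/(n+1))) Filter.atTop (nhds (g a)) := by
    have hsm : Antitone (fun n : ℕ => Aset d (a + 1/(n+1))) := by
      intro n m hnm
      apply Aset_mono d
      have : 1/((m:ℝ)+1) ≤ 1/((n:ℝ)+1) :=
        one_div_le_one_div_of_le (by positivity) (by exact_mod_cast by omega)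
      linarith
    have hI : (⋂ n : ℕ, Aset d (a + 1/(n+1))) = cube d ∩ eps d ⁻¹' Set.Iic a := by
      apply Set.Subset.antisymm
      · intro k hk
        have h0 := Set.mem_iInter.1 hk 0
        refine ⟨Aset_subset_cube d _ h0, ?_⟩
        simp only [Set.mem_preimage, Set.mem_Iic]
        by_contra hlt
        push_neg at hlt
        obtain ⟨n, hn⟩ := exists_nat_one_div_lt (sub_pos.2 hlt)
        have := (Set.mem_iInter.1 hk n).2
        push_cast at hn
        linarith
      · intro k hk
        refine Set.mem_iInter.2 fun n => ⟨(mem_cube d k).1 hk.1, ?_⟩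
        have : eps d k ≤ a := hk.2
        have hpos : (0:ℝ) < 1/((n:ℝ)+1) := by positivity
        linarith
    have hIvol : volume (cube d ∩ eps d ⁻¹' Set.Iic a) = volume (Aset d a) := by
      apply le_antisymm
      · have hsub : cube d ∩ eps d ⁻¹' Set.Iic a ⊆ Aset d a ∪ {k | eps d k = a} := by
          intro k hk
          have hka : eps d k ≤ a := hk.2
          rcases lt_or_eq_of_le hka with h | h
          · exact Or.inl ⟨(mem_cube d k).1 hk.1, h⟩
          · exact Or.inr h
        calc volume (cube d ∩ eps d ⁻¹' Set.Iic a)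
            ≤ volume (Aset d a ∪ {k | eps d k = a}) := measure_mono hsub
          _ ≤ volume (Aset d a) + volume {k : Fin d → ℝ | eps d k = a} := measure_union_le _ _
          _ = volume (Aset d a) := by rw [levelset_null d hd, add_zero]
      · apply measure_mono
        intro k hk
        exact ⟨(mem_cube d k).2 hk.1, le_of_lt hk.2⟩
    have ht := tendsto_measure_iInter_atTop (μ := volume)
      (fun n => (Aset_measurable d _).nullMeasurableSet) hsm
      ⟨0, volume_Aset_ne_top d _⟩
    rw [hI, hIvol] at ht
    exact (ENNReal.tendsto_toReal (volume_Aset_ne_top d a)).comp ht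
  -- epsilon-delta
  rw [Metric.continuousAt_iff]
  intro ε hε
  have hev := ((Metric.tendsto_nhds.mp hleft ε hε).and
    (Metric.tendsto_nhds.mp hright ε hε)).exists
  obtain ⟨n, hn1, hn2⟩ := hev
  refine ⟨1/((n:ℝ)+1), by positivity, ?_⟩
  intro x hx
  rw [Real.dist_eq, abs_lt] at hx hn1 hn2 ⊢
  have hb1 : g (a - 1/((n:ℝ)+1)) ≤ g x := g_monotone d (by linarith [hx.1])
  have hb2 : g x ≤ g (a + 1/((n:ℝ)+1)) := g_monotone d (by linarith [hx.2])
  constructor <;> [linarith [hn1.1]; linarith [hn2.2]]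
end Stmt1Aux

open Stmt1Aux in
/-- `R` is continuous, vanishes for `E ≤ -2d`, equals `1` for `E ≥ 2d`, is strictly
increasing on `[-2d, 2d]`; consequently for every `ρ ∈ (0,1)` there is a unique
`E ∈ (-2d, 2d)` with `R(E) = ρ`. -/
theorem stmt1 (d : ℕ) (hd : 1 ≤ d) :
    Continuous (Rfun d) ∧
    (∀ E : ℝ, E ≤ -(2*(d:ℝ)) → Rfun d E = 0) ∧
    (∀ E : ℝ, (2*(d:ℝ)) ≤ E → Rfun d E = 1) ∧
    StrictMonoOn (Rfun d) (Set.Icc (-(2*(d:ℝ))) (2*(d:ℝ))) ∧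
    (∀ ρ ∈ Set.Ioo (0:ℝ) 1, ∃! E : ℝ, E ∈ Set.Ioo (-(2*(d:ℝ))) (2*(d:ℝ)) ∧ Rfun d E = ρ) := by
  have hd0 : (0:ℝ) < d := by exact_mod_cast hd
  have hpow : (0:ℝ) < (2 * Real.pi) ^ d := by positivity
  have hcont : Continuous (Rfun d) := by
    have : Rfun d = fun E => (volume (Aset d E)).toReal / (2 * Real.pi) ^ d := by
      funext E; exact Rfun_eq d E
    rw [this]
    exact (g_continuous d hd).div_const _
  have hzero : ∀ E : ℝ, E ≤ -(2*(d:ℝ)) → Rfun d E = 0 := by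
    intro E hE
    rw [Rfun_eq, volume_Aset_bot d E hE]
    simp
  have hone : ∀ E : ℝ, (2*(d:ℝ)) ≤ E → Rfun d E = 1 := by
    intro E hE
    rw [Rfun_eq, volume_Aset_top d hd E hE, ENNReal.toReal_ofReal hpow.le, div_self hpow.ne']
  have hsmono : StrictMonoOn (Rfun d) (Set.Icc (-(2*(d:ℝ))) (2*(d:ℝ))) := by
    intro E1 hE1 E2 hE2 h12
    rw [Rfun_eq, Rfun_eq]
    have hv := volume_strictmono d hd hE1.1 hE2.2 h12
    have ht := (ENNReal.toReal_lt_toReal (volume_Aset_ne_top d E1) (volume_Aset_ne_top d E2)).2 hv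
    exact div_lt_div_of_pos_right ht hpow
  refine ⟨hcont, hzero, hone, hsmono, ?_⟩
  intro ρ hρ
  have hle : -(2*(d:ℝ)) ≤ 2*(d:ℝ) := by linarith
  have hiv := intermediate_value_Ioo hle hcont.continuousOn
  rw [hzero _ le_rfl, hone _ le_rfl] at hiv
  obtain ⟨E, hE, hRE⟩ := hiv hρ
  refine ⟨E, ⟨hE, hRE⟩, ?_⟩
  rintro E' ⟨hE', hRE'⟩
  exact hsmono.injOn (Set.Ioo_subset_Icc_self hE') (Set.Ioo_subset_Icc_self hE)
    (by rw [hRE', hRE])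
end

section
/- For every integer d ≥ 1 and every ρ ∈ (0,1), the free-electron energy density satisfies e(ρ) < 0. -/
open MeasureTheory

/-- `(2π)^{-d} ∫_{k ∈ [-π,π]^d, ε(k) < E} ε(k) dk`. -/
noncomputable def en (d : ℕ) (E : ℝ) : ℝ :=
  (∫ k in {k : Fin d → ℝ | (∀ i, k i ∈ Set.Icc (-Real.pi) Real.pi) ∧ eps d k < E},
    eps d k) / (2 * Real.pi) ^ d

lemma eps_cont (d : ℕ) : Continuous (eps d) := by
  unfold eps; fun_prop

lemma integral_cos_Icc : ∫ x in Set.Icc (-Real.pi) Real.pi, Real.cos x = 0 := by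
  have hle : -Real.pi ≤ Real.pi := by linarith [Real.pi_pos]
  rw [MeasureTheory.integral_Icc_eq_integral_Ioc, ← intervalIntegral.integral_of_le hle,
    integral_cos]
  simp

lemma integral_eps_box (d : ℕ) :
    ∫ k in Set.univ.pi (fun _ : Fin d => Set.Icc (-Real.pi) Real.pi), eps d k = 0 := by
  set Box : Set (Fin d → ℝ) := Set.univ.pi (fun _ => Set.Icc (-Real.pi) Real.pi) with hBoxdef
  have hBoxm : MeasurableSet Box := MeasurableSet.univ_pi (fun _ => measurableSet_Icc)
  have hIc : ∀ i : Fin d, IntegrableOn (fun k : Fin d → ℝ => Real.cos (k i)) Box := by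
    intro i
    exact ContinuousOn.integrableOn_compact
      (isCompact_univ_pi (fun _ => isCompact_Icc)) (by fun_prop)
  have key : ∀ i : Fin d, (∫ k in Box, Real.cos (k i)) = 0 := by
    intro i
    set f : Fin d → ℝ → ℝ := fun j =>
      (Set.Icc (-Real.pi) Real.pi).indicator (fun x => if j = i then Real.cos x else 1) with hf
    have hprod : ∀ k : Fin d → ℝ,
        (∏ j, f j (k j)) = Box.indicator (fun k => Real.cos (k i)) k := by
      intro k
      by_cases hk : k ∈ Box
      · have hk' : ∀ j, k j ∈ Set.Icc (-Real.pi) Real.pi := by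
          intro j; exact hk j (Set.mem_univ j)
        rw [Set.indicator_of_mem hk]
        calc (∏ j, f j (k j)) = ∏ j, (if j = i then Real.cos (k j) else 1) := by
              refine Finset.prod_congr rfl fun j _ => ?_
              rw [hf]; simp [Set.indicator_of_mem (hk' j)]
          _ = Real.cos (k i) := by
              rw [Finset.prod_ite_eq' Finset.univ i (fun j => Real.cos (k j))]
              simp
      · rw [Set.indicator_of_notMem hk]
        obtain ⟨j, hj⟩ : ∃ j, k j ∉ Set.Icc (-Real.pi) Real.pi := by
          by_contra hcon
          push_neg at hcon
          exact hk fun j _ => hcon j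
        refine Finset.prod_eq_zero (Finset.mem_univ j) ?_
        rw [hf]; simp [Set.indicator_of_notMem hj]
    have h1 : (∫ k in Box, Real.cos (k i)) = ∫ k : Fin d → ℝ, ∏ j, f j (k j) := by
      rw [← MeasureTheory.integral_indicator hBoxm]
      exact integral_congr_ae (Filter.Eventually.of_forall fun k => (hprod k).symm)
    rw [h1, MeasureTheory.integral_fintype_prod_volume_eq_prod]
    refine Finset.prod_eq_zero (Finset.mem_univ i) ?_
    rw [hf]
    simp only [if_pos rfl]
    rw [MeasureTheory.integral_indicator measurableSet_Icc]
    simpa using integral_cos_Icc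
  unfold eps
  rw [MeasureTheory.integral_const_mul, MeasureTheory.integral_finset_sum _ (fun i _ => hIc i)]
  simp [key]

/-- For every `d ≥ 1` and every `ρ ∈ (0,1)`, the free-electron energy density is
negative: `e(ρ)< 0`, where `e(ρ)` is computed at the Fermi energy, i.e. at the
(unique) `E ∈ (-2d,2d)` with `R(E) = ρ`. -/
theorem stmt2 (d : ℕ) (hd : 1 ≤ d) (ρ : ℝ) (hρ : ρ ∈ Set.Ioo (0:ℝ) 1)
    (E : ℝ) (hE : E ∈ Set.Ioo (-(2*(d:ℝ))) (2*(d:ℝ))) (hR : Rfun d E = ρ) :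
    en d E < 0 := by
  obtain ⟨hρ0, hρ1⟩ := hρ
  have hπ := Real.pi_pos
  set c : ℝ := (2 * Real.pi) ^ d with hc
  have hcpos : 0 < c := by positivity
  set Box : Set (Fin d → ℝ) := Set.univ.pi (fun _ => Set.Icc (-Real.pi) Real.pi) with hBoxdef
  have hBoxm : MeasurableSet Box := MeasurableSet.univ_pi (fun _ => measurableSet_Icc)
  set S : Set (Fin d → ℝ) :=
    {k | (∀ i, k i ∈ Set.Icc (-Real.pi) Real.pi) ∧ eps d k < E} with hSdef
  have hSsub : S ⊆ Box := by
    intro k hk j _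
    exact hk.1 j
  have hSm : MeasurableSet S := by
    have : S = Box ∩ {k | eps d k < E} := by
      ext k
      simp only [hSdef, Set.mem_setOf_eq, Set.mem_inter_iff, hBoxdef, Set.mem_pi,
        Set.mem_univ, true_implies]
    rw [this]
    exact hBoxm.inter (measurableSet_lt (eps_cont d).measurable measurable_const)
  have hvolBox : volume Box = ENNReal.ofReal c := by
    rw [hBoxdef, volume_pi_pi]
    rw [Real.volume_Icc, show Real.pi - -Real.pi = 2 * Real.pi by ring,
      Finset.prod_const, Finset.card_univ, Fintype.card_fin,
      ← ENNReal.ofReal_pow (by positivity)]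
  have hBoxfin : volume Box ≠ ⊤ := by rw [hvolBox]; exact ENNReal.ofReal_ne_top
  have hSfin : volume S ≠ ⊤ := ne_top_of_le_ne_top hBoxfin (measure_mono hSsub)
  have hBoxToReal : (volume Box).toReal = c := by rw [hvolBox, ENNReal.toReal_ofReal hcpos.le]
  have hSToReal : (volume S).toReal = ρ * c := by
    have : (volume S).toReal / c = ρ := hR
    field_simp at this
    linarith
  have hIntBox : IntegrableOn (eps d) Box :=
    ContinuousOn.integrableOn_compact
      (isCompact_univ_pi (fun _ => isCompact_Icc)) (eps_cont d).continuousOn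
  have hIntS : IntegrableOn (eps d) S := hIntBox.mono_set hSsub
  have hgoal : (∫ k in S, eps d k) < 0 → en d E < 0 := by
    intro h
    exact div_neg_of_neg_of_pos h hcpos
  refine hgoal ?_
  rcases le_or_gt E 0 with hE0 | hE0
  · -- E ≤ 0 : eps < E ≤ 0 on S and S has positive measure
    have hSpos : 0 < volume S := by
      rw [pos_iff_ne_zero]
      intro h0
      rw [h0] at hSToReal
      simp only [ENNReal.toReal_zero] at hSToReal
      nlinarith
    have hnn : 0 ≤ᵐ[volume.restrict S] fun k => -eps d k := by
      filter_upwards [ae_restrict_mem hSm] with k hk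
      have := hk.2
      simp only [Pi.zero_apply]
      linarith
    have hposint : 0 < ∫ k in S, -eps d k := by
      rw [setIntegral_pos_iff_support_of_nonneg_ae hnn hIntS.neg]
      have hsupp : Function.support (fun k => -eps d k) ∩ S = S := by
        apply Set.inter_eq_self_of_subset_right
        intro k hk
        have := hk.2
        simp only [Function.mem_support]
        intro hzero
        have : eps d k = 0 := by linarith [neg_eq_zero.mp hzero]
        linarith
      rw [hsupp]
      exact hSpos
    rw [MeasureTheory.integral_neg] at hposint
    linarith
  · -- E > 0 : use ∫_Box eps = 0 and eps ≥ E > 0 on Box \ S with positive measure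
    have hdiff : ∫ k in Box \ S, eps d k = (∫ k in Box, eps d k) - ∫ k in S, eps d k :=
      MeasureTheory.integral_diff hSm hIntBox hSsub
    have hBox0 : ∫ k in Box, eps d k = 0 := integral_eps_box d
    have hdiffm : MeasurableSet (Box \ S) := hBoxm.diff hSm
    have hdifffin : volume (Box \ S) ≠ ⊤ :=
      ne_top_of_le_ne_top hBoxfin (measure_mono Set.diff_subset)
    have hdiffToReal : (volume (Box \ S)).toReal = (1 - ρ) * c := by
      rw [measure_diff hSsub hSm.nullMeasurableSet hSfin,
        ENNReal.toReal_sub_of_le (measure_mono hSsub) hBoxfin, hBoxToReal, hSToReal]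
      ring
    have hdiffpos : 0 < (volume (Box \ S)).toReal := by
      rw [hdiffToReal]; nlinarith
    have hge : ∀ k ∈ Box \ S, E ≤ eps d k := by
      rintro k ⟨hkB, hkS⟩
      by_contra hlt
      push_neg at hlt
      exact hkS ⟨fun i => hkB i (Set.mem_univ i), hlt⟩
    have hlow : E * (volume (Box \ S)).toReal ≤ ∫ k in Box \ S, eps d k :=
      by have := setIntegral_ge_of_const_le hdiffm hdifffin hge (hIntBox.mono_set Set.diff_subset)
         rw [smul_eq_mul, Measure.real, mul_comm] at this; exact this
    have : 0 < E * (volume (Box \ S)).toReal := mul_pos hE0 hdiffpos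
    rw [hdiff, hBox0] at hlow
    linarith
end

section
/- For every integer d ≥ 1, the function e : [0,1] → ℝ is convex on [0,1], and for every ρ ∈ (0,1) it is differentiable at ρ with derivative e'(ρ) = ε_F(ρ). -/
open MeasureTheory

namespace Aux

open Set

def cube (d : ℕ) : Set (Fin d → ℝ) := Set.pi Set.univ (fun _ => Set.Icc (-Real.pi) Real.pi)

def SS (d : ℕ) (E : ℝ) : Set (Fin d → ℝ) :=
  {k | (∀ i, k i ∈ Set.Icc (-Real.pi) Real.pi) ∧ eps d k < E}

lemma continuous_eps (d : ℕ) : Continuous (eps d) :=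
  continuous_const.mul (continuous_finset_sum _ fun i _ =>
    Real.continuous_cos.comp (continuous_apply i))

lemma SS_eq (d : ℕ) (E : ℝ) : SS d E = cube d ∩ eps d ⁻¹' (Set.Iio E) := by
  ext k
  constructor
  · rintro ⟨h1, h2⟩; exact ⟨fun i _ => h1 i, h2⟩
  · rintro ⟨h1, h2⟩; exact ⟨fun i => h1 i trivial, h2⟩

lemma measurableSet_cube (d : ℕ) : MeasurableSet (cube d) :=
  MeasurableSet.univ_pi fun _ => measurableSet_Icc

lemma measurableSet_SS (d : ℕ) (E : ℝ) : MeasurableSet (SS d E) := by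
  rw [SS_eq]
  exact (measurableSet_cube d).inter ((continuous_eps d).measurable measurableSet_Iio)

lemma cube_eq_Icc (d : ℕ) : cube d = Set.Icc (fun _ => -Real.pi) (fun _ => Real.pi) := by
  rw [← Set.pi_univ_Icc]; rfl

lemma volume_cube (d : ℕ) : volume (cube d) = ENNReal.ofReal ((2 * Real.pi) ^ d) := by
  rw [cube, volume_pi_pi]
  simp only [Real.volume_Icc, Finset.prod_const, Finset.card_univ, Fintype.card_fin]
  have h : Real.pi - -Real.pi = 2 * Real.pi := by ring
  rw [h, ← ENNReal.ofReal_pow (by positivity)]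

lemma volume_cube_toReal (d : ℕ) : (volume (cube d)).toReal = (2 * Real.pi) ^ d := by
  rw [volume_cube, ENNReal.toReal_ofReal (by positivity)]

lemma volume_cube_ne_top (d : ℕ) : volume (cube d) ≠ ⊤ := by
  rw [volume_cube]; exact ENNReal.ofReal_ne_top

lemma SS_subset_cube (d : ℕ) (E : ℝ) : SS d E ⊆ cube d := by
  rw [SS_eq]; exact Set.inter_subset_left

lemma volume_SS_ne_top (d : ℕ) (E : ℝ) : volume (SS d E) ≠ ⊤ :=
  fun h => volume_cube_ne_top d (top_le_iff.1 (h ▸ measure_mono (SS_subset_cube d E)))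

lemma integrableOn_cube (d : ℕ) : IntegrableOn (eps d) (cube d) := by
  rw [cube_eq_Icc]
  exact (continuous_eps d).continuousOn.integrableOn_compact isCompact_Icc

lemma integrableOn_subset (d : ℕ) {s : Set (Fin d → ℝ)} (hs : s ⊆ cube d) :
    IntegrableOn (eps d) s :=
  (integrableOn_cube d).mono_set hs


lemma integral_cube_cos (d : ℕ) (j : Fin d) : ∫ k in cube d, Real.cos (k j) = 0 := by
  rw [← integral_indicator (measurableSet_cube d)]
  have hrw : (cube d).indicator (fun k => Real.cos (k j)) = fun k => ∏ i,
      (Set.indicator (Set.Icc (-Real.pi) Real.pi)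
        (fun x => if i = j then Real.cos x else 1)) (k i) := by
    funext k
    by_cases hk : k ∈ cube d
    · rw [Set.indicator_of_mem hk]
      have h1 : ∀ i : Fin d, (Set.indicator (Set.Icc (-Real.pi) Real.pi)
          (fun x => if i = j then Real.cos x else 1)) (k i)
          = if i = j then Real.cos (k i) else 1 := fun i =>
        Set.indicator_of_mem (hk i trivial) _
      simp only [h1]
      simp
    · obtain ⟨i₀, hi₀⟩ : ∃ i, k i ∉ Set.Icc (-Real.pi) Real.pi := by
        by_contra hc
        push_neg at hc
        exact hk fun i _ => hc i
      rw [Set.indicator_of_notMem hk]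
      symm
      apply Finset.prod_eq_zero (Finset.mem_univ i₀)
      simp [Set.indicator_of_notMem hi₀]
  rw [hrw, MeasureTheory.integral_fintype_prod_volume_eq_prod]
  apply Finset.prod_eq_zero (Finset.mem_univ j)
  rw [MeasureTheory.integral_indicator measurableSet_Icc]
  simp only [if_pos rfl]
  rw [MeasureTheory.integral_Icc_eq_integral_Ioc,
    ← intervalIntegral.integral_of_le (by linarith [Real.pi_pos])]
  simp [integral_cos]

lemma integral_cube_eps (d : ℕ) : ∫ k in cube d, eps d k = 0 := by
  unfold eps
  rw [integral_const_mul]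
  rw [integral_finset_sum]
  · simp [integral_cube_cos]
  · intro i _
    rw [cube_eq_Icc]
    exact ((Real.continuous_cos.comp (continuous_apply i)).continuousOn).integrableOn_compact
      isCompact_Icc


lemma Rfun_eq (d : ℕ) (E : ℝ) :
    Rfun d E = (volume (SS d E)).toReal / (2 * Real.pi) ^ d := rfl

lemma en_eq (d : ℕ) (E : ℝ) :
    en d E = (∫ k in SS d E, eps d k) / (2 * Real.pi) ^ d := rfl

lemma SS_mono (d : ℕ) {E₁ E₂ : ℝ} (h : E₁ ≤ E₂) : SS d E₁ ⊆ SS d E₂ :=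
  fun _ hk => ⟨hk.1, lt_of_lt_of_le hk.2 h⟩

lemma P_pos (d : ℕ) : (0:ℝ) < (2 * Real.pi) ^ d := by positivity

lemma vol_decomp (d : ℕ) {E₁ E₂ : ℝ} (h : E₁ ≤ E₂) :
    (volume (SS d E₂)).toReal
      = (volume (SS d E₁)).toReal + (volume (SS d E₂ \ SS d E₁)).toReal := by
  rw [← ENNReal.toReal_add (volume_SS_ne_top d E₁)
    (fun ht => volume_SS_ne_top d E₂
      (top_le_iff.1 (ht ▸ measure_mono Set.diff_subset)))]
  congr 1
  rw [← measure_union disjoint_sdiff_self_right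
    ((measurableSet_SS d E₂).diff (measurableSet_SS d E₁)),
    Set.union_diff_cancel (SS_mono d h)]

lemma int_decomp (d : ℕ) {E₁ E₂ : ℝ} (h : E₁ ≤ E₂) :
    (∫ k in SS d E₂, eps d k)
      = (∫ k in SS d E₁, eps d k) + ∫ k in SS d E₂ \ SS d E₁, eps d k := by
  rw [← setIntegral_union disjoint_sdiff_self_right
    ((measurableSet_SS d E₂).diff (measurableSet_SS d E₁))
    (integrableOn_subset d (SS_subset_cube d E₁))
    (integrableOn_subset d ((Set.diff_subset).trans (SS_subset_cube d E₂))),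
    Set.union_diff_cancel (SS_mono d h)]

lemma mem_T_bounds (d : ℕ) {E₁ E₂ : ℝ} {k : Fin d → ℝ}
    (hk : k ∈ SS d E₂ \ SS d E₁) : E₁ ≤ eps d k ∧ eps d k < E₂ := by
  refine ⟨?_, hk.1.2⟩
  by_contra hc
  push_neg at hc
  exact hk.2 ⟨hk.1.1, hc⟩

lemma sandwich (d : ℕ) {E₁ E₂ : ℝ} (h : E₁ ≤ E₂) :
    E₁ * (Rfun d E₂ - Rfun d E₁) ≤ en d E₂ - en d E₁ ∧
    en d E₂ - en d E₁ ≤ E₂ * (Rfun d E₂ - Rfun d E₁) := by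
  set T := SS d E₂ \ SS d E₁ with hT
  have hTm : MeasurableSet T := (measurableSet_SS d E₂).diff (measurableSet_SS d E₁)
  have hTsub : T ⊆ cube d := (Set.diff_subset).trans (SS_subset_cube d E₂)
  have hTfin : volume T < ⊤ :=
    lt_of_le_of_lt (measure_mono hTsub) (lt_top_iff_ne_top.2 (volume_cube_ne_top d))
  have hconst : ∀ c : ℝ, IntegrableOn (fun _ => c) T volume :=
    fun c => integrableOn_const hTfin.ne
  have hlow : E₁ * (volume T).toReal ≤ ∫ k in T, eps d k := by
    have := setIntegral_mono_on (hconst E₁) (integrableOn_subset d hTsub) hTm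
      (fun k hk => (mem_T_bounds d hk).1)
    rwa [setIntegral_const, smul_eq_mul, mul_comm] at this
  have hhigh : (∫ k in T, eps d k) ≤ E₂ * (volume T).toReal := by
    have := setIntegral_mono_on (integrableOn_subset d hTsub) (hconst E₂) hTm
      (fun k hk => (mem_T_bounds d hk).2.le)
    rwa [setIntegral_const, smul_eq_mul, mul_comm] at this
  have hR : Rfun d E₂ - Rfun d E₁ = (volume T).toReal / (2 * Real.pi) ^ d := by
    rw [Rfun_eq, Rfun_eq, div_sub_div_same, vol_decomp d h, hT]; ring_nf
  have hE : en d E₂ - en d E₁ = (∫ k in T, eps d k) / (2 * Real.pi) ^ d := by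
    rw [en_eq, en_eq, div_sub_div_same, int_decomp d h, hT]; ring_nf
  have hP := P_pos d
  constructor
  · rw [hR, hE, ← mul_div_assoc]
    gcongr
  · rw [hR, hE, ← mul_div_assoc]
    gcongr

lemma Rfun_mono (d : ℕ) {E₁ E₂ : ℝ} (h : E₁ ≤ E₂) : Rfun d E₁ ≤ Rfun d E₂ := by
  rw [Rfun_eq, Rfun_eq]
  exact div_le_div_of_nonneg_right
    (ENNReal.toReal_mono (volume_SS_ne_top d E₂) (measure_mono (SS_mono d h))) (P_pos d).le


lemma en_le_mul (d : ℕ) (E : ℝ) : en d E ≤ E * Rfun d E := by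
  have hfin : volume (SS d E) < ⊤ := lt_top_iff_ne_top.2 (volume_SS_ne_top d E)
  have hbound : (∫ k in SS d E, eps d k) ≤ E * (volume (SS d E)).toReal := by
    have := setIntegral_mono_on (integrableOn_subset d (SS_subset_cube d E))
      (integrableOn_const hfin.ne) (measurableSet_SS d E)
      (fun k hk => hk.2.le)
    rwa [setIntegral_const, smul_eq_mul, mul_comm] at this
  rw [en_eq, Rfun_eq, ← mul_div_assoc]
  exact div_le_div_of_nonneg_right hbound (P_pos d).le

lemma en_plus (d : ℕ) (E : ℝ) : en d E + E * (1 - Rfun d E) ≤ 0 := by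
  set Q := cube d \ SS d E with hQ
  have hQm : MeasurableSet Q := (measurableSet_cube d).diff (measurableSet_SS d E)
  have hQsub : Q ⊆ cube d := Set.diff_subset
  have hQfin : volume Q < ⊤ :=
    lt_of_le_of_lt (measure_mono hQsub) (lt_top_iff_ne_top.2 (volume_cube_ne_top d))
  have hvol : (2 * Real.pi) ^ d = (volume (SS d E)).toReal + (volume Q).toReal := by
    rw [← volume_cube_toReal d,
      ← ENNReal.toReal_add (volume_SS_ne_top d E) hQfin.ne]
    congr 1
    rw [← measure_union disjoint_sdiff_self_right hQm,
      Set.union_diff_cancel (SS_subset_cube d E)]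
  have hint : (0:ℝ) = (∫ k in SS d E, eps d k) + ∫ k in Q, eps d k := by
    rw [← integral_cube_eps d,
      ← setIntegral_union disjoint_sdiff_self_right hQm
        (integrableOn_subset d (SS_subset_cube d E)) (integrableOn_subset d hQsub),
      Set.union_diff_cancel (SS_subset_cube d E)]
  have hbound : E * (volume Q).toReal ≤ ∫ k in Q, eps d k := by
    have := setIntegral_mono_on (integrableOn_const hQfin.ne)
      (integrableOn_subset d hQsub) hQm
      (fun k hk => by
        by_contra hc
        push_neg at hc
        exact hk.2 ⟨fun i => hk.1 i trivial, hc⟩)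
    rwa [setIntegral_const, smul_eq_mul, mul_comm] at this
  have hP := P_pos d
  have key : en d E + E * (1 - Rfun d E)
      = ((∫ k in SS d E, eps d k) + E * ((2 * Real.pi) ^ d
          - (volume (SS d E)).toReal)) / (2 * Real.pi) ^ d := by
    rw [en_eq, Rfun_eq]
    field_simp
  rw [key]
  apply div_nonpos_of_nonpos_of_nonneg _ hP.le
  have h1 : (∫ k in SS d E, eps d k) = -(∫ k in Q, eps d k) := by linarith
  have h2 : (2 * Real.pi) ^ d - (volume (SS d E)).toReal = (volume Q).toReal := by
    linarith
  rw [h1, h2]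
  linarith

lemma Rfun_strict (d : ℕ) (hd : 1 ≤ d) {E₁ E₂ c : ℝ} (h1 : E₁ < c) (h2 : c < E₂)
    (h3 : -(2 * (d:ℝ)) < c) (h4 : c < 2 * (d:ℝ)) : Rfun d E₁ < Rfun d E₂ := by
  have hdpos : (0:ℝ) < 2 * (d:ℝ) := by
    have : (1:ℝ) ≤ (d:ℝ) := by exact_mod_cast hd
    linarith
  set x : ℝ := -c / (2 * (d:ℝ)) with hx
  have hx1 : -1 < x := by rw [hx, lt_div_iff₀ hdpos]; linarith
  have hx2 : x < 1 := by rw [hx, div_lt_one hdpos]; linarith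
  set t := Real.arccos x with ht
  have ht1 : 0 < t := Real.arccos_pos.2 hx2
  have ht2 : t < Real.pi := by
    refine lt_of_le_of_ne (Real.arccos_le_pi x) fun h => ?_
    have hc := Real.cos_arccos hx1.le hx2.le
    rw [← ht, h, Real.cos_pi] at hc
    linarith
  set k₀ : Fin d → ℝ := fun _ => t with hk₀
  have hek : eps d k₀ = c := by
    unfold eps
    rw [hk₀]
    rw [Finset.sum_const, Finset.card_univ, Fintype.card_fin, nsmul_eq_mul, ht,
      Real.cos_arccos hx1.le hx2.le, hx]
    field_simp
  set U : Set (Fin d → ℝ) :=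
    (Set.pi Set.univ fun _ : Fin d => Set.Ioo (-Real.pi) Real.pi)
      ∩ eps d ⁻¹' (Set.Ioo E₁ E₂) with hU
  have hUopen : IsOpen U :=
    (isOpen_set_pi Set.finite_univ fun i _ => isOpen_Ioo).inter
      (isOpen_Ioo.preimage (continuous_eps d))
  have hk₀U : k₀ ∈ U := by
    refine ⟨fun i _ => ⟨by linarith [Real.pi_pos], ht2⟩, ?_⟩
    rw [Set.mem_preimage, hek]
    exact ⟨h1, h2⟩
  have hUsub : U ⊆ SS d E₂ \ SS d E₁ := by
    rintro k ⟨hk1, hk2⟩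
    refine ⟨⟨fun i => Set.Ioo_subset_Icc_self (hk1 i trivial), hk2.2⟩, fun hmem => ?_⟩
    exact absurd hmem.2 (not_lt.2 hk2.1.le)
  have hTpos : 0 < (volume (SS d E₂ \ SS d E₁)).toReal := by
    refine ENNReal.toReal_pos ?_ ?_
    · exact (lt_of_lt_of_le (hUopen.measure_pos volume ⟨k₀, hk₀U⟩)
        (measure_mono hUsub)).ne'
    · exact fun htop => volume_cube_ne_top d (top_le_iff.1 (htop ▸ measure_mono
        ((Set.diff_subset).trans (SS_subset_cube d E₂))))
  have hV := vol_decomp d (h1.trans h2).le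
  rw [Rfun_eq, Rfun_eq, div_lt_div_iff_of_pos_right (P_pos d)]
  linarith

end Aux

/-- If `εF` is the Fermi energy (the unique `E ∈ (-2d,2d)` with `R(E) = ρ`) and `e`
is the free-electron energy density (with `e(0) = e(1) = 0`), then `e` is convex
on `[0,1]` and differentiable on `(0,1)` with derivative `e'(ρ) = εF(ρ)`. -/
theorem stmt3 (d : ℕ) (hd : 1 ≤ d) (εF e : ℝ → ℝ)
    (hεF : ∀ ρ ∈ Set.Ioo (0:ℝ) 1,
      εF ρ ∈ Set.Ioo (-(2*(d:ℝ))) (2*(d:ℝ)) ∧ Rfun d (εF ρ) = ρ)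
    (he : ∀ ρ ∈ Set.Ioo (0:ℝ) 1, e ρ = en d (εF ρ))
    (he0 : e 0 = 0) (he1 : e 1 = 0) :
    ConvexOn ℝ (Set.Icc 0 1) e ∧ ∀ ρ ∈ Set.Ioo (0:ℝ) 1, HasDerivAt e (εF ρ) ρ := by
  -- monotonicity of εF
  have mono : ∀ ρ₁ ∈ Set.Ioo (0:ℝ) 1, ∀ ρ₂ ∈ Set.Ioo (0:ℝ) 1, ρ₁ ≤ ρ₂ → εF ρ₁ ≤ εF ρ₂ := by
    intro ρ₁ h₁ ρ₂ h₂ h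
    by_contra hc
    push_neg at hc
    have h' := Aux.Rfun_mono d hc.le
    rw [(hεF ρ₂ h₂).2, (hεF ρ₁ h₁).2] at h'
    have heq : ρ₁ = ρ₂ := le_antisymm h h'
    rw [heq] at hc
    exact lt_irrefl _ hc
  -- subgradient inequality
  have subgrad : ∀ ρ ∈ Set.Ioo (0:ℝ) 1, ∀ z ∈ Set.Icc (0:ℝ) 1,
      e ρ + εF ρ * (z - ρ) ≤ e z := by
    intro ρ hρ z hz
    rcases eq_or_lt_of_le hz.1 with h0 | h0
    · rw [← h0, he0]
      have h1 := Aux.en_le_mul d (εF ρ)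
      rw [(hεF ρ hρ).2] at h1
      rw [he ρ hρ]
      have : εF ρ * (0 - ρ) = -(εF ρ * ρ) := by ring
      linarith
    rcases eq_or_lt_of_le hz.2 with h1 | h1
    · rw [h1, he1]
      have h2 := Aux.en_plus d (εF ρ)
      rw [(hεF ρ hρ).2] at h2
      rw [he ρ hρ]
      linarith
    · have hzI : z ∈ Set.Ioo (0:ℝ) 1 := ⟨h0, h1⟩
      rcases le_total ρ z with hle | hle
      · have hm : εF ρ ≤ εF z := mono ρ hρ z hzI hle
        have hs := (Aux.sandwich d hm).1
        rw [(hεF ρ hρ).2, (hεF z hzI).2] at hs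
        rw [he ρ hρ, he z hzI]
        linarith
      · have hm : εF z ≤ εF ρ := mono z hzI ρ hρ hle
        have hs := (Aux.sandwich d hm).2
        rw [(hεF ρ hρ).2, (hεF z hzI).2] at hs
        rw [he ρ hρ, he z hzI]
        have : εF ρ * (z - ρ) = -(εF ρ * (ρ - z)) := by ring
        linarith
  -- convexity
  have hconv : ConvexOn ℝ (Set.Icc (0:ℝ) 1) e := by
    refine ⟨convex_Icc 0 1, ?_⟩
    intro x hx y hy a b ha hb hab
    simp only [smul_eq_mul]
    rcases eq_or_lt_of_le ha with ha0 | ha0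
    · have hb1 : b = 1 := by linarith
      rw [← ha0, hb1]; simp
    rcases eq_or_lt_of_le hb with hb0 | hb0
    · have ha1 : a = 1 := by linarith
      rw [← hb0, ha1]; simp
    by_cases hxy : x = y
    · rw [hxy]
      have hm : a * y + b * y = y := by rw [← add_mul, hab, one_mul]
      rw [hm]
      have h' : a * e y + b * e y = e y := by rw [← add_mul, hab, one_mul]
      linarith
    · have hm0 : 0 < a * x + b * y := by
        rcases eq_or_lt_of_le hx.1 with hx0 | hx0
        · rcases eq_or_lt_of_le hy.1 with hy0 | hy0
          · exact absurd (hx0.symm.trans hy0) hxy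
          · nlinarith
        · nlinarith [hy.1]
      have hm1 : a * x + b * y < 1 := by
        rcases eq_or_lt_of_le hx.2 with hx1 | hx1
        · rcases eq_or_lt_of_le hy.2 with hy1 | hy1
          · exact absurd (hx1.trans hy1.symm) hxy
          · nlinarith
        · nlinarith [hy.2]
      have hmI : a * x + b * y ∈ Set.Ioo (0:ℝ) 1 := ⟨hm0, hm1⟩
      have h1 := subgrad _ hmI x hx
      have h2 := subgrad _ hmI y hy
      have hA := mul_le_mul_of_nonneg_left h1 ha0.le
      have hB := mul_le_mul_of_nonneg_left h2 hb0.le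
      have e1 : a * (e (a*x+b*y) + εF (a*x+b*y) * (x - (a*x+b*y)))
          + b * (e (a*x+b*y) + εF (a*x+b*y) * (y - (a*x+b*y)))
          = e (a*x+b*y) := by
        linear_combination (e (a*x+b*y) - εF (a*x+b*y) * (a*x+b*y)) * hab
      linarith
  refine ⟨hconv, fun ρ hρ => ?_⟩
  -- derivative
  set s : Set ℝ := Set.Ioo (0:ℝ) 1 \ {ρ} with hs
  have hfilter : nhdsWithin ρ {ρ}ᶜ = nhdsWithin ρ s := by
    rw [nhdsWithin_restrict' ({ρ}ᶜ) (Ioo_mem_nhds hρ.1 hρ.2), hs, Set.diff_eq,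
      Set.inter_comm]
  have tend_εF : Filter.Tendsto εF (nhdsWithin ρ s) (nhds (εF ρ)) := by
    rw [Metric.tendsto_nhdsWithin_nhds]
    intro δ hδ
    obtain ⟨hEmem, hRE⟩ := hεF ρ hρ
    set E := εF ρ with hE
    set E₁ : ℝ := max (E - δ/2) ((E + -(2*(d:ℝ)))/2) with hE₁
    set E₂ : ℝ := min (E + δ/2) ((E + 2*(d:ℝ))/2) with hE₂
    have hE₁lt : E₁ < E :=
      max_lt (by linarith) (by have := hEmem.1; linarith)
    have hE₁gt : -(2*(d:ℝ)) < E₁ :=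
      lt_max_of_lt_right (by have := hEmem.1; linarith)
    have hE₂gt : E < E₂ :=
      lt_min (by linarith) (by have := hEmem.2; linarith)
    have hE₂lt : E₂ < 2*(d:ℝ) :=
      min_lt_of_right_lt (by have := hEmem.2; linarith)
    have hE₁ge : E - δ ≤ E₁ := le_trans (by linarith) (le_max_left _ _)
    have hE₂le : E₂ ≤ E + δ := le_trans (min_le_left _ _) (by linarith)
    have hR1 : Rfun d E₁ < ρ := by
      rw [← hRE]
      exact Aux.Rfun_strict d hd (show E₁ < (E₁ + E)/2 by linarith)
        (show (E₁ + E)/2 < E by linarith) (by linarith) (by have := hEmem.2; linarith)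
    have hR2 : ρ < Rfun d E₂ := by
      rw [← hRE]
      exact Aux.Rfun_strict d hd (show E < (E + E₂)/2 by linarith)
        (show (E + E₂)/2 < E₂ by linarith) (by have := hEmem.1; linarith) (by linarith)
    refine ⟨min (ρ - Rfun d E₁) (Rfun d E₂ - ρ), by simp [hR1, hR2], ?_⟩
    intro x hxs hdist
    have habs : |x - ρ| < min (ρ - Rfun d E₁) (Rfun d E₂ - ρ) := by
      rwa [Real.dist_eq] at hdist
    have hx1 : Rfun d E₁ < x := by
      have h1 := (abs_lt.1 habs).1
      have h2 := min_le_left (ρ - Rfun d E₁) (Rfun d E₂ - ρ)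
      linarith
    have hx2 : x < Rfun d E₂ := by
      have h1 := (abs_lt.1 habs).2
      have h2 := min_le_right (ρ - Rfun d E₁) (Rfun d E₂ - ρ)
      linarith
    have hxIoo : x ∈ Set.Ioo (0:ℝ) 1 := hxs.1
    have hxR := (hεF x hxIoo).2
    have hlow : E₁ < εF x := by
      by_contra hc
      push_neg at hc
      have h' := Aux.Rfun_mono d hc
      rw [hxR] at h'
      linarith
    have hhigh : εF x < E₂ := by
      by_contra hc
      push_neg at hc
      have h' := Aux.Rfun_mono d hc
      rw [hxR] at h'
      linarith
    rw [Real.dist_eq, abs_lt]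
    constructor
    · linarith
    · linarith
  -- slope bound
  have hbound : ∀ z ∈ s, |slope e ρ z - εF ρ| ≤ |εF z - εF ρ| := by
    intro z hz
    have hzI : z ∈ Set.Ioo (0:ℝ) 1 := hz.1
    have hzne : z ≠ ρ := hz.2
    have g1 := subgrad ρ hρ z (Set.Ioo_subset_Icc_self hzI)
    have g2 := subgrad z hzI ρ (Set.Ioo_subset_Icc_self hρ)
    rw [slope_def_field]
    rcases lt_or_gt_of_ne hzne with hlt | hgt
    · -- z < ρ
      have hzρ : 0 < ρ - z := by linarith
      have h1 : (e z - e ρ) / (z - ρ) ≤ εF ρ := by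
        rw [div_le_iff_of_neg (by linarith : z - ρ < 0)]
        nlinarith [g1]
      have h2 : εF z ≤ (e z - e ρ) / (z - ρ) := by
        rw [le_div_iff_of_neg (by linarith : z - ρ < 0)]
        nlinarith [g2]
      rw [abs_of_nonpos (by linarith)]
      calc -((e z - e ρ) / (z - ρ) - εF ρ) ≤ εF ρ - εF z := by linarith
        _ ≤ |εF z - εF ρ| := by rw [abs_sub_comm]; exact le_abs_self _
    · -- ρ < z
      have hzρ : 0 < z - ρ := by linarith
      have h1 : εF ρ ≤ (e z - e ρ) / (z - ρ) := by
        rw [le_div_iff₀ hzρ]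
        linarith
      have h2 : (e z - e ρ) / (z - ρ) ≤ εF z := by
        rw [div_le_iff₀ hzρ]
        nlinarith [g2]
      rw [abs_of_nonneg (by linarith)]
      calc (e z - e ρ) / (z - ρ) - εF ρ ≤ εF z - εF ρ := by linarith
        _ ≤ |εF z - εF ρ| := le_abs_self _
  rw [hasDerivAt_iff_tendsto_slope, hfilter]
  rw [tendsto_iff_dist_tendsto_zero]
  have habs0 : Filter.Tendsto (fun z => |εF z - εF ρ|) (nhdsWithin ρ s) (nhds 0) := by
    have := (tend_εF.sub (tendsto_const_nhds : Filter.Tendsto (fun _ : ℝ => εF ρ) _ _)).abs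
    simpa using this
  refine squeeze_zero' ?_ ?_ habs0
  · exact Filter.Eventually.of_forall fun z => dist_nonneg
  · filter_upwards [self_mem_nhdsWithin] with z hzs
    rw [Real.dist_eq]
    exact hbound z hzs
end

section
/- For every integer d ≥ 1, the function ξ(ρ) = ρ·ε_F(ρ) − e(ρ) satisfies 0 ≤ ξ(ρ) ≤ 2d for every ρ ∈ (0,1), and ξ is strictly increasing on (0,1). -/
open MeasureTheory

namespace Stmt4Aux

/-- The Brillouin-zone box `[-π,π]^d`. -/
def Box (d : ℕ) : Set (Fin d → ℝ) := {k | ∀ i, k i ∈ Set.Icc (-Real.pi) Real.pi}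

/-- The sublevel set appearing in `Rfun` and `en`. -/
def Slev (d : ℕ) (E : ℝ) : Set (Fin d → ℝ) :=
  {k | (∀ i, k i ∈ Set.Icc (-Real.pi) Real.pi) ∧ eps d k < E}

lemma box_pi (d : ℕ) :
    Box d = Set.pi Set.univ (fun _ : Fin d => Set.Icc (-Real.pi) Real.pi) := by
  ext k; simp only [Box, Set.mem_setOf_eq, Set.mem_univ_pi]

lemma measurableSet_box (d : ℕ) : MeasurableSet (Box d) := by
  rw [box_pi]; exact MeasurableSet.univ_pi (fun _ => measurableSet_Icc)

lemma isCompact_box (d : ℕ) : IsCompact (Box d) := by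
  rw [box_pi]; exact isCompact_univ_pi (fun _ => isCompact_Icc)

lemma volume_box (d : ℕ) : volume (Box d) = ENNReal.ofReal (2 * Real.pi) ^ d := by
  rw [box_pi, volume_pi_pi]
  simp [Real.volume_Icc, two_mul]

lemma volume_box_toReal (d : ℕ) : (volume (Box d)).toReal = (2 * Real.pi) ^ d := by
  rw [volume_box, ENNReal.toReal_pow, ENNReal.toReal_ofReal (by positivity)]

lemma volume_box_lt_top (d : ℕ) : volume (Box d) < ⊤ := by
  rw [volume_box]; exact ENNReal.pow_lt_top ENNReal.ofReal_lt_top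

lemma continuous_eps (d : ℕ) : Continuous (eps d) := by unfold eps; fun_prop

lemma abs_eps_le (d : ℕ) (k : Fin d → ℝ) : |eps d k| ≤ 2 * d := by
  have h1 : |∑ i, Real.cos (k i)| ≤ ∑ i : Fin d, (1 : ℝ) := by
    refine (Finset.abs_sum_le_sum_abs _ _).trans ?_
    exact Finset.sum_le_sum (fun i _ => Real.abs_cos_le_one _)
  have : |eps d k| = 2 * |∑ i, Real.cos (k i)| := by
    rw [eps, abs_mul]; norm_num
  have h2 : (∑ _i : Fin d, (1:ℝ)) = d := by simp
  rw [this]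
  linarith

lemma measurableSet_slev (d : ℕ) (E : ℝ) : MeasurableSet (Slev d E) := by
  have : Slev d E = Box d ∩ eps d ⁻¹' Set.Iio E := rfl
  rw [this]
  exact (measurableSet_box d).inter
    ((continuous_eps d).measurable measurableSet_Iio)

lemma slev_subset_box (d : ℕ) (E : ℝ) : Slev d E ⊆ Box d := fun _ hk => hk.1

lemma volume_slev_lt_top (d : ℕ) (E : ℝ) : volume (Slev d E) < ⊤ :=
  lt_of_le_of_lt (measure_mono (slev_subset_box d E)) (volume_box_lt_top d)

lemma integrableOn_box (d : ℕ) : IntegrableOn (eps d) (Box d) :=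
  (continuous_eps d).continuousOn.integrableOn_compact (isCompact_box d)

lemma integrableOn_slev (d : ℕ) (E : ℝ) : IntegrableOn (eps d) (Slev d E) :=
  (integrableOn_box d).mono_set (slev_subset_box d E)

lemma integral_box_cos (d : ℕ) (i : Fin d) :
    ∫ k in Box d, Real.cos (k i) = 0 := by
  set I := Set.Icc (-Real.pi) Real.pi with hI
  have hIcos : ∫ x in I, Real.cos x = 0 := by
    rw [hI, MeasureTheory.integral_Icc_eq_integral_Ioc,
      ← intervalIntegral.integral_of_le (by linarith [Real.pi_pos] : -Real.pi ≤ Real.pi)]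
    simp [integral_cos]
  set g : Fin d → ℝ → ℝ := fun j =>
    if j = i then I.indicator Real.cos else I.indicator (fun _ => (1:ℝ)) with hg
  have key : ∀ k : Fin d → ℝ, (Box d).indicator (fun k => Real.cos (k i)) k
      = ∏ j, g j (k j) := by
    intro k
    by_cases hk : k ∈ Box d
    · rw [Set.indicator_of_mem hk]
      rw [Finset.prod_eq_single_of_mem i (Finset.mem_univ i)]
      · simp [hg, Set.indicator_of_mem (show k i ∈ I from hk i)]
      · intro j _ hj
        simp [hg, hj, Set.indicator_of_mem (show k j ∈ I from hk j)]
    · rw [Set.indicator_of_notMem hk]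
      have : ∃ j, k j ∉ I := by
        by_contra h
        push_neg at h
        exact hk h
      obtain ⟨j, hj⟩ := this
      symm
      refine Finset.prod_eq_zero (Finset.mem_univ j) ?_
      by_cases hji : j = i
      · subst hji; simp [hg, Set.indicator_of_notMem hj]
      · simp [hg, hji, Set.indicator_of_notMem hj]
  have : ∫ k in Box d, Real.cos (k i) = ∫ k : Fin d → ℝ, ∏ j, g j (k j) := by
    rw [← MeasureTheory.integral_indicator (measurableSet_box d)]
    exact integral_congr_ae (Filter.Eventually.of_forall key)
  rw [this, MeasureTheory.integral_fintype_prod_volume_eq_prod]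
  refine Finset.prod_eq_zero (Finset.mem_univ i) ?_
  simp only [hg, if_pos rfl]
  rw [MeasureTheory.integral_indicator measurableSet_Icc]
  exact hIcos

lemma integral_box_eps (d : ℕ) : ∫ k in Box d, eps d k = 0 := by
  have hint : ∀ i : Fin d, IntegrableOn (fun k : Fin d → ℝ => Real.cos (k i)) (Box d) := by
    intro i
    exact ((Real.continuous_cos.comp (continuous_apply i)).continuousOn).integrableOn_compact
      (isCompact_box d)
  have : ∫ k in Box d, eps d k
      = -2 * ∑ i, ∫ k in Box d, Real.cos (k i) := by
    rw [show (fun k => eps d k) = fun k => -2 * ∑ i, Real.cos (k i) from rfl]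
    rw [MeasureTheory.integral_const_mul]
    congr 1
    exact integral_finset_sum _ (fun i _ => hint i)
  rw [this]
  simp [integral_box_cos]

/-- Volume identity: if `Rfun d E = ρ` then the sublevel set has volume `ρ (2π)^d`. -/
lemma vol_slev (d : ℕ) {E ρ : ℝ} (h : Rfun d E = ρ) :
    (volume (Slev d E)).toReal = ρ * (2 * Real.pi) ^ d := by
  have hpos : (0:ℝ) < (2 * Real.pi) ^ d := by positivity
  have : (volume (Slev d E)).toReal / (2 * Real.pi) ^ d = ρ := h
  field_simp at this
  linarith

lemma vol_diff (d : ℕ) {E ρ : ℝ} (h : Rfun d E = ρ) :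
    (volume (Box d \ Slev d E)).toReal = (1 - ρ) * (2 * Real.pi) ^ d := by
  have h1 : volume (Box d \ Slev d E) = volume (Box d) - volume (Slev d E) :=
    measure_diff (slev_subset_box d E) (measurableSet_slev d E).nullMeasurableSet
      (volume_slev_lt_top d E).ne
  rw [h1, ENNReal.toReal_sub_of_le (measure_mono (slev_subset_box d E))
    (volume_box_lt_top d).ne, volume_box_toReal, vol_slev d h]
  ring

end Stmt4Aux

open Stmt4Aux in
/-- With `εF` the Fermi energy and `e` the free-electron energy density, the
function `ξ(ρ) = ρ·εF(ρ) - e(ρ)` satisfies `0 ≤ ξ(ρ) ≤ 2d` on `(0,1)` and is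
strictly increasing on `(0,1)`. -/
theorem stmt4 (d : ℕ) (hd : 1 ≤ d) (εF e : ℝ → ℝ)
    (hεF : ∀ ρ ∈ Set.Ioo (0:ℝ) 1,
      εF ρ ∈ Set.Ioo (-(2*(d:ℝ))) (2*(d:ℝ)) ∧ Rfun d (εF ρ) = ρ)
    (he : ∀ ρ ∈ Set.Ioo (0:ℝ) 1, e ρ = en d (εF ρ)) :
    (∀ ρ ∈ Set.Ioo (0:ℝ) 1, 0 ≤ ρ * εF ρ - e ρ ∧ ρ * εF ρ - e ρ ≤ 2*(d:ℝ)) ∧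
    StrictMonoOn (fun ρ => ρ * εF ρ - e ρ) (Set.Ioo (0:ℝ) 1) := by
  have hpos : (0:ℝ) < (2 * Real.pi) ^ d := by positivity
  -- express e via the set integral
  have he' : ∀ ρ ∈ Set.Ioo (0:ℝ) 1,
      e ρ = (∫ k in Slev d (εF ρ), eps d k) / (2 * Real.pi) ^ d := fun ρ hρ => he ρ hρ
  constructor
  · rintro ρ ⟨hρ0, hρ1⟩
    obtain ⟨⟨hE1, hE2⟩, hR⟩ := hεF ρ ⟨hρ0, hρ1⟩
    set E := εF ρ with hEdef
    have hvol : (volume (Slev d E)).toReal = ρ * (2 * Real.pi) ^ d := vol_slev d hR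
    have heρ : e ρ = (∫ k in Slev d E, eps d k) / (2 * Real.pi) ^ d := he' ρ ⟨hρ0, hρ1⟩
    constructor
    · -- lower bound
      have hle : ∫ k in Slev d E, eps d k ≤ ∫ _k in Slev d E, E := by
        refine setIntegral_mono_on (integrableOn_slev d E)
          (integrableOn_const (volume_slev_lt_top d E).ne)
          (measurableSet_slev d E) ?_
        exact fun x hx => le_of_lt hx.2
      rw [setIntegral_const, smul_eq_mul, measureReal_def, hvol] at hle
      rw [heρ, sub_nonneg, div_le_iff₀ hpos]
      calc ∫ k in Slev d E, eps d k ≤ ρ * (2 * Real.pi) ^ d * E := hle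
        _ = ρ * E * (2 * Real.pi) ^ d := by ring
    · -- upper bound
      have hsplit : ∫ k in Box d \ Slev d E, eps d k = - ∫ k in Slev d E, eps d k := by
        rw [integral_diff (measurableSet_slev d E) (integrableOn_box d)
          (slev_subset_box d E), integral_box_eps]
        ring
      have hvd : (volume (Box d \ Slev d E)).toReal = (1 - ρ) * (2 * Real.pi) ^ d :=
        vol_diff d hR
      have habs : ‖∫ k in Box d \ Slev d E, eps d k‖
          ≤ (2 * d) * (volume (Box d \ Slev d E)).toReal := by
        refine norm_setIntegral_le_of_norm_le_const
          (lt_of_le_of_lt (measure_mono Set.diff_subset) (volume_box_lt_top d)) ?_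
        intro x _
        simpa [Real.norm_eq_abs] using abs_eps_le d x
      rw [hsplit, hvd, Real.norm_eq_abs] at habs
      have hneg : - ∫ k in Slev d E, eps d k ≤ 2 * d * ((1 - ρ) * (2 * Real.pi) ^ d) :=
        le_trans (le_abs_self _) habs
      rw [heρ]
      have h1 : ρ * E ≤ ρ * (2 * d) := by nlinarith
      have h2 : - ((∫ k in Slev d E, eps d k) / (2 * Real.pi) ^ d) ≤ 2 * d * (1 - ρ) := by
        rw [← neg_div, div_le_iff₀ hpos]
        calc - ∫ k in Slev d E, eps d k ≤ 2 * d * ((1 - ρ) * (2 * Real.pi) ^ d) := hneg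
          _ = 2 * d * (1 - ρ) * (2 * Real.pi) ^ d := by ring
      nlinarith
  · rintro a ⟨ha0, ha1⟩ b ⟨hb0, hb1⟩ hab
    obtain ⟨⟨hEa1, hEa2⟩, hRa⟩ := hεF a ⟨ha0, ha1⟩
    obtain ⟨⟨hEb1, hEb2⟩, hRb⟩ := hεF b ⟨hb0, hb1⟩
    have hvola : (volume (Slev d (εF a))).toReal = a * (2 * Real.pi) ^ d := vol_slev d hRa
    have hvolb : (volume (Slev d (εF b))).toReal = b * (2 * Real.pi) ^ d := vol_slev d hRb
    -- εF a < εF b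
    have hEab : εF a < εF b := by
      by_contra h
      push_neg at h
      have hsub : Slev d (εF b) ⊆ Slev d (εF a) :=
        fun k hk => ⟨hk.1, lt_of_lt_of_le hk.2 h⟩
      have : (volume (Slev d (εF b))).toReal ≤ (volume (Slev d (εF a))).toReal :=
        ENNReal.toReal_mono (volume_slev_lt_top d (εF a)).ne (measure_mono hsub)
      rw [hvola, hvolb] at this
      nlinarith
    have hsub : Slev d (εF a) ⊆ Slev d (εF b) :=
      fun k hk => ⟨hk.1, lt_trans hk.2 hEab⟩
    -- the integral over the difference
    have hdiff : ∫ k in Slev d (εF b) \ Slev d (εF a), eps d k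
        = (∫ k in Slev d (εF b), eps d k) - ∫ k in Slev d (εF a), eps d k :=
      integral_diff (measurableSet_slev d (εF a)) (integrableOn_slev d (εF b)) hsub
    have hvd : (volume (Slev d (εF b) \ Slev d (εF a))).toReal
        = (b - a) * (2 * Real.pi) ^ d := by
      rw [measure_diff hsub (measurableSet_slev d (εF a)).nullMeasurableSet
          (volume_slev_lt_top d (εF a)).ne,
        ENNReal.toReal_sub_of_le (measure_mono hsub) (volume_slev_lt_top d (εF b)).ne,
        hvola, hvolb]
      ring
    have hbound : ∫ k in Slev d (εF b) \ Slev d (εF a), eps d k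
        ≤ εF b * ((b - a) * (2 * Real.pi) ^ d) := by
      have : ∫ k in Slev d (εF b) \ Slev d (εF a), eps d k
          ≤ ∫ _k in Slev d (εF b) \ Slev d (εF a), εF b := by
        refine setIntegral_mono_on ((integrableOn_slev d (εF b)).mono_set Set.diff_subset)
          (integrableOn_const (lt_of_le_of_lt
            (measure_mono Set.diff_subset) (volume_slev_lt_top d (εF b))).ne)
          ((measurableSet_slev d (εF b)).diff (measurableSet_slev d (εF a))) ?_
        exact fun x hx => le_of_lt hx.1.2
      rw [setIntegral_const, smul_eq_mul, measureReal_def, hvd] at this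
      linarith
    have hea : e a = (∫ k in Slev d (εF a), eps d k) / (2 * Real.pi) ^ d :=
      he' a ⟨ha0, ha1⟩
    have heb : e b = (∫ k in Slev d (εF b), eps d k) / (2 * Real.pi) ^ d :=
      he' b ⟨hb0, hb1⟩
    simp only
    rw [hea, heb]
    rw [hdiff] at hbound
    have hkey : e b - e a ≤ εF b * (b - a) := by
      rw [hea, heb, div_sub_div_same, div_le_iff₀ hpos]
      calc (∫ k in Slev d (εF b), eps d k) - ∫ k in Slev d (εF a), eps d k
          ≤ εF b * ((b - a) * (2 * Real.pi) ^ d) := hbound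
        _ = εF b * (b - a) * (2 * Real.pi) ^ d := by ring
    rw [hea, heb] at hkey
    nlinarith [mul_pos ha0 (sub_pos.2 hEab)]
end

section
/- For every integer d ≥ 1, the function ρ ↦ ξ(ρ) − ε_F(ρ) is strictly decreasing on (0,1) and strictly positive there; that is, for every ρ ∈ (0,1), (ρ − 1)·ε_F(ρ) − e(ρ) > 0. -/
open MeasureTheory

namespace Stmt5Aux

open Set Real

variable (d : ℕ)

def B (d : ℕ) : Set (Fin d → ℝ) := Set.pi Set.univ fun _ => Set.Icc (-Real.pi) Real.pi

lemma B_eq : B d = {k : Fin d → ℝ | ∀ i, k i ∈ Set.Icc (-Real.pi) Real.pi} := by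
  ext k
  simp only [B, Set.mem_pi, Set.mem_univ, true_implies, Set.mem_setOf_eq]

lemma measB : MeasurableSet (B d) := MeasurableSet.univ_pi fun _ => measurableSet_Icc

lemma compactB : IsCompact (B d) := isCompact_univ_pi fun _ => isCompact_Icc

lemma contEps : Continuous (eps d) := by
  unfold eps
  exact continuous_const.mul (continuous_finset_sum _ fun i _ =>
    Real.continuous_cos.comp (continuous_apply i))

lemma volumeB : volume (B d) = ENNReal.ofReal ((2*Real.pi)^d) := by
  rw [B, volume_pi_pi]
  have : Real.pi - -Real.pi = 2*Real.pi := by ring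
  simp [Real.volume_Icc, this]
  rw [ENNReal.ofReal_pow (by positivity), ENNReal.ofReal_mul (by norm_num), ENNReal.ofReal_ofNat]

lemma volumeB_ne_top : volume (B d) ≠ ⊤ := by simp [volumeB]

lemma intEps : IntegrableOn (eps d) (B d) := by
  exact (contEps d).continuousOn.integrableOn_compact (compactB d)

lemma intMax (E : ℝ) : IntegrableOn (fun k => max (eps d k - E) 0) (B d) := by
  exact (((contEps d).sub continuous_const).max continuous_const).continuousOn.integrableOn_compact
    (compactB d)

lemma integral_cos_coord (i : Fin d) : ∫ k in B d, Real.cos (k i) = 0 := by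
  classical
  set f : Fin d → ℝ → ℝ := fun j x =>
    if j = i then (Set.Icc (-Real.pi) Real.pi).indicator Real.cos x
    else (Set.Icc (-Real.pi) Real.pi).indicator 1 x with hf
  have hpt : ∀ k : Fin d → ℝ, (B d).indicator (fun k => Real.cos (k i)) k = ∏ j, f j (k j) := by
    intro k
    by_cases hk : k ∈ B d
    · rw [Set.indicator_of_mem hk]
      have hk' : ∀ j, k j ∈ Set.Icc (-Real.pi) Real.pi := by
        rw [B_eq] at hk; exact hk
      rw [Finset.prod_eq_single i]
      · simp [f, Set.indicator_of_mem (hk' i)]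
      · intro j _ hj
        simp [f, hj, Set.indicator_of_mem (hk' j)]
      · simp
    · rw [Set.indicator_of_notMem hk]
      have : ∃ j, k j ∉ Set.Icc (-Real.pi) Real.pi := by
        by_contra h
        push_neg at h
        exact hk (by rw [B_eq]; exact h)
      obtain ⟨j, hj⟩ := this
      refine (Finset.prod_eq_zero (Finset.mem_univ j) ?_).symm
      by_cases hji : j = i
      · subst hji; simp only [f, if_pos rfl, Set.indicator_of_notMem hj]
      · simp only [f, if_neg hji, Set.indicator_of_notMem hj]
  have h1 : ∫ k in B d, Real.cos (k i) = ∫ k : Fin d → ℝ, ∏ j, f j (k j) := by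
    rw [← integral_indicator (measB d)]
    exact integral_congr_ae (Filter.Eventually.of_forall hpt)
  have h2 : ∫ x : ℝ, f i x = 0 := by
    simp only [f, if_pos rfl]
    rw [integral_indicator measurableSet_Icc, MeasureTheory.integral_Icc_eq_integral_Ioc,
      ← intervalIntegral.integral_of_le (by linarith [Real.pi_pos])]
    simp
  rw [h1, MeasureTheory.integral_fintype_prod_volume_eq_prod (f := f)]
  exact Finset.prod_eq_zero (Finset.mem_univ i) h2


lemma int_cos_on_B (i : Fin d) : IntegrableOn (fun k => Real.cos (k i)) (B d) :=
  (Real.continuous_cos.comp (continuous_apply i)).continuousOn.integrableOn_compact (compactB d)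

lemma integral_eps_zero : ∫ k in B d, eps d k = 0 := by
  have : ∀ k, eps d k = -2 * ∑ i, Real.cos (k i) := fun _ => rfl
  simp_rw [this]
  rw [integral_const_mul, integral_finset_sum _ (fun i _ => int_cos_on_B d i)]
  simp [integral_cos_coord]

def A (d : ℕ) (E : ℝ) : Set (Fin d → ℝ) :=
  {k | (∀ i, k i ∈ Set.Icc (-Real.pi) Real.pi) ∧ eps d k < E}

def C (d : ℕ) (E : ℝ) : Set (Fin d → ℝ) := B d ∩ {k | E ≤ eps d k}

variable (E : ℝ)

lemma A_eq : A d E = B d ∩ {k | eps d k < E} := by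
  rw [B_eq]; rfl

lemma measA : MeasurableSet (A d E) := by
  rw [A_eq]
  exact (measB d).inter (measurableSet_lt (contEps d).measurable measurable_const)

lemma measC : MeasurableSet (C d E) :=
  (measB d).inter (measurableSet_le measurable_const (contEps d).measurable)

lemma A_subset : A d E ⊆ B d := by rw [A_eq]; exact Set.inter_subset_left
lemma C_subset : C d E ⊆ B d := Set.inter_subset_left

lemma A_union_C : A d E ∪ C d E = B d := by
  rw [A_eq, C]
  ext k
  constructor
  · rintro (⟨h, _⟩ | ⟨h, _⟩) <;> exact h
  · intro hk
    rcases lt_or_ge (eps d k) E with h | h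
    · exact Or.inl ⟨hk, h⟩
    · exact Or.inr ⟨hk, h⟩

lemma A_disj_C : Disjoint (A d E) (C d E) := by
  rw [A_eq, C, Set.disjoint_left]
  intro k hA hC
  have h1 : eps d k < E := hA.2
  have h2 : E ≤ eps d k := hC.2
  linarith

lemma A_ne_top : volume (A d E) ≠ ⊤ :=
  ((measure_mono (A_subset d E)).trans_lt (volumeB_ne_top d).lt_top).ne
lemma C_ne_top : volume (C d E) ≠ ⊤ :=
  ((measure_mono (C_subset d E)).trans_lt (volumeB_ne_top d).lt_top).ne

lemma meas_sum : (volume (A d E)).toReal + (volume (C d E)).toReal = (2*Real.pi)^d := by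
  rw [← ENNReal.toReal_add (A_ne_top d E) (C_ne_top d E),
    ← measure_union (A_disj_C d E) (measC d E), A_union_C, volumeB,
    ENNReal.toReal_ofReal (by positivity)]

lemma integral_sum : (∫ k in A d E, eps d k) + (∫ k in C d E, eps d k) = 0 := by
  rw [← setIntegral_union (A_disj_C d E) (measC d E)
    ((intEps d).mono_set (A_subset d E)) ((intEps d).mono_set (C_subset d E)),
    A_union_C, integral_eps_zero]

noncomputable def g (d : ℕ) (E : ℝ) : ℝ := ∫ k in B d, max (eps d k - E) 0

lemma g_nonneg : 0 ≤ g d E :=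
  setIntegral_nonneg (measB d) fun k _ => le_max_right _ _

lemma g_eq : g d E = ∫ k in C d E, (eps d k - E) := by
  have h0 : ∫ k in A d E, max (eps d k - E) 0 = 0 := by
    rw [setIntegral_congr_fun (measA d E) (g := fun _ => (0:ℝ))
      (fun k hk => max_eq_right (by
        rw [A_eq] at hk
        have := hk.2
        simp only [Set.mem_setOf_eq] at this
        linarith))]
    simp
  have hC : ∫ k in C d E, max (eps d k - E) 0 = ∫ k in C d E, (eps d k - E) :=
    setIntegral_congr_fun (measC d E)
      (fun k hk => max_eq_left (by simp only [sub_nonneg]; exact hk.2))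
  rw [g, ← A_union_C d E, setIntegral_union (A_disj_C d E) (measC d E)
    ((intMax d E).mono_set (A_subset d E)) ((intMax d E).mono_set (C_subset d E)),
    h0, hC, zero_add]


lemma key : (Rfun d E - 1) * E - en d E = g d E / (2*Real.pi)^d := by
  have h2pi : (0:ℝ) < (2*Real.pi)^d := by positivity
  have hμA : (volume (A d E)).toReal = Rfun d E * (2*Real.pi)^d := by
    rw [Rfun]; field_simp; rfl
  have hμC : (volume (C d E)).toReal = (2*Real.pi)^d - Rfun d E * (2*Real.pi)^d := by
    have := meas_sum d E; linarith
  have hintA : (∫ k in A d E, eps d k) = en d E * (2*Real.pi)^d := by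
    rw [en]; field_simp; rfl
  have hintC : (∫ k in C d E, eps d k) = -(en d E * (2*Real.pi)^d) := by
    have := integral_sum d E; linarith
  have hconst : IntegrableOn (fun _ : Fin d → ℝ => E) (C d E) := by
    exact integrableOn_const (C_ne_top d E)
  have hsub : g d E = (∫ k in C d E, eps d k) - E * (volume (C d E)).toReal := by
    rw [g_eq, integral_sub ((intEps d).mono_set (C_subset d E)) hconst,
      setIntegral_const, smul_eq_mul, mul_comm, measureReal_def]
  rw [hsub, hintC, hμC]
  field_simp
  ring

lemma Rfun_mono {E1 E2 : ℝ} (h : E1 ≤ E2) : Rfun d E1 ≤ Rfun d E2 := by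
  have h2pi : (0:ℝ) < (2*Real.pi)^d := by positivity
  have hsub : A d E1 ⊆ A d E2 := fun k hk => ⟨hk.1, lt_of_lt_of_le hk.2 h⟩
  have : (volume (A d E1)).toReal ≤ (volume (A d E2)).toReal :=
    ENNReal.toReal_mono (A_ne_top d E2) (measure_mono hsub)
  exact (div_le_div_iff_of_pos_right h2pi).2 this

lemma posmeas (hd : 1 ≤ d) {E : ℝ} (hE : E < 2*(d:ℝ)) : 0 < volume (C d E) := by
  have hd' : (1:ℝ) ≤ (d:ℝ) := by exact_mod_cast hd
  have hd0 : (0:ℝ) < 2*(d:ℝ) := by linarith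
  set t : ℝ := (2*(d:ℝ) - E) / (2*(d:ℝ)) with ht_def
  have ht : 0 < t := div_pos (by linarith) hd0
  set δ : ℝ := min 1 (Real.sqrt t) with hδ_def
  have hδ : 0 < δ := lt_min one_pos (Real.sqrt_pos.2 ht)
  have hδ1 : δ ≤ 1 := min_le_left _ _
  have hδsq : δ^2 ≤ t := by
    have h1 : δ ≤ Real.sqrt t := min_le_right _ _
    calc δ^2 ≤ Real.sqrt t ^ 2 := by nlinarith [hδ.le]
    _ = t := Real.sq_sqrt ht.le
  have htval : t * (2*(d:ℝ)) = 2*(d:ℝ) - E := div_mul_cancel₀ _ hd0.ne'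
  have hπ : (3:ℝ) < Real.pi := Real.pi_gt_three
  set P : Set (Fin d → ℝ) := Set.pi Set.univ fun _ => Set.Icc (Real.pi - δ) Real.pi with hP
  have hPC : P ⊆ C d E := by
    intro k hk
    have hk' : ∀ i, k i ∈ Set.Icc (Real.pi - δ) Real.pi := fun i => hk i (Set.mem_univ i)
    have hcos : ∀ i, Real.cos (k i) ≤ -(Real.cos δ) := by
      intro i
      have h1 := (hk' i).1
      have h2 := (hk' i).2
      have := Real.cos_le_cos_of_nonneg_of_le_pi (by linarith) h2 h1
      rwa [Real.cos_pi_sub] at this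
    have hsum : ∑ i, Real.cos (k i) ≤ (d:ℝ) * (-(Real.cos δ)) := by
      calc ∑ i, Real.cos (k i) ≤ ∑ _i : Fin d, (-(Real.cos δ)) :=
        Finset.sum_le_sum fun i _ => hcos i
      _ = (d:ℝ) * (-(Real.cos δ)) := by simp [mul_comm]
    have hcosδ : 1 - δ^2/2 ≤ Real.cos δ := Real.one_sub_sq_div_two_le_cos
    refine ⟨?_, ?_⟩
    · rw [B_eq]
      intro i
      exact ⟨by linarith [(hk' i).1], (hk' i).2⟩
    · show E ≤ eps d k
      have : eps d k = -2 * ∑ i, Real.cos (k i) := rfl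
      rw [this]
      nlinarith
  have hvolP : 0 < volume P := by
    rw [hP, volume_pi_pi]
    have : Real.pi - (Real.pi - δ) = δ := by ring
    simp only [Real.volume_Icc, this, Finset.prod_const, Finset.card_univ, Fintype.card_fin]
    exact ENNReal.pow_pos (by simp [ENNReal.ofReal_pos, hδ]) d
  exact hvolP.trans_le (measure_mono hPC)

lemma g_strict (hd : 1 ≤ d) {E1 E2 : ℝ} (h12 : E1 < E2) (h2 : E2 < 2*(d:ℝ)) :
    g d E2 < g d E1 := by
  have hμS : 0 < (volume (C d E2)).toReal :=
    ENNReal.toReal_pos (posmeas d hd h2).ne' (C_ne_top d E2)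
  have hdiffint : IntegrableOn
      (fun k => max (eps d k - E1) 0 - max (eps d k - E2) 0) (B d) :=
    (intMax d E1).sub (intMax d E2)
  have hsub : ∫ k in B d, (max (eps d k - E1) 0 - max (eps d k - E2) 0)
      = g d E1 - g d E2 := integral_sub (intMax d E1) (intMax d E2)
  have hmono : (∫ k in C d E2, (max (eps d k - E1) 0 - max (eps d k - E2) 0))
      ≤ ∫ k in B d, (max (eps d k - E1) 0 - max (eps d k - E2) 0) := by
    refine setIntegral_mono_set hdiffint ?_ (HasSubset.Subset.eventuallyLE (C_subset d E2))
    refine Filter.Eventually.of_forall fun k => ?_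
    exact sub_nonneg.2 (max_le_max (by linarith) le_rfl)
  have hcongr : (∫ k in C d E2, (max (eps d k - E1) 0 - max (eps d k - E2) 0))
      = (volume (C d E2)).toReal * (E2 - E1) := by
    rw [setIntegral_congr_fun (measC d E2) (g := fun _ => E2 - E1) (fun k hk => by
      have h2' : E2 ≤ eps d k := hk.2
      rw [max_eq_left (by linarith), max_eq_left (by linarith)]
      ring), setIntegral_const, smul_eq_mul, measureReal_def]
  nlinarith

end Stmt5Aux

/-- With `εF` the Fermi energy, `e` the free-electron energy density and
`ξ(ρ) = ρ·εF(ρ) - e(ρ)`, the function `ρ ↦ ξ(ρ) - εF(ρ)` is strictly decreasing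
on `(0,1)` and strictly positive there; i.e. `(ρ-1)·εF(ρ) - e(ρ) > 0` on `(0,1)`. -/
theorem stmt5 (d : ℕ) (hd : 1 ≤ d) (εF e : ℝ → ℝ)
    (hεF : ∀ ρ ∈ Set.Ioo (0:ℝ) 1,
      εF ρ ∈ Set.Ioo (-(2*(d:ℝ))) (2*(d:ℝ)) ∧ Rfun d (εF ρ) = ρ)
    (he : ∀ ρ ∈ Set.Ioo (0:ℝ) 1, e ρ = en d (εF ρ)) :
    StrictAntiOn (fun ρ => (ρ * εF ρ - e ρ) - εF ρ) (Set.Ioo (0:ℝ) 1) ∧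
    (∀ ρ ∈ Set.Ioo (0:ℝ) 1, 0 < (ρ - 1) * εF ρ - e ρ) := by
  have h2pi : (0:ℝ) < (2*Real.pi)^d := by positivity
  have hval : ∀ ρ ∈ Set.Ioo (0:ℝ) 1,
      (ρ - 1) * εF ρ - e ρ = Stmt5Aux.g d (εF ρ) / (2*Real.pi)^d := by
    intro ρ hρ
    have hR := (hεF ρ hρ).2
    have hk := Stmt5Aux.key d (εF ρ)
    rw [hR] at hk
    rw [he ρ hρ]
    linarith
  have hElt : ∀ ρ ∈ Set.Ioo (0:ℝ) 1, εF ρ < 2*(d:ℝ) := fun ρ hρ => (hεF ρ hρ).1.2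
  have hpos : ∀ ρ ∈ Set.Ioo (0:ℝ) 1, 0 < (ρ - 1) * εF ρ - e ρ := by
    intro ρ hρ
    rw [hval ρ hρ]
    have hE2 : εF ρ < (εF ρ + 2*(d:ℝ))/2 := by linarith [hElt ρ hρ]
    have hE3 : (εF ρ + 2*(d:ℝ))/2 < 2*(d:ℝ) := by linarith [hElt ρ hρ]
    have hg := Stmt5Aux.g_strict d hd hE2 hE3
    have h0 := Stmt5Aux.g_nonneg d ((εF ρ + 2*(d:ℝ))/2)
    exact div_pos (by linarith) h2pi
  refine ⟨?_, hpos⟩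
  intro ρ1 h1 ρ2 h2 h12
  have hE12 : εF ρ1 < εF ρ2 := by
    by_contra hle
    push_neg at hle
    have := Stmt5Aux.Rfun_mono d hle
    rw [(hεF ρ1 h1).2, (hεF ρ2 h2).2] at this
    linarith
  have hg := Stmt5Aux.g_strict d hd hE12 (hElt ρ2 h2)
  have hdiv : Stmt5Aux.g d (εF ρ2) / (2*Real.pi)^d
      < Stmt5Aux.g d (εF ρ1) / (2*Real.pi)^d := by gcongr
  have e1 := hval ρ1 h1
  have e2 := hval ρ2 h2
  simp only
  have hr1 : (ρ1 * εF ρ1 - e ρ1) - εF ρ1 = (ρ1 - 1) * εF ρ1 - e ρ1 := by ring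
  have hr2 : (ρ2 * εF ρ2 - e ρ2) - εF ρ2 = (ρ2 - 1) * εF ρ2 - e ρ2 := by ring
  rw [hr1, hr2, e1, e2]
  exact hdiv
end

section
/- Let d ≥ 1, let A ⊆ ℤ^d be a finite nonempty set, and let n ≥ 2 be an integer. Then #{x ∈ ℤ^d : dist₁(x, A) = n} ≤ d · #{x ∈ ℤ^d : dist₁(x, A) = n − 1}. -/
/-- The `ℓ¹` distance `|x - y|₁ = Σᵢ |xᵢ - yᵢ|` on `ℤ^d`. -/
def dist1 {d : ℕ} (x y : Fin d → ℤ) : ℕ := ∑ i, (x i - y i).natAbs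

/-- `dist₁(x, A) = min_{a ∈ A} |x - a|₁`. -/
noncomputable def distA {d : ℕ} (x : Fin d → ℤ) (A : Set (Fin d → ℤ)) : ℕ :=
  sInf {n | ∃ a ∈ A, dist1 x a = n}

namespace Stmt9

variable {d : ℕ} {A : Set (Fin d → ℤ)}

lemma min'_eq_of_eq {α : Type*} [LinearOrder α] {s t : Finset α} (h : t = s)
    {ht : t.Nonempty} (hs : s.Nonempty) : t.min' ht = s.min' hs := by subst h; rfl

lemma dist1_update (x b : Fin d → ℤ) (k : Fin d) (v : ℤ) :
    dist1 (Function.update x k v) b + (x k - b k).natAbs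
      = dist1 x b + (v - b k).natAbs := by
  unfold dist1
  rw [← Finset.sum_erase_add _ _ (Finset.mem_univ k),
      ← Finset.sum_erase_add Finset.univ (fun i => (x i - b i).natAbs) (Finset.mem_univ k)]
  have h : ∀ i ∈ Finset.univ.erase k,
      ((Function.update x k v) i - b i).natAbs = (x i - b i).natAbs := by
    intro i hi
    rw [Function.update_of_ne (Finset.ne_of_mem_erase hi)]
  rw [Finset.sum_congr rfl h, Function.update_self]
  ring

lemma distA_le {x b : Fin d → ℤ} (hb : b ∈ A) : distA x A ≤ dist1 x b :=
  Nat.sInf_le ⟨b, hb, rfl⟩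

lemma exists_near (hne : A.Nonempty) (x : Fin d → ℤ) :
    ∃ a ∈ A, dist1 x a = distA x A := by
  obtain ⟨a, ha⟩ := hne
  exact Nat.sInf_mem (⟨dist1 x a, a, ha, rfl⟩ : {n | ∃ a ∈ A, dist1 x a = n}.Nonempty)

open Classical in
noncomputable def near (A : Set (Fin d → ℤ)) (x : Fin d → ℤ) : Fin d → ℤ :=
  if h : {a | a ∈ A ∧ dist1 x a = distA x A}.Nonempty then
    (IsWellFounded.wf (r := (WellOrderingRel : (Fin d → ℤ) → (Fin d → ℤ) → Prop))).min _ h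
  else fun _ => 0

lemma near_spec (hne : A.Nonempty) (x : Fin d → ℤ) :
    near A x ∈ A ∧ dist1 x (near A x) = distA x A := by
  obtain ⟨a, ha, hda⟩ := exists_near hne x
  have h : {a | a ∈ A ∧ dist1 x a = distA x A}.Nonempty := ⟨a, ha, hda⟩
  unfold near
  rw [dif_pos h]
  exact WellFounded.min_mem _ _ h

lemma near_min (hne : A.Nonempty) (x b : Fin d → ℤ) (hb : b ∈ A)
    (hdb : dist1 x b = distA x A) : ¬ WellOrderingRel b (near A x) := by
  have h : {a | a ∈ A ∧ dist1 x a = distA x A}.Nonempty := ⟨b, hb, hdb⟩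
  unfold near
  rw [dif_pos h]
  exact WellFounded.not_lt_min _ _ (show b ∈ {a | a ∈ A ∧ dist1 x a = distA x A} from ⟨hb, hdb⟩)

noncomputable def Dset (A : Set (Fin d → ℤ)) (x : Fin d → ℤ) : Finset (Fin d) :=
  Finset.univ.filter (fun i => x i ≠ near A x i)

noncomputable def Bset (A : Set (Fin d → ℤ)) (x : Fin d → ℤ) : Finset (Fin d) :=
  Finset.univ.filter (fun i => 2 ≤ (x i - near A x i).natAbs)

lemma mem_Dset {x : Fin d → ℤ} {i : Fin d} : i ∈ Dset A x ↔ x i ≠ near A x i := by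
  simp [Dset]

lemma mem_Bset {x : Fin d → ℤ} {i : Fin d} :
    i ∈ Bset A x ↔ 2 ≤ (x i - near A x i).natAbs := by
  simp [Bset]

lemma erase_min'_nonempty {x : Fin d → ℤ} (h2 : 2 ≤ (Dset A x).card)
    (hD : (Dset A x).Nonempty) :
    ((Dset A x).erase ((Dset A x).min' hD)).Nonempty := by
  rw [← Finset.card_pos, Finset.card_erase_of_mem (Finset.min'_mem _ _)]
  omega

noncomputable def kidx (A : Set (Fin d → ℤ)) (x : Fin d → ℤ)
    (hD : (Dset A x).Nonempty) : Fin d :=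
  if hB : (Bset A x).Nonempty then (Bset A x).min' hB
  else if h2 : 2 ≤ (Dset A x).card then
    if x ((Dset A x).min' hD) - near A x ((Dset A x).min' hD)
        = x (((Dset A x).erase ((Dset A x).min' hD)).min' (erase_min'_nonempty h2 hD))
        - near A x (((Dset A x).erase ((Dset A x).min' hD)).min' (erase_min'_nonempty h2 hD))
    then (Dset A x).min' hD
    else ((Dset A x).erase ((Dset A x).min' hD)).min' (erase_min'_nonempty h2 hD)
  else (Dset A x).min' hD

lemma kidx_big {x : Fin d → ℤ} (hD : (Dset A x).Nonempty) (hB : (Bset A x).Nonempty) :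
    kidx A x hD ∈ Bset A x := by
  unfold kidx
  rw [dif_pos hB]
  exact Finset.min'_mem _ _

lemma kidx_eq_small {x : Fin d → ℤ} (hD : (Dset A x).Nonempty)
    (hB : ¬ (Bset A x).Nonempty) (h2 : 2 ≤ (Dset A x).card) :
    kidx A x hD = if x ((Dset A x).min' hD) - near A x ((Dset A x).min' hD)
        = x (((Dset A x).erase ((Dset A x).min' hD)).min' (erase_min'_nonempty h2 hD))
        - near A x (((Dset A x).erase ((Dset A x).min' hD)).min' (erase_min'_nonempty h2 hD))
      then (Dset A x).min' hD
      else ((Dset A x).erase ((Dset A x).min' hD)).min' (erase_min'_nonempty h2 hD) := by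
  unfold kidx
  rw [dif_neg hB, dif_pos h2]

lemma kidx_mem {x : Fin d → ℤ} (hD : (Dset A x).Nonempty) : kidx A x hD ∈ Dset A x := by
  unfold kidx
  split
  · next hB =>
      have h := Finset.min'_mem _ hB
      rw [mem_Bset] at h
      rw [mem_Dset]
      intro h'
      rw [h'] at h
      simp at h
  · split
    · split
      · exact Finset.min'_mem _ _
      · exact Finset.mem_of_mem_erase (Finset.min'_mem _ _)
    · exact Finset.min'_mem _ _

noncomputable def phi (A : Set (Fin d → ℤ)) (x : Fin d → ℤ) : (Fin d → ℤ) × ℕ :=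
  if hD : (Dset A x).Nonempty then
    (Function.update x (kidx A x hD)
      (x (kidx A x hD) - Int.sign (x (kidx A x hD) - near A x (kidx A x hD))),
      (kidx A x hD).val)
  else (x, 0)

lemma sub_sign_natAbs {z : ℤ} (hz : z ≠ 0) : (z - z.sign).natAbs = z.natAbs - 1 := by
  rcases lt_trichotomy z 0 with h | h | h
  · rw [Int.sign_eq_neg_one_of_neg h]; omega
  · exact absurd h hz
  · rw [Int.sign_eq_one_of_pos h]; omega

lemma sign_cases {z : ℤ} (hz : z ≠ 0) : z.sign = 1 ∨ z.sign = -1 := by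
  rcases lt_trichotomy z 0 with h | h | h
  · exact Or.inr (Int.sign_eq_neg_one_of_neg h)
  · exact absurd h hz
  · exact Or.inl (Int.sign_eq_one_of_pos h)

lemma Dset_nonempty {x : Fin d → ℤ} {n : ℕ} (hne : A.Nonempty)
    (hx : distA x A = n) (hn : 1 ≤ n) : (Dset A x).Nonempty := by
  by_contra h
  rw [Finset.not_nonempty_iff_eq_empty] at h
  have hd1 : dist1 x (near A x) = 0 := by
    unfold dist1
    apply Finset.sum_eq_zero
    intro i _
    have hi : i ∉ Dset A x := by rw [h]; exact Finset.notMem_empty i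
    rw [mem_Dset, not_not] at hi
    rw [hi]; simp
  have := (near_spec hne x).2
  omega

lemma card_ge_of_Bset_empty {x : Fin d → ℤ} {n : ℕ} (hne : A.Nonempty)
    (hx : distA x A = n) (hB : ¬ (Bset A x).Nonempty) : n ≤ (Dset A x).card := by
  rw [Finset.not_nonempty_iff_eq_empty] at hB
  have h1 : dist1 x (near A x) = ∑ i ∈ Dset A x, (x i - near A x i).natAbs := by
    unfold dist1
    rw [Finset.sum_subset (Finset.subset_univ (Dset A x))]
    intro i _ hi
    rw [mem_Dset, not_not] at hi
    rw [hi]; simp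
  have h2 : ∑ i ∈ Dset A x, (x i - near A x i).natAbs ≤ ∑ _i ∈ Dset A x, 1 := by
    apply Finset.sum_le_sum
    intro i _
    have hi : i ∉ Bset A x := by rw [hB]; exact Finset.notMem_empty i
    rw [mem_Bset] at hi
    omega
  have := (near_spec hne x).2
  simp at h2
  omega

lemma small_contrib {x : Fin d → ℤ} {i : Fin d} (hB : ¬ (Bset A x).Nonempty)
    (hi : i ∈ Dset A x) : x i - near A x i = 1 ∨ x i - near A x i = -1 := by
  rw [Finset.not_nonempty_iff_eq_empty] at hB
  have h1 : i ∉ Bset A x := by rw [hB]; exact Finset.notMem_empty i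
  rw [mem_Bset] at h1
  rw [mem_Dset] at hi
  have : x i - near A x i ≠ 0 := sub_ne_zero.mpr hi
  omega


lemma distA_update (hne : A.Nonempty) {x : Fin d → ℤ} {n : ℕ}
    (hx : distA x A = n) (hn : 1 ≤ n) {k : Fin d} (hkD : k ∈ Dset A x) :
    distA (Function.update x k (x k - Int.sign (x k - near A x k))) A = n - 1 := by
  obtain ⟨haA, hda⟩ := near_spec hne x
  obtain ⟨y, hy⟩ : ∃ y, y = Function.update x k (x k - Int.sign (x k - near A x k)) :=
    ⟨_, rfl⟩
  rw [← hy]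
  have hka : x k ≠ near A x k := mem_Dset.mp hkD
  have hz : x k - near A x k ≠ 0 := sub_ne_zero.mpr hka
  have hid : ∀ b : Fin d → ℤ, dist1 y b + (x k - b k).natAbs
      = dist1 x b + (x k - Int.sign (x k - near A x k) - b k).natAbs := by
    intro b; rw [hy]; exact dist1_update x b k _
  have h1 := hid (near A x)
  have h2 : (x k - Int.sign (x k - near A x k) - near A x k).natAbs
      = (x k - near A x k).natAbs - 1 := by
    have heq : x k - Int.sign (x k - near A x k) - near A x k
        = (x k - near A x k) - (x k - near A x k).sign := by ring
    rw [heq, sub_sign_natAbs hz]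
  have habs : 1 ≤ (x k - near A x k).natAbs := by omega
  have hub : distA y A ≤ n - 1 := by
    have h5 := distA_le (x := y) haA
    omega
  obtain ⟨hbA, hdb⟩ := near_spec hne y
  have h4 := hid (near A y)
  have h5 : distA x A ≤ dist1 x (near A y) := distA_le hbA
  have h6 : (x k - Int.sign (x k - near A x k) - near A y k).natAbs
      ≤ (x k - near A y k).natAbs + 1 := by
    rcases sign_cases hz with h | h <;> rw [h] <;> omega
  have h7 : (x k - near A y k).natAbs
      ≤ (x k - Int.sign (x k - near A x k) - near A y k).natAbs + 1 := by
    rcases sign_cases hz with h | h <;> rw [h] <;> omega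
  omega

lemma key (hne : A.Nonempty) {x x' : Fin d → ℤ} {n : ℕ} (hn : 2 ≤ n)
    (hx : distA x A = n) (hx' : distA x' A = n)
    (hD : (Dset A x).Nonempty) (hD' : (Dset A x').Nonempty)
    (hkk : kidx A x hD = kidx A x' hD')
    (hy : Function.update x (kidx A x hD)
        (x (kidx A x hD) - Int.sign (x (kidx A x hD) - near A x (kidx A x hD)))
      = Function.update x' (kidx A x hD)
        (x' (kidx A x hD) - Int.sign (x' (kidx A x hD) - near A x' (kidx A x hD))))
    (hs : Int.sign (x (kidx A x hD) - near A x (kidx A x hD)) = 1)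
    (hs' : Int.sign (x' (kidx A x hD) - near A x' (kidx A x hD)) = -1) : False := by
  set k := kidx A x hD with hk
  set a := near A x with ha
  set a' := near A x' with ha'
  have hagree : ∀ i, i ≠ k → x i = x' i := by
    intro i hik
    have h := congrFun hy i
    rwa [Function.update_of_ne hik, Function.update_of_ne hik] at h
  have hxk' : x' k = x k - 2 := by
    have h := congrFun hy k
    rw [Function.update_self, Function.update_self, hs, hs'] at h
    omega
  have hx'up : x' = Function.update x k (x' k) := by
    funext i
    by_cases hik : i = k
    · rw [hik, Function.update_self]
    · rw [Function.update_of_ne hik]; exact (hagree i hik).symm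
  have crossIdent : ∀ b : Fin d → ℤ,
      dist1 x' b + (x k - b k).natAbs = dist1 x b + (x' k - b k).natAbs := by
    intro b
    have h := dist1_update x b k (x' k)
    rwa [← hx'up] at h
  have hpos : 0 < x k - a k := Int.sign_eq_one_iff_pos.mp hs
  have hneg : x' k - a' k < 0 := Int.sign_eq_neg_one_iff_neg.mp hs'
  have h3 : dist1 x a = n := by rw [← hx]; exact (near_spec hne x).2
  have h3' : dist1 x' a' = n := by rw [← hx']; exact (near_spec hne x').2
  have hc1 := crossIdent a
  have hge1 : n ≤ dist1 x' a := by
    have h := distA_le (x := x') (near_spec hne x).1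
    rw [← ha] at h
    omega
  have e1 : x k - a k = 1 := by omega
  have e2 : dist1 x' a = n := by omega
  have hc2 := crossIdent a'
  have hge2 : n ≤ dist1 x a' := by
    have h := distA_le (x := x) (near_spec hne x').1
    rw [← ha'] at h
    omega
  have e1' : x' k - a' k = -1 := by omega
  have e2' : dist1 x a' = n := by omega
  have haa : a = a' := by
    rcases @trichotomous _ WellOrderingRel _ a a' with h | h | h
    · refine absurd h (near_min hne x' a ?_ ?_)
      · rw [ha]; exact (near_spec hne x).1
      · rw [e2, hx']
    · exact h
    · refine absurd h (near_min hne x a' ?_ ?_)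
      · rw [ha']; exact (near_spec hne x').1
      · rw [e2', hx]
  have hB : ¬ (Bset A x).Nonempty := by
    intro hB
    have hkB := kidx_big hD hB
    rw [← hk, mem_Bset, ← ha] at hkB
    omega
  have hB' : ¬ (Bset A x').Nonempty := by
    intro hB'
    have hkB := kidx_big hD' hB'
    rw [← hkk, mem_Bset, ← ha'] at hkB
    omega
  have h2 : 2 ≤ (Dset A x).card := by
    have h := card_ge_of_Bset_empty hne hx hB; omega
  have h2' : 2 ≤ (Dset A x').card := by
    have h := card_ge_of_Bset_empty hne hx' hB'; omega
  have hDD : Dset A x = Dset A x' := by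
    ext i
    rw [mem_Dset, mem_Dset, ← ha, ← ha', ← haa]
    by_cases hik : i = k
    · rw [hik]
      constructor <;> intro _ <;> omega
    · rw [hagree i hik]
  have hks := kidx_eq_small hD hB h2
  have hks' := kidx_eq_small hD' hB' h2'
  rw [← hk] at hks
  rw [← hkk] at hks'
  have es1 : (Dset A x').min' hD' = (Dset A x).min' hD := min'_eq_of_eq hDD.symm hD
  have es2 : ∀ h : ((Dset A x').erase ((Dset A x).min' hD)).Nonempty,
      ((Dset A x').erase ((Dset A x).min' hD)).min' h
        = ((Dset A x).erase ((Dset A x).min' hD)).min' (erase_min'_nonempty h2 hD) := by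
    intro h
    exact min'_eq_of_eq (by rw [← hDD]) _
  simp only [es1] at hks'
  simp only [es2] at hks'
  rw [← ha] at hks
  rw [← ha'] at hks'
  set s1 := (Dset A x).min' hD with hs1
  set s2 := ((Dset A x).erase s1).min' (erase_min'_nonempty h2 hD) with hs2
  have hs1D : s1 ∈ Dset A x := Finset.min'_mem _ _
  have hs2D : s2 ∈ Dset A x := Finset.mem_of_mem_erase (Finset.min'_mem _ _)
  have hs21 : s2 ≠ s1 := Finset.ne_of_mem_erase (Finset.min'_mem _ _)
  have hs1D' : s1 ∈ Dset A x' := by rw [← hDD]; exact hs1D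
  have hs2D' : s2 ∈ Dset A x' := by rw [← hDD]; exact hs2D
  have c1 := small_contrib hB hs1D
  have c1' := small_contrib hB' hs1D'
  rw [← ha] at c1
  rw [← ha'] at c1'
  by_cases hcond : x s1 - a s1 = x s2 - a s2
  · rw [if_pos hcond] at hks
    have hcond' : x' s1 - a' s1 = x' s2 - a' s2 := by
      by_contra hc
      rw [if_neg hc] at hks'
      exact hs21 (hks'.symm.trans hks)
    rw [hks] at e1 e1'
    have hag : x s2 = x' s2 := hagree s2 (by rw [hks]; exact hs21)
    have hxx : x' s2 - a' s2 = x s2 - a s2 := by rw [← hag, ← haa]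
    have hfin : (-1 : ℤ) = 1 := e1'.symm.trans (hcond'.trans (hxx.trans (hcond.symm.trans e1)))
    norm_num at hfin
  · rw [if_neg hcond] at hks
    have hcond' : ¬ (x' s1 - a' s1 = x' s2 - a' s2) := by
      intro hc
      rw [if_pos hc] at hks'
      exact hs21 (hks.symm.trans hks')
    rw [hks] at e1 e1'
    have hag : x s1 = x' s1 := hagree s1 (by rw [hks]; exact Ne.symm hs21)
    have hxx : x' s1 - a' s1 = x s1 - a s1 := by rw [← hag, ← haa]
    rcases c1 with hc | hc
    · exact hcond (by omega)
    · exact hcond' (by omega)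

lemma phi_injOn (hne : A.Nonempty) {n : ℕ} (hn : 2 ≤ n) :
    Set.InjOn (phi A) {x | distA x A = n} := by
  intro x hx x' hx' heq
  simp only [Set.mem_setOf_eq] at hx hx'
  have hD : (Dset A x).Nonempty := Dset_nonempty hne hx (by omega)
  have hD' : (Dset A x').Nonempty := Dset_nonempty hne hx' (by omega)
  unfold phi at heq
  rw [dif_pos hD, dif_pos hD', Prod.mk.injEq] at heq
  obtain ⟨hy, hk2⟩ := heq
  have hkk : kidx A x hD = kidx A x' hD' := Fin.val_injective hk2
  rw [← hkk] at hy
  have hzx : x (kidx A x hD) - near A x (kidx A x hD) ≠ 0 :=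
    sub_ne_zero.mpr (mem_Dset.mp (kidx_mem hD))
  have hzx' : x' (kidx A x' hD') - near A x' (kidx A x' hD') ≠ 0 :=
    sub_ne_zero.mpr (mem_Dset.mp (kidx_mem hD'))
  rw [← hkk] at hzx'
  rcases sign_cases hzx with h1 | h1 <;> rcases sign_cases hzx' with h2 | h2
  · -- both positive
    funext i
    by_cases hik : i = kidx A x hD
    · have hcf := congrFun hy (kidx A x hD)
      rw [Function.update_self, Function.update_self, h1, h2] at hcf
      rw [hik]
      omega
    · have hcf := congrFun hy i
      rwa [Function.update_of_ne hik, Function.update_of_ne hik] at hcf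
  · exact absurd (key hne hn hx hx' hD hD' hkk hy h1 h2) not_false
  · refine absurd (key hne hn hx' hx hD' hD hkk.symm ?_ ?_ ?_) not_false
    · rw [← hkk]; exact hy.symm
    · rw [← hkk]; exact h2
    · rw [← hkk]; exact h1
  · -- both negative
    funext i
    by_cases hik : i = kidx A x hD
    · have hcf := congrFun hy (kidx A x hD)
      rw [Function.update_self, Function.update_self, h1, h2] at hcf
      rw [hik]
      omega
    · have hcf := congrFun hy i
      rwa [Function.update_of_ne hik, Function.update_of_ne hik] at hcf

lemma sphere_finite (hne : A.Nonempty) (hfin : A.Finite) (m : ℕ) :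
    {x : Fin d → ℤ | distA x A = m}.Finite := by
  have hsub : {x : Fin d → ℤ | distA x A = m}
      ⊆ ⋃ a ∈ A, {x : Fin d → ℤ | ∀ i, x i ∈ Set.Icc (a i - m) (a i + m)} := by
    intro x hx
    simp only [Set.mem_setOf_eq] at hx
    obtain ⟨a, ha, hda⟩ := exists_near hne x
    refine Set.mem_biUnion ha ?_
    intro i
    have h1 : (x i - a i).natAbs ≤ dist1 x a :=
      Finset.single_le_sum (f := fun i => (x i - a i).natAbs)
        (fun _ _ => Nat.zero_le _) (Finset.mem_univ i)
    have h2 : dist1 x a = m := by rw [hda, hx]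
    rw [Set.mem_Icc]
    omega
  refine Set.Finite.subset (Set.Finite.biUnion hfin (fun a _ => ?_)) hsub
  have hpi : {x : Fin d → ℤ | ∀ i, x i ∈ Set.Icc (a i - m) (a i + m)}
      = Set.pi Set.univ (fun i => Set.Icc (a i - (m : ℤ)) (a i + m)) := by
    ext x
    simp only [Set.mem_setOf_eq, Set.mem_pi, Set.mem_univ, true_implies]
  rw [hpi]
  exact Set.Finite.pi (fun i => Set.finite_Icc _ _)

lemma phi_image_subset (hne : A.Nonempty) {n : ℕ} (hn : 2 ≤ n) :
    phi A '' {x : Fin d → ℤ | distA x A = n}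
      ⊆ {x : Fin d → ℤ | distA x A = n - 1} ×ˢ Set.Iio d := by
  rintro _ ⟨x, hx, rfl⟩
  simp only [Set.mem_setOf_eq] at hx
  have hD : (Dset A x).Nonempty := Dset_nonempty hne hx (by omega)
  unfold phi
  rw [dif_pos hD]
  constructor
  · exact distA_update hne hx (by omega) (kidx_mem hD)
  · exact (kidx A x hD).isLt

end Stmt9

/-- For a finite nonempty `A ⊆ ℤ^d` and `n ≥ 2`, the number of points at
`ℓ¹`-distance `n` from `A` is at most `d` times the number of points at
distance `n - 1`. -/
theorem stmt9 (d : ℕ) (hd : 1 ≤ d) (A : Set (Fin d → ℤ))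
    (hfin : A.Finite) (hne : A.Nonempty) (n : ℕ) (hn : 2 ≤ n) :
    {x : Fin d → ℤ | distA x A = n}.ncard ≤
      d * {x : Fin d → ℤ | distA x A = n - 1}.ncard := by
  have hS : {x : Fin d → ℤ | distA x A = n - 1}.Finite := Stmt9.sphere_finite hne hfin _
  have hIio : (Set.Iio d).Finite := Set.finite_Iio d
  have h1 : {x : Fin d → ℤ | distA x A = n}.ncard
      = (Stmt9.phi A '' {x : Fin d → ℤ | distA x A = n}).ncard :=
    (Set.ncard_image_of_injOn (Stmt9.phi_injOn hne hn)).symm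
  have h2 : (Stmt9.phi A '' {x : Fin d → ℤ | distA x A = n}).ncard
      ≤ ({x : Fin d → ℤ | distA x A = n - 1} ×ˢ Set.Iio d).ncard :=
    Set.ncard_le_ncard (Stmt9.phi_image_subset hne hn) (hS.prod hIio)
  have h3 : ({x : Fin d → ℤ | distA x A = n - 1} ×ˢ Set.Iio d).ncard
      = {x : Fin d → ℤ | distA x A = n - 1}.ncard * (Set.Iio d).ncard := by
    rw [← Nat.card_coe_set_eq, ← Nat.card_coe_set_eq, ← Nat.card_coe_set_eq]
    rw [Nat.card_congr (Equiv.Set.prod _ _), Nat.card_prod]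
  have h4 : (Set.Iio d).ncard = d := by
    rw [← Finset.coe_Iio, Set.ncard_coe_finset, Nat.card_Iio]
  rw [h1, Nat.mul_comm]
  exact h2.trans (le_of_eq (by rw [h3, h4]))
end

section
/- Let d ≥ 1, let A ⊆ ℤ^d be a finite nonempty set, and let n ≥ 1 be an integer. Then #{x ∈ ℤ^d : dist₁(x, A) = n} ≤ d^{n−1} · B(A). -/
/-- The boundary `B(A)`: the number of pairs `(x, y)` with `x ∈ A`, `y ∉ A`,
`|x - y|₁ = 1`. -/
noncomputable def bdry {d : ℕ} (A : Set (Fin d → ℤ)) : ℕ :=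
  Set.ncard {p : (Fin d → ℤ) × (Fin d → ℤ) | p.1 ∈ A ∧ p.2 ∉ A ∧ dist1 p.1 p.2 = 1}


lemma aux_choose (M m : ℕ) (h1 : 1 ≤ m) (h2 : m < M) : M ≤ M.choose m := by
  induction M generalizing m with
  | zero => omega
  | succ N ih =>
    by_cases h : m < N
    · rcases Nat.eq_or_lt_of_le h1 with rfl | hm1
      · simp [Nat.choose_one_right]
      · obtain ⟨k, rfl⟩ : ∃ k, m = k + 1 := ⟨m - 1, by omega⟩
        have hrw : (N+1).choose (k+1) = N.choose k + N.choose (k+1) :=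
          Nat.choose_succ_succ N k
        have h1' := ih (k+1) h1 h
        have h2' : 0 < N.choose k := Nat.choose_pos (by omega)
        omega
    · have hm : m = N := by omega
      subst hm
      have hs : (m+1).choose m = (m+1).choose 1 := by
        have := Nat.choose_symm (n := m+1) (k := 1) (by omega)
        simpa using this
      rw [hs, Nat.choose_one_right]

lemma aux_term (M m : ℕ) (hm : m < M) : 2 * (m + 1) ≤ (M + 1) * M.choose m := by
  rcases Nat.eq_or_lt_of_le (Nat.zero_le m) with rfl | hm0
  · simp; omega
  · have h := aux_choose M m (by omega) hm
    calc 2 * (m + 1) ≤ 2 * M := by omega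
    _ ≤ (M+1) * M.choose m := by nlinarith

lemma aux_pow (c M : ℕ) :
    (M + 1) * (c + 1) ^ M + 2 * ∑ m ∈ Finset.range M, (m + 1) * (c + 1) ^ m
      ≤ (M + 1) * (c + 2) ^ M := by
  have hpow : (c + 2) ^ M = ∑ j ∈ Finset.range (M + 1),
      (c + 1) ^ j * M.choose j := by
    have h := add_pow (c + 1) (1 : ℕ) M
    simpa using h
  have key : 2 * ∑ m ∈ Finset.range M, (m + 1) * (c + 1) ^ m
      ≤ ∑ j ∈ Finset.range M, (M + 1) * ((c + 1) ^ j * M.choose j) := by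
    rw [Finset.mul_sum]
    apply Finset.sum_le_sum
    intro m hm
    have h := aux_term M m (Finset.mem_range.mp hm)
    calc 2 * ((m + 1) * (c + 1) ^ m) = (2 * (m + 1)) * (c + 1) ^ m := by ring
    _ ≤ ((M + 1) * M.choose m) * (c + 1) ^ m := Nat.mul_le_mul_right _ h
    _ = (M + 1) * ((c + 1) ^ m * M.choose m) := by ring
  calc (M + 1) * (c + 1) ^ M + 2 * ∑ m ∈ Finset.range M, (m + 1) * (c + 1) ^ m
      ≤ (M + 1) * (c + 1) ^ M + ∑ j ∈ Finset.range M, (M + 1) * ((c + 1) ^ j * M.choose j) :=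
        Nat.add_le_add_left key _
    _ = (M + 1) * ∑ j ∈ Finset.range (M + 1), (c + 1) ^ j * M.choose j := by
        rw [Finset.sum_range_succ, Nat.choose_self, mul_one, Nat.mul_add, Finset.mul_sum]
        ring
    _ = (M + 1) * (c + 2) ^ M := by rw [hpow]


lemma sum_Icc_abs (H : ℕ → ℕ) (M : ℕ) :
    ∑ t ∈ Finset.Icc (-(M:ℤ)) (M:ℤ), H t.natAbs
      = H 0 + 2 * ∑ u ∈ Finset.Icc 1 M, H u := by
  induction M with
  | zero => simp
  | succ N ih =>
    have hins : Finset.Icc (-((N:ℤ)+1)) ((N:ℤ)+1)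
        = insert (-((N:ℤ)+1)) (insert ((N:ℤ)+1) (Finset.Icc (-(N:ℤ)) (N:ℤ))) := by
      ext t
      simp only [Finset.mem_Icc, Finset.mem_insert]
      omega
    have h1 : ((N:ℤ)+1) ∉ Finset.Icc (-(N:ℤ)) (N:ℤ) := by
      simp only [Finset.mem_Icc]; omega
    have h2 : (-((N:ℤ)+1)) ∉ insert ((N:ℤ)+1) (Finset.Icc (-(N:ℤ)) (N:ℤ)) := by
      simp only [Finset.mem_insert, Finset.mem_Icc]; omega
    have hIccN : Finset.Icc 1 (N+1) = insert (N+1) (Finset.Icc 1 N) := by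
      ext u; simp only [Finset.mem_Icc, Finset.mem_insert]; omega
    have hN1 : (N+1) ∉ Finset.Icc 1 N := by simp
    push_cast
    rw [hins, Finset.sum_insert h2, Finset.sum_insert h1, ih, hIccN,
      Finset.sum_insert hN1]
    have : ((-((N:ℤ)+1)).natAbs) = N+1 := by omega
    rw [this]
    have : ((((N:ℤ))+1).natAbs) = N+1 := by omega
    rw [this]
    ring

lemma num_ineq (c M : ℕ) :
    (∑ t ∈ Finset.Icc (-(M:ℤ)) (M:ℤ), (M - t.natAbs + 1) * (c+1)^(M - t.natAbs))
      ≤ (M+1) * (c+2)^M := by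
  rw [sum_Icc_abs (fun u => (M - u + 1) * (c+1)^(M - u)) M]
  have h1 : ∑ u ∈ Finset.Icc 1 M, (M - u + 1) * (c+1)^(M - u)
      = ∑ m ∈ Finset.range M, (m + 1) * (c+1)^m := by
    rw [show Finset.Icc 1 M = Finset.Ico 1 (M+1) from by rw [Finset.Ico_add_one_right_eq_Icc],
      Finset.sum_Ico_eq_sum_range]
    have hM : M + 1 - 1 = M := by omega
    rw [hM]
    rw [← Finset.sum_range_reflect (fun m => (m + 1) * (c+1)^m) M]
    apply Finset.sum_congr rfl
    intro i hi
    have hi' : i < M := Finset.mem_range.mp hi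
    have e1 : M - (1 + i) = M - 1 - i := by omega
    rw [e1]
  rw [h1]
  have h0 : M - 0 = M := by omega
  simp only [h0]
  exact aux_pow c M


lemma sumAbs_finite {d : ℕ} (M : ℕ) :
    {w : Fin d → ℤ | (∑ j, (w j).natAbs) ≤ M}.Finite := by
  apply Set.Finite.subset (Set.Finite.pi (fun j : Fin d => Set.finite_Icc (-(M:ℤ)) (M:ℤ)))
  intro w hw
  rw [Set.mem_pi]
  intro j _
  rw [Set.mem_Icc]
  have h1 : (w j).natAbs ≤ ∑ k, (w k).natAbs :=
    Finset.single_le_sum (f := fun k => (w k).natAbs) (fun k _ => Nat.zero_le _)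
      (Finset.mem_univ j)
  have h2 : (w j).natAbs ≤ M := le_trans h1 hw
  omega

lemma halfcount {d : ℕ} (i : Fin d) (ε : ℤ) (hε : ε = 1 ∨ ε = -1) :
    ∀ s : Finset (Fin d), i ∉ s → ∀ M : ℕ,
    {w : Fin d → ℤ | (∀ j, j ≠ i → j ∉ s → w j = 0) ∧ (∑ j, (w j).natAbs) ≤ M
        ∧ 0 ≤ ε * w i}.ncard ≤ (M+1) * (s.card + 1)^M := by
  intro s
  induction s using Finset.induction_on with
  | empty =>
    intro _ M
    have hle : {w : Fin d → ℤ | (∀ j, j ≠ i → j ∉ (∅ : Finset (Fin d)) → w j = 0)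
        ∧ (∑ j, (w j).natAbs) ≤ M ∧ 0 ≤ ε * w i}.ncard
        ≤ (Set.Icc (0:ℤ) (M:ℤ)).ncard := by
      refine Set.ncard_le_ncard_of_injOn (fun w => ε * w i) ?_ ?_ (Set.finite_Icc _ _)
      · intro w hw
        obtain ⟨hz, hsum, hpos⟩ := hw
        have h1 : (w i).natAbs ≤ ∑ k, (w k).natAbs :=
          Finset.single_le_sum (f := fun k => (w k).natAbs) (fun k _ => Nat.zero_le _)
            (Finset.mem_univ i)
        have h2 : (w i).natAbs ≤ M := le_trans h1 hsum
        simp only [Set.mem_Icc]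
        rcases hε with rfl | rfl <;> constructor <;> omega
      · intro w hw w' hw' h
        have h' : ε * w i = ε * w' i := h
        funext j
        by_cases hj : j = i
        · subst hj
          clear hw hw' h
          rcases hε with rfl | rfl <;> omega
        · rw [hw.1 j hj (Finset.notMem_empty j), hw'.1 j hj (Finset.notMem_empty j)]
    have hicc : (Set.Icc (0:ℤ) (M:ℤ)).ncard = M + 1 := by
      clear hle
      rw [← Finset.coe_Icc, Set.ncard_coe_finset, Int.card_Icc]
      omega
    rw [hicc] at hle
    calc _ ≤ M + 1 := hle
    _ ≤ (M+1) * ((∅ : Finset (Fin d)).card + 1)^M := by simp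
  | @insert a s ha ih =>
    intro hins M
    have hai : a ≠ i := fun h => hins (h ▸ Finset.mem_insert_self a s)
    have his : i ∉ s := fun h => hins (Finset.mem_insert_of_mem h)
    have hDfin : {w : Fin d → ℤ | (∀ j, j ≠ i → j ∉ insert a s → w j = 0)
        ∧ (∑ j, (w j).natAbs) ≤ M ∧ 0 ≤ ε * w i}.Finite :=
      (sumAbs_finite M).subset (fun w hw => hw.2.1)
    rw [Set.ncard_eq_toFinset_card _ hDfin]
    have hmaps : ∀ w ∈ hDfin.toFinset, w a ∈ Finset.Icc (-(M:ℤ)) (M:ℤ) := by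
      intro w hw
      rw [Set.Finite.mem_toFinset] at hw
      have h1 : (w a).natAbs ≤ ∑ k, (w k).natAbs :=
        Finset.single_le_sum (f := fun k => (w k).natAbs) (fun k _ => Nat.zero_le _)
          (Finset.mem_univ a)
      have h2 : (w a).natAbs ≤ M := le_trans h1 hw.2.1
      simp only [Finset.mem_Icc]
      omega
    rw [Finset.card_eq_sum_card_fiberwise hmaps]
    have hfiber : ∀ t ∈ Finset.Icc (-(M:ℤ)) (M:ℤ),
        (hDfin.toFinset.filter (fun w => w a = t)).card
          ≤ (M - t.natAbs + 1) * (s.card + 1)^(M - t.natAbs) := by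
      intro t ht
      set M' := M - t.natAbs with hM'
      have hfin2 : {w : Fin d → ℤ | (∀ j, j ≠ i → j ∉ s → w j = 0)
          ∧ (∑ j, (w j).natAbs) ≤ M' ∧ 0 ≤ ε * w i}.Finite :=
        (sumAbs_finite M').subset (fun w hw => hw.2.1)
      have hinj : (hDfin.toFinset.filter (fun w => w a = t)).card ≤ hfin2.toFinset.card := by
        apply Finset.card_le_card_of_injOn (fun w => Function.update w a 0)
        · intro w hw
          rw [Finset.mem_coe, Finset.mem_filter, Set.Finite.mem_toFinset] at hw
          obtain ⟨⟨hz, hsum, hpos⟩, hwa⟩ := hw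
          rw [Finset.mem_coe, Set.Finite.mem_toFinset]
          beta_reduce
          have hupd : ∀ j, j ≠ a → Function.update w a 0 j = w j :=
            fun j hj => Function.update_of_ne hj 0 w
          refine ⟨?_, ?_, ?_⟩
          · intro j hji hjs
            by_cases hja : j = a
            · subst hja; simp
            · rw [hupd j hja]
              exact hz j hji (by simp [Finset.mem_insert, hja, hjs])
          · have hsplit : ∑ j, (Function.update w a 0 j).natAbs
                + (w a).natAbs = ∑ j, (w j).natAbs := by
              have e1 : ∑ j ∈ Finset.univ.erase a, (Function.update w a 0 j).natAbs
                  + (Function.update w a 0 a).natAbs = ∑ j, (Function.update w a 0 j).natAbs :=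
                Finset.sum_erase_add _ _ (Finset.mem_univ a)
              have e2 : ∑ j ∈ Finset.univ.erase a, (w j).natAbs
                  + (w a).natAbs = ∑ j, (w j).natAbs :=
                Finset.sum_erase_add _ _ (Finset.mem_univ a)
              have e3 : ∑ j ∈ Finset.univ.erase a, (Function.update w a 0 j).natAbs
                  = ∑ j ∈ Finset.univ.erase a, (w j).natAbs := by
                apply Finset.sum_congr rfl
                intro j hj
                rw [hupd j (Finset.ne_of_mem_erase hj)]
              simp only [Function.update_self, Int.natAbs_zero, add_zero] at e1
              omega
            have hta : (w a).natAbs = t.natAbs := by rw [hwa]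
            omega
          · rw [hupd i (Ne.symm hai)]
            exact hpos
        · intro w hw w' hw' h
          rw [Finset.mem_coe, Finset.mem_filter] at hw hw'
          funext j
          by_cases hja : j = a
          · subst hja; rw [hw.2, hw'.2]
          · have h2 : Function.update w a 0 = Function.update w' a 0 := h
            have h3 := congrFun h2 j
            rwa [Function.update_of_ne hja 0 w, Function.update_of_ne hja 0 w'] at h3
      calc _ ≤ hfin2.toFinset.card := hinj
      _ = _ := (Set.ncard_eq_toFinset_card _ hfin2).symm
      _ ≤ (M' + 1) * (s.card + 1)^M' := ih his M'
    calc _ ≤ ∑ t ∈ Finset.Icc (-(M:ℤ)) (M:ℤ),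
          (M - t.natAbs + 1) * (s.card + 1)^(M - t.natAbs) :=
        Finset.sum_le_sum hfiber
    _ ≤ (M+1) * (s.card + 2)^M := num_ineq s.card M
    _ = (M+1) * ((insert a s).card + 1)^M := by
        rw [Finset.card_insert_of_notMem ha]

def sg (t : ℤ) : ℤ := if 0 < t then 1 else -1

lemma sg_cases (t : ℤ) : sg t = 1 ∨ sg t = -1 := by unfold sg; split <;> simp

lemma sg_ne (t : ℤ) : sg t ≠ 0 := by rcases sg_cases t with h | h <;> omega

lemma sg_mul (t : ℤ) (ht : t ≠ 0) : 1 ≤ sg t * t := by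
  unfold sg; split <;> rename_i h <;> omega

lemma dist1_single {d : ℕ} (x : Fin d → ℤ) (i : Fin d) (σ : ℤ) (hσ : σ = 1 ∨ σ = -1) :
    dist1 x (fun k => x k + if k = i then σ else 0) = 1 := by
  unfold dist1
  have h : ∀ k, (x k - (x k + if k = i then σ else 0)).natAbs
      = if k = i then 1 else 0 := by
    intro k
    by_cases hk : k = i <;> simp only [hk, if_pos, if_neg, if_true] <;> rcases hσ with rfl | rfl <;> simp <;> omega
  simp only [h]
  simp

lemma dist1_ball_finite {d : ℕ} (a : Fin d → ℤ) (R : ℕ) :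
    {x : Fin d → ℤ | dist1 x a ≤ R}.Finite := by
  apply Set.Finite.subset (Set.Finite.pi fun j : Fin d => Set.finite_Icc (a j - R) (a j + R))
  intro x hx
  rw [Set.mem_pi]
  intro j _
  rw [Set.mem_Icc]
  have h1 : (x j - a j).natAbs ≤ dist1 x a :=
    Finset.single_le_sum (f := fun k => (x k - a k).natAbs) (fun k _ => Nat.zero_le _)
      (Finset.mem_univ j)
  have h2 : (x j - a j).natAbs ≤ R := le_trans h1 hx
  omega

lemma dist1_comm {d : ℕ} (x y : Fin d → ℤ) : dist1 x y = dist1 y x := by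
  unfold dist1
  apply Finset.sum_congr rfl
  intro i _
  omega

/-- For a finite nonempty `A ⊆ ℤ^d` and `n ≥ 1`, the number of points at
`ℓ¹`-distance `n` from `A` is at most `d^{n-1} · B(A)`. -/
theorem stmt10 (d : ℕ) (hd : 1 ≤ d) (A : Set (Fin d → ℤ))
    (hfin : A.Finite) (hne : A.Nonempty) (n : ℕ) (hn : 1 ≤ n) :
    {x : Fin d → ℤ | distA x A = n}.ncard ≤ d ^ (n - 1) * bdry A := by
  classical
  -- nearest point at distance n
  have hnear : ∀ x : Fin d → ℤ, distA x A = n → ∃ a ∈ A, dist1 x a = n := by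
    intro x hx
    obtain ⟨a0, ha0⟩ := hne
    have hne' : {m | ∃ a ∈ A, dist1 x a = m}.Nonempty := ⟨dist1 x a0, a0, ha0, rfl⟩
    have hmem := Nat.sInf_mem hne'
    rw [show sInf {m | ∃ a ∈ A, dist1 x a = m} = distA x A from rfl, hx] at hmem
    exact hmem
  have hSfin : {x : Fin d → ℤ | distA x A = n}.Finite := by
    apply Set.Finite.subset (hfin.biUnion (fun a (_ : a ∈ A) => dist1_ball_finite a n))
    intro x hx
    obtain ⟨a, haA, had⟩ := hnear x hx
    exact Set.mem_biUnion haA (show x ∈ {y | dist1 y a ≤ n} by simp [had])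
  have hBfin : {p : (Fin d → ℤ) × (Fin d → ℤ) | p.1 ∈ A ∧ p.2 ∉ A ∧ dist1 p.1 p.2 = 1}.Finite := by
    apply Set.Finite.subset
      (Set.Finite.prod hfin (hfin.biUnion (fun a (_ : a ∈ A) =>
        (dist1_ball_finite a 1).image (fun y => y))))
    intro p hp
    obtain ⟨h1, _, h3⟩ := hp
    refine Set.mem_prod.mpr ⟨h1, Set.mem_biUnion h1 ?_⟩
    simp only [Set.image_id']
    show dist1 p.2 p.1 ≤ 1
    rw [dist1_comm]
    omega
  -- choice of nearest point
  have hchoice : ∀ x : Fin d → ℤ, ∃ a, distA x A = n → (a ∈ A ∧ dist1 x a = n) := by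
    intro x
    by_cases hx : distA x A = n
    · obtain ⟨a, h1, h2⟩ := hnear x hx
      exact ⟨a, fun _ => ⟨h1, h2⟩⟩
    · exact ⟨x, fun h => absurd h hx⟩
  choose f hf using hchoice
  rw [Set.ncard_eq_toFinset_card _ hSfin,
    show bdry A = hBfin.toFinset.card from Set.ncard_eq_toFinset_card _ hBfin]
  set Sfin := hSfin.toFinset with hSfin'
  set Bfin := hBfin.toFinset with hBfin'
  -- definitions
  set g : (Fin d → ℤ) × Fin d → ℕ := fun q => (q.1 q.2 - f q.1 q.2).natAbs with hg
  set π : (Fin d → ℤ) × Fin d → (Fin d → ℤ) × (Fin d → ℤ) :=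
    fun q => (f q.1, fun k => f q.1 k + if k = q.2 then sg (q.1 q.2 - f q.1 q.2) else 0) with hπ
  set Q1 := (Sfin ×ˢ (Finset.univ : Finset (Fin d))).filter (fun q => g q ≠ 0) with hQ1
  suffices key : n * Sfin.card ≤ n * (d ^ (n - 1) * Bfin.card) by
    exact Nat.le_of_mul_le_mul_left key (by omega)
  -- members of Sfin
  have hS' : ∀ x ∈ Sfin, f x ∈ A ∧ dist1 x (f x) = n := by
    intro x hx
    rw [hSfin', Set.Finite.mem_toFinset] at hx
    exact hf x hx
  -- π maps Q1 into Bfin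
  have hmapsπ : ∀ q ∈ Q1, π q ∈ Bfin := by
    intro q hq
    rw [hQ1, Finset.mem_filter, Finset.mem_product] at hq
    obtain ⟨⟨hx, -⟩, hgq⟩ := hq
    obtain ⟨haA, hdx⟩ := hS' q.1 hx
    have hgq' : (q.1 q.2 - f q.1 q.2).natAbs ≠ 0 := by simpa [hg] using hgq
    set x := q.1 with hx'
    set i := q.2 with hi'
    set v := x i - f x i with hv'
    have hv : v ≠ 0 := by omega
    have hσ := sg_cases v
    have hσv := sg_mul v hv
    have c1 : dist1 (f x) (π q).2 = 1 := dist1_single (f x) i (sg v) hσ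
    have c2 : dist1 x (π q).2 + 1 = n := by
      have e1 : ∑ k ∈ Finset.univ.erase i, (x k - (π q).2 k).natAbs
          + (x i - (π q).2 i).natAbs = dist1 x (π q).2 :=
        Finset.sum_erase_add _ _ (Finset.mem_univ i)
      have e2 : ∑ k ∈ Finset.univ.erase i, (x k - f x k).natAbs
          + (x i - f x i).natAbs = dist1 x (f x) :=
        Finset.sum_erase_add _ _ (Finset.mem_univ i)
      have e3 : ∑ k ∈ Finset.univ.erase i, (x k - (π q).2 k).natAbs
          = ∑ k ∈ Finset.univ.erase i, (x k - f x k).natAbs := by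
        apply Finset.sum_congr rfl
        intro k hk
        have hki : k ≠ i := Finset.ne_of_mem_erase hk
        simp only [hπ]
        rw [if_neg (show ¬ k = q.2 from hki), add_zero]
      have e4 : (x i - (π q).2 i).natAbs + 1 = v.natAbs := by
        have : (π q).2 i = f x i + sg v := by show f x i + (if i = i then sg v else 0) = f x i + sg v; simp
        rw [this]
        have hvv : x i - (f x i + sg v) = v - sg v := by rw [hv']; ring
        rw [hvv]
        rcases hσ with h | h <;> rw [h] <;> rw [h] at hσv <;> omega
      omega
    have c3 : (π q).2 ∉ A := by
      intro hyA
      have hle : distA x A ≤ dist1 x (π q).2 := Nat.sInf_le ⟨(π q).2, hyA, rfl⟩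
      have hxn : distA x A = n := by
        rw [hSfin', Set.Finite.mem_toFinset] at hx
        exact hx
      omega
    rw [hBfin', Set.Finite.mem_toFinset]
    exact ⟨haA, c3, c1⟩
  -- per fiber bound
  have hfiber : ∀ p ∈ Bfin, (∑ q ∈ Q1.filter (fun q => π q = p), g q) ≤ n * d ^ (n - 1) := by
    intro p hp
    rcases (Q1.filter (fun q => π q = p)).eq_empty_or_nonempty with hF | ⟨q0, hq0⟩
    · rw [hF, Finset.sum_empty]
      exact Nat.zero_le _
    set i := q0.2 with hi0
    set ε := sg (q0.1 q0.2 - f q0.1 q0.2) with hε0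
    have hε : ε = 1 ∨ ε = -1 := sg_cases _
    have hkey : ∀ q ∈ Q1.filter (fun q => π q = p),
        q.2 = i ∧ f q.1 = p.1 ∧ dist1 q.1 p.1 = n ∧ 1 ≤ ε * (q.1 i - p.1 i) := by
      intro q hq
      rw [Finset.mem_filter] at hq
      obtain ⟨hqQ, hqp⟩ := hq
      have hq0' := Finset.mem_filter.mp hq0
      obtain ⟨hq0Q, hq0p⟩ := hq0'
      rw [hQ1, Finset.mem_filter, Finset.mem_product] at hqQ hq0Q
      obtain ⟨⟨hxS, -⟩, hgq⟩ := hqQ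
      obtain ⟨⟨hx0S, -⟩, hgq0⟩ := hq0Q
      have hgq' : (q.1 q.2 - f q.1 q.2) ≠ 0 := by
        simp only [hg] at hgq
        omega
      have hgq0' : (q0.1 q0.2 - f q0.1 q0.2) ≠ 0 := by
        simp only [hg] at hgq0
        omega
      have hfq : f q.1 = p.1 := congrArg Prod.fst hqp
      have hfq0 : f q0.1 = p.1 := congrArg Prod.fst hq0p
      have h2 : (fun k => f q.1 k + if k = q.2 then sg (q.1 q.2 - f q.1 q.2) else 0) = p.2 :=
        congrArg Prod.snd hqp
      have h20 : (fun k => f q0.1 k + if k = q0.2 then sg (q0.1 q0.2 - f q0.1 q0.2) else 0) = p.2 :=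
        congrArg Prod.snd hq0p
      have heval := congrFun h2 q.2
      have heval0 := congrFun h20 q.2
      rw [if_pos rfl] at heval
      have hffq : f q.1 q.2 = f q0.1 q.2 := by rw [hfq, hfq0]
      have hqq : q.2 = q0.2 := by
        by_contra hne2
        rw [if_neg hne2] at heval0
        have : sg (q.1 q.2 - f q.1 q.2) = 0 := by omega
        exact sg_ne _ this
      rw [if_pos hqq] at heval0
      have hsgeq : sg (q.1 q.2 - f q.1 q.2) = ε := by
        rw [hε0]
        omega
      have hq2i : q.2 = i := by rw [hqq, hi0]
      refine ⟨hq2i, hfq, ?_, ?_⟩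
      · have := (hS' q.1 hxS).2
        rw [hfq] at this
        exact this
      · have hmul := sg_mul _ hgq'
        rw [hsgeq] at hmul
        rw [← hq2i, ← hfq]
        exact hmul
    set F := Q1.filter (fun q => π q = p) with hF'
    set ψ : ((_ : (Fin d → ℤ) × Fin d) × ℕ) → (Fin d → ℤ) :=
      fun σ => (fun k => σ.1.1 k - p.1 k - if k = i then ε * ((σ.2 : ℤ) + 1) else 0) with hψ
    have himg : ∀ σ ∈ F.sigma (fun q => Finset.range (g q)),
        ((∑ k, ((ψ σ) k).natAbs) + (σ.2 + 1) = n) ∧ 0 ≤ ε * (ψ σ) i := by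
      intro σ hσ
      rw [Finset.mem_sigma] at hσ
      obtain ⟨hqF, hj⟩ := hσ
      obtain ⟨hq2, hfq, hdist, hεv⟩ := hkey σ.1 hqF
      have hjlt : σ.2 < g σ.1 := Finset.mem_range.mp hj
      have hgval : g σ.1 = (σ.1.1 i - p.1 i).natAbs := by
        rw [hg]
        simp only
        rw [hq2, hfq]
      have e1 : ∑ k ∈ Finset.univ.erase i, ((ψ σ) k).natAbs + ((ψ σ) i).natAbs
          = ∑ k, ((ψ σ) k).natAbs :=
        Finset.sum_erase_add _ _ (Finset.mem_univ i)
      have e2 : ∑ k ∈ Finset.univ.erase i, (σ.1.1 k - p.1 k).natAbs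
          + (σ.1.1 i - p.1 i).natAbs = ∑ k, (σ.1.1 k - p.1 k).natAbs :=
        Finset.sum_erase_add _ _ (Finset.mem_univ i)
      have e3 : ∑ k ∈ Finset.univ.erase i, ((ψ σ) k).natAbs
          = ∑ k ∈ Finset.univ.erase i, (σ.1.1 k - p.1 k).natAbs := by
        apply Finset.sum_congr rfl
        intro k hk
        have hki : k ≠ i := Finset.ne_of_mem_erase hk
        simp only [hψ, if_neg hki, sub_zero]
      have e4 : ((ψ σ) i).natAbs + (σ.2 + 1) = (σ.1.1 i - p.1 i).natAbs ∧ 0 ≤ ε * (ψ σ) i := by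
        have hval : (ψ σ) i = (σ.1.1 i - p.1 i) - ε * ((σ.2 : ℤ) + 1) := by
          simp [hψ]
        rw [hval]
        rw [hgval] at hjlt
        rcases hε with h | h <;> rw [h] <;> rw [h] at hεv <;> constructor <;> omega
      have e5 : ∑ k, (σ.1.1 k - p.1 k).natAbs = n := hdist
      exact ⟨by omega, e4.2⟩
    have hHB : {w : Fin d → ℤ | (∀ j, j ≠ i → j ∉ Finset.univ.erase i → w j = 0)
        ∧ (∑ j, (w j).natAbs) ≤ (n-1) ∧ 0 ≤ ε * w i}.Finite :=
      (sumAbs_finite (n-1)).subset (fun w hw => hw.2.1)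
    have hsum : (∑ q ∈ F, g q) = (F.sigma (fun q => Finset.range (g q))).card := by
      rw [Finset.card_sigma]
      simp [Finset.card_range]
    have hcard : (F.sigma (fun q => Finset.range (g q))).card ≤ hHB.toFinset.card := by
      apply Finset.card_le_card_of_injOn ψ
      · intro σ hσ
        rw [Finset.mem_coe, Set.Finite.mem_toFinset]
        obtain ⟨hsum', hpos⟩ := himg σ hσ
        refine ⟨?_, by omega, hpos⟩
        intro j' hj1 hj2
        exact absurd (Finset.mem_erase.mpr ⟨hj1, Finset.mem_univ j'⟩) hj2
      · intro σ hσ σ' hσ' heq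
        rw [Finset.mem_coe] at hσ hσ'
        obtain ⟨hsum1, -⟩ := himg σ hσ
        obtain ⟨hsum2, -⟩ := himg σ' hσ'
        have hsums : ∑ k, ((ψ σ) k).natAbs = ∑ k, ((ψ σ') k).natAbs := by rw [heq]
        have hj : σ.2 = σ'.2 := by omega
        have hq2 := (hkey σ.1 (Finset.mem_sigma.mp hσ).1).1
        have hq2' := (hkey σ'.1 (Finset.mem_sigma.mp hσ').1).1
        have hfun : ∀ k, σ.1.1 k = σ'.1.1 k := by
          intro k
          have hk2 := congrFun heq k
          simp only [hψ] at hk2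
          by_cases hk : k = i
          · rw [if_pos hk, if_pos hk] at hk2
            rw [hj] at hk2
            omega
          · rw [if_neg hk, if_neg hk] at hk2
            omega
        have hq1 : σ.1 = σ'.1 := Prod.ext (funext hfun) (hq2.trans hq2'.symm)
        exact Sigma.ext hq1 (heq_of_eq hj)
    have hHBbound := halfcount i ε hε (Finset.univ.erase i) (Finset.notMem_erase i _) (n-1)
    have hcards : hHB.toFinset.card ≤ ((n-1)+1) * ((Finset.univ.erase i).card + 1)^(n-1) := by
      rw [← Set.ncard_eq_toFinset_card _ hHB]
      exact hHBbound
    have hce : (Finset.univ.erase i).card + 1 = d := by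
      rw [Finset.card_erase_of_mem (Finset.mem_univ i), Finset.card_univ, Fintype.card_fin]
      exact Nat.succ_pred_eq_of_pos hd
    have hne1 : (n-1)+1 = n := Nat.succ_pred_eq_of_pos hn
    rw [hce, hne1] at hcards
    rw [hsum]
    exact le_trans hcard hcards
  calc n * Sfin.card = ∑ x ∈ Sfin, n := by rw [Finset.sum_const, smul_eq_mul, mul_comm]
    _ = ∑ x ∈ Sfin, dist1 x (f x) := (Finset.sum_congr rfl (fun x hx => ((hS' x hx).2).symm))
    _ = ∑ q ∈ Sfin ×ˢ (Finset.univ : Finset (Fin d)), g q := by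
        rw [Finset.sum_product]
        rfl
    _ = ∑ q ∈ Q1, g q := (Finset.sum_filter_ne_zero _).symm
    _ = ∑ p ∈ Bfin, ∑ q ∈ Q1.filter (fun q => π q = p), g q :=
        (Finset.sum_fiberwise_of_maps_to hmapsπ g).symm
    _ ≤ ∑ p ∈ Bfin, n * d ^ (n - 1) := Finset.sum_le_sum hfiber
    _ = Bfin.card * (n * d ^ (n - 1)) := by rw [Finset.sum_const, smul_eq_mul]
    _ = n * (d ^ (n - 1) * Bfin.card) := by ring
end

section
/- For every integer d ≥ 1 and every integer N ≥ 1, there exists a finite set A ⊆ ℤ^d with |A| = N and B(A) ≤ 4d · N^{1 − 1/d}, where N^{1 − 1/d} denotes the real power. -/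
namespace Iso
open Finset

/-- mixed radix weights -/
def Wf (b : ℕ → ℕ) (i : ℕ) : ℕ := ∏ t ∈ Finset.range i, b t

variable {b : ℕ → ℕ}

lemma Wf_zero : Wf b 0 = 1 := by simp [Wf]

lemma Wf_succ (i : ℕ) : Wf b (i+1) = Wf b i * b i := prod_range_succ b i

lemma Wf_pos (hb : ∀ i, 1 ≤ b i) (i : ℕ) : 0 < Wf b i :=
  prod_pos (fun t _ => hb t)

lemma Wf_factor {m i : ℕ} (h : m ≤ i) :
    Wf b i = Wf b m * ∏ t ∈ Ico m i, b t :=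
  (prod_range_mul_prod_Ico b h).symm

/-- digit identity -/
lemma key_id (b : ℕ → ℕ) : ∀ d n, ∑ i ∈ range d, Wf b i * ((n / Wf b i) % b i) = n % Wf b d := by
  intro d
  induction d with
  | zero => intro n; simp [Wf_zero, Nat.mod_one]
  | succ d ih =>
    intro n
    rw [sum_range_succ, ih, Wf_succ, Nat.mod_mul]



lemma pred_div {v s R : ℕ} (hs : s ∣ R) (hv : v % s ≠ 0) : (v - 1) / R = v / R := by
  rcases Nat.eq_zero_or_pos R with hR | hR
  · simp [hR]
  have hvR : v % R ≠ 0 := by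
    intro h
    exact hv (Nat.mod_eq_zero_of_dvd (hs.trans (Nat.dvd_of_mod_eq_zero h)))
  have hdm := Nat.div_add_mod v R
  have hmlt := Nat.mod_lt v hR
  have h1 : v - 1 = R * (v / R) + (v % R - 1) := by omega
  rw [h1, Nat.mul_add_div hR, Nat.div_eq_of_lt (show v % R - 1 < R by omega), Nat.add_zero]

/-- digit of a split number, low position -/
lemma dg_low (hb : ∀ i, 1 ≤ b i) {m i : ℕ} (hmi : m < i) (t u : ℕ) :
    ((Wf b i * t + u) / Wf b m) % b m = ((u / Wf b m) % b m) := by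
  have h1 : Wf b i = Wf b (m+1) * ∏ x ∈ Ico (m+1) i, b x := Wf_factor hmi
  rw [Wf_succ] at h1
  have h2 : Wf b i * t + u = Wf b m * (b m * ((∏ x ∈ Ico (m+1) i, b x) * t)) + u := by
    rw [h1]; ring
  rw [h2, Nat.mul_add_div (Wf_pos hb m), Nat.mul_add_mod]

/-- digit of a split number, position i -/
lemma dg_mid (hb : ∀ i, 1 ≤ b i) {i : ℕ} (t u : ℕ) (hu : u < Wf b i) :
    ((Wf b i * t + u) / Wf b i) % b i = t % b i := by
  rw [Nat.mul_add_div (Wf_pos hb i), Nat.div_eq_of_lt hu, Nat.add_zero]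

/-- digit of a split number, high position -/
lemma dg_high (hb : ∀ i, 1 ≤ b i) {m i : ℕ} (hmi : i < m) (t u : ℕ) (hu : u < Wf b i) :
    ((Wf b i * t + u) / Wf b m) % b m = ((t / ∏ x ∈ Ico i m, b x) % b m) := by
  have h1 : Wf b m = Wf b i * ∏ x ∈ Ico i m, b x := Wf_factor (le_of_lt hmi)
  rw [h1, ← Nat.div_div_eq_div_mul, Nat.mul_add_div (Wf_pos hb i), Nat.div_eq_of_lt hu,
    Nat.add_zero]

lemma shift_down (hb : ∀ i, 1 ≤ b i) {i n : ℕ} (h : (n / Wf b i) % b i ≠ 0) (m : ℕ) :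
    ((n - Wf b i) / Wf b m) % b m =
      if m = i then (n / Wf b i) % b i - 1 else (n / Wf b m) % b m := by
  have hWi : 0 < Wf b i := Wf_pos hb i
  have hbi : 0 < b i := hb i
  obtain ⟨v, hv⟩ : ∃ v, n / Wf b i = v := ⟨_, rfl⟩
  obtain ⟨u, hu2⟩ : ∃ u, n % Wf b i = u := ⟨_, rfl⟩
  have hdm0 := Nat.div_add_mod n (Wf b i)
  rw [hv, hu2] at hdm0
  have hu : u < Wf b i := hu2 ▸ Nat.mod_lt _ hWi
  rw [hv] at h
  have hv1 : 1 ≤ v := by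
    rcases Nat.eq_zero_or_pos v with h0 | h0
    · rw [h0] at h; simp at h
    · exact h0
  obtain ⟨w, rfl⟩ : ∃ w, v = w + 1 := ⟨v - 1, by omega⟩
  have hn : n = Wf b i * (w + 1) + u := hdm0.symm
  have hsub : n - Wf b i = Wf b i * w + u := by
    have hh : Wf b i * (w + 1) = Wf b i * w + Wf b i := by ring
    omega
  rw [hv]
  rcases lt_trichotomy m i with hmi | rfl | hmi
  · rw [if_neg (by omega), hsub, dg_low hb hmi]
    conv_rhs => rw [hn, dg_low hb hmi]
  · rw [if_pos rfl, hsub, dg_mid hb _ _ hu]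
    have hc : (w + 1) % b m < b m := Nat.mod_lt _ hbi
    have hc1 : 1 ≤ (w + 1) % b m := by omega
    have hdm := Nat.div_add_mod (w + 1) (b m)
    have hw : w = b m * ((w + 1) / b m) + ((w + 1) % b m - 1) := by omega
    conv_lhs => rw [hw]
    rw [Nat.mul_add_mod, Nat.mod_eq_of_lt (by omega)]
  · rw [if_neg (by omega), hsub, dg_high hb hmi _ _ hu]
    conv_rhs => rw [hn, dg_high hb hmi _ _ hu]
    congr 1
    have hres := pred_div (v := w + 1) (R := ∏ x ∈ Ico i m, b x)
      (dvd_prod_of_mem b (by simp [Finset.mem_Ico]; omega)) h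
    simpa using hres

lemma shift_up (hb : ∀ i, 1 ≤ b i) {i n : ℕ} (h : (n / Wf b i) % b i + 1 < b i) (m : ℕ) :
    ((n + Wf b i) / Wf b m) % b m =
      if m = i then (n / Wf b i) % b i + 1 else (n / Wf b m) % b m := by
  have hWi : 0 < Wf b i := Wf_pos hb i
  have hbi : 0 < b i := hb i
  obtain ⟨v, hv⟩ : ∃ v, n / Wf b i = v := ⟨_, rfl⟩
  obtain ⟨u, hu2⟩ : ∃ u, n % Wf b i = u := ⟨_, rfl⟩
  have hdm0 := Nat.div_add_mod n (Wf b i)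
  rw [hv, hu2] at hdm0
  have hu : u < Wf b i := hu2 ▸ Nat.mod_lt _ hWi
  rw [hv] at h
  have hn : n = Wf b i * v + u := hdm0.symm
  have hadd : n + Wf b i = Wf b i * (v + 1) + u := by
    have hh : Wf b i * (v + 1) = Wf b i * v + Wf b i := by ring
    omega
  rw [hv]
  rcases lt_trichotomy m i with hmi | rfl | hmi
  · rw [if_neg (by omega), hadd, dg_low hb hmi]
    conv_rhs => rw [hn, dg_low hb hmi]
  · rw [if_pos rfl, hadd, dg_mid hb _ _ hu]
    have hdm := Nat.div_add_mod v (b m)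
    have hmlt : v % b m < b m := Nat.mod_lt _ hbi
    have hw : v + 1 = b m * (v / b m) + (v % b m + 1) := by omega
    conv_lhs => rw [hw]
    rw [Nat.mul_add_mod, Nat.mod_eq_of_lt (by omega)]
  · rw [if_neg (by omega), hadd, dg_high hb hmi _ _ hu]
    conv_rhs => rw [hn, dg_high hb hmi _ _ hu]
    congr 1
    have h2 : (v + 1) % b i ≠ 0 := by
      have hdm := Nat.div_add_mod v (b i)
      have hw : v + 1 = b i * (v / b i) + (v % b i + 1) := by omega
      rw [hw, Nat.mul_add_mod, Nat.mod_eq_of_lt (by omega)]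
      omega
    have hres := pred_div (v := v + 1) (R := ∏ x ∈ Ico i m, b x)
      (dvd_prod_of_mem b (by simp [Finset.mem_Ico]; omega)) h2
    simpa using hres.symm


lemma dist1_char {d : ℕ} {x y : Fin d → ℤ} (h : dist1 x y = 1) :
    ∃ i : Fin d, y = Function.update x i (x i + 1) ∨ y = Function.update x i (x i - 1) := by
  classical
  have hex : ∃ i, (x i - y i).natAbs ≠ 0 := by
    by_contra hall
    push_neg at hall
    have h0 : dist1 x y = 0 := Finset.sum_eq_zero (fun i _ => hall i)
    omega
  obtain ⟨i, hi⟩ := hex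
  have hsplit : (x i - y i).natAbs + ∑ j ∈ univ.erase i, (x j - y j).natAbs = 1 := by
    have hsum : ∑ j, (x j - y j).natAbs = 1 := h
    rw [← Finset.add_sum_erase _ (fun j => (x j - y j).natAbs) (mem_univ i)] at hsum
    exact hsum
  have hrest : ∀ j ∈ univ.erase i, (x j - y j).natAbs = 0 := by
    rw [← Finset.sum_eq_zero_iff]
    omega
  have hagree : ∀ j : Fin d, j ≠ i → y j = x j := by
    intro j hj
    have := hrest j (Finset.mem_erase.2 ⟨hj, mem_univ j⟩)
    omega
  have h1 : (x i - y i).natAbs = 1 := by omega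
  refine ⟨i, ?_⟩
  have : y i = x i + 1 ∨ y i = x i - 1 := by omega
  rcases this with hc | hc
  · left
    funext j
    by_cases hj : j = i
    · subst hj; rw [Function.update_self]; exact hc
    · rw [Function.update_of_ne hj]; exact hagree j hj
  · right
    funext j
    by_cases hj : j = i
    · subst hj; rw [Function.update_self]; exact hc
    · rw [Function.update_of_ne hj]; exact hagree j hj

/-- geometric-type sum bound -/
lemma sumW (W : ℕ → ℕ) (hW0 : W 0 = 1) :
    ∀ m, (∀ i < m, 2 * W i ≤ W (i+1)) → (∑ i ∈ range (m+1), W i) + 1 ≤ 2 * W m := by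
  intro m
  induction m with
  | zero => intro _; simp [hW0]
  | succ m ih =>
    intro hyp
    rw [sum_range_succ]
    have h1 := ih (fun i hi => hyp i (by omega))
    have h2 := hyp m (by omega)
    omega

lemma rpow_le_aux {N d : ℕ} (hN : 1 ≤ N) (hd : 1 ≤ d) {k : ℕ} (h : N ≤ k ^ d) :
    (N : ℝ) ≤ (k : ℝ) * (N : ℝ) ^ ((1:ℝ) - 1/(d:ℝ)) := by
  have hD : (0:ℝ) < (d:ℝ) := by exact_mod_cast hd
  have hNpos : (0:ℝ) < (N:ℝ) := by exact_mod_cast hN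
  have h1 : (N : ℝ) ^ ((1:ℝ)/(d:ℝ)) ≤ (k : ℝ) := by
    have hk : ((N:ℝ)) ≤ ((k:ℝ)) ^ (d:ℕ) := by exact_mod_cast h
    have := Real.rpow_le_rpow (le_of_lt hNpos) hk (by positivity : (0:ℝ) ≤ 1/(d:ℝ))
    rwa [← Real.rpow_natCast (k:ℝ) d, ← Real.rpow_mul (by positivity),
      mul_one_div, div_self (ne_of_gt hD), Real.rpow_one] at this
  have h2 : (N : ℝ) = (N:ℝ) ^ ((1:ℝ)/(d:ℝ)) * (N:ℝ) ^ ((1:ℝ) - 1/(d:ℝ)) := by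
    rw [← Real.rpow_add hNpos]
    norm_num
  calc (N:ℝ) = (N:ℝ) ^ ((1:ℝ)/(d:ℝ)) * (N:ℝ) ^ ((1:ℝ) - 1/(d:ℝ)) := h2
    _ ≤ (k : ℝ) * (N : ℝ) ^ ((1:ℝ) - 1/(d:ℝ)) :=
        mul_le_mul_of_nonneg_right h1 (Real.rpow_nonneg (le_of_lt hNpos) _)

lemma rpow_ge_aux {V N d : ℕ} (hN : 1 ≤ N) (hd : 1 ≤ d) (h : V ^ d ≤ N ^ (d-1)) :
    (V : ℝ) ≤ (N : ℝ) ^ ((1:ℝ) - 1/(d:ℝ)) := by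
  have hD : (0:ℝ) < (d:ℝ) := by exact_mod_cast hd
  have hVc : ((V:ℝ)) ^ (d:ℕ) ≤ ((N:ℝ)) ^ ((d-1 : ℕ)) := by exact_mod_cast h
  have h1 := Real.rpow_le_rpow (by positivity) hVc (by positivity : (0:ℝ) ≤ 1/(d:ℝ))
  rw [← Real.rpow_natCast (V:ℝ) d, ← Real.rpow_mul (by positivity),
    mul_one_div, div_self (ne_of_gt hD), Real.rpow_one,
    ← Real.rpow_natCast (N:ℝ) (d-1), ← Real.rpow_mul (by positivity)] at h1
  have hcast : ((d - 1 : ℕ) : ℝ) = (d:ℝ) - 1 := by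
    have : (1:ℕ) ≤ d := hd
    push_cast [Nat.cast_sub this]
    ring
  rw [hcast] at h1
  have hexp : ((d:ℝ) - 1) * (1/(d:ℝ)) = 1 - 1/(d:ℝ) := by
    field_simp
  rwa [hexp] at h1

lemma one_le_M {N d : ℕ} (hN : 1 ≤ N) (hd : 1 ≤ d) :
    (1:ℝ) ≤ (N : ℝ) ^ ((1:ℝ) - 1/(d:ℝ)) := by
  apply Real.one_le_rpow (by exact_mod_cast hN)
  have hD : (1:ℝ) ≤ (d:ℝ) := by exact_mod_cast hd
  have : 1/(d:ℝ) ≤ 1 := by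
    rw [div_le_one (by linarith)]; exact hD
  linarith


lemma master (d N : ℕ) (b : ℕ → ℕ) (hb : ∀ i, 1 ≤ b i) (hN : 1 ≤ N)
    (hNW : N ≤ Wf b d) :
    ∃ A : Finset (Fin d → ℤ), A.card = N ∧
      bdry (↑A : Set (Fin d → ℤ)) ≤
        ∑ i ∈ range d, 2 * min (N / (Wf b i * b i) * Wf b i + Wf b i) N := by
  classical
  set ψ : ℕ → (Fin d → ℤ) := fun n j => (((n / Wf b j.val) % b j.val : ℕ) : ℤ) with hψ
  have hinj : Set.InjOn ψ ↑(range N) := by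
    intro m hm n hn he
    simp only [Finset.coe_range, Set.mem_Iio] at hm hn
    have hdig : ∀ i ∈ range d, Wf b i * ((m / Wf b i) % b i) = Wf b i * ((n / Wf b i) % b i) := by
      intro i hi
      have hiv : i < d := mem_range.1 hi
      have hcf := congrFun he ⟨i, hiv⟩
      simp only [hψ] at hcf
      have : ((m / Wf b i) % b i) = ((n / Wf b i) % b i) := by exact_mod_cast hcf
      rw [this]
    have h1 := key_id b d m
    have h2 := key_id b d n
    rw [Finset.sum_congr rfl hdig, h2] at h1
    rw [Nat.mod_eq_of_lt (lt_of_lt_of_le hm hNW), Nat.mod_eq_of_lt (lt_of_lt_of_le hn hNW)] at h1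
    omega
  set A : Finset (Fin d → ℤ) := (range N).image ψ with hA
  have hcard : A.card = N := by rw [hA, Finset.card_image_of_injOn hinj, card_range]
  refine ⟨A, hcard, ?_⟩
  set mv : (Fin d × Bool) × (Fin d → ℤ) → (Fin d → ℤ) := fun z =>
    Function.update z.2 z.1.1 (z.2 z.1.1 + if z.1.2 = true then 1 else -1) with hmv
  set T : Finset ((Fin d × Bool) × (Fin d → ℤ)) :=
    ((univ : Finset (Fin d × Bool)) ×ˢ A).filter (fun z => mv z ∉ A) with hT
  have hbT : bdry (↑A : Set (Fin d → ℤ)) ≤ T.card := by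
    have hsub : {p : (Fin d → ℤ) × (Fin d → ℤ) |
        p.1 ∈ (↑A : Set (Fin d → ℤ)) ∧ p.2 ∉ (↑A : Set (Fin d → ℤ)) ∧ dist1 p.1 p.2 = 1}
        ⊆ (fun z => (z.2, mv z)) '' ↑T := by
      rintro ⟨x, y⟩ ⟨hx, hy, hdist⟩
      have hx' : x ∈ A := hx
      have hy' : y ∉ A := fun hmem => hy hmem
      obtain ⟨i, hcase⟩ := dist1_char hdist
      rcases hcase with hc0 | hc0
      · have hc : y = Function.update x i (x i + 1) := hc0
        have hmveq : mv ((i, true), x) = y := by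
          simp only [hmv, if_pos rfl]
          exact hc.symm
        refine ⟨((i, true), x), ?_, ?_⟩
        · rw [Finset.mem_coe, hT, Finset.mem_filter]
          exact ⟨Finset.mem_product.2 ⟨Finset.mem_univ _, hx'⟩, by rw [hmveq]; exact hy'⟩
        · show (x, mv ((i, true), x)) = (x, y)
          rw [hmveq]
      · have hc : y = Function.update x i (x i - 1) := hc0
        have hmveq : mv ((i, false), x) = y := by
          simp only [hmv]
          norm_num
          rw [hc]
          funext j
          by_cases hj : j = i
          · subst hj; simp; ring
          · simp [Function.update_of_ne hj]
        refine ⟨((i, false), x), ?_, ?_⟩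
        · rw [Finset.mem_coe, hT, Finset.mem_filter]
          exact ⟨Finset.mem_product.2 ⟨Finset.mem_univ _, hx'⟩, by rw [hmveq]; exact hy'⟩
        · show (x, mv ((i, false), x)) = (x, y)
          rw [hmveq]
    calc bdry (↑A : Set (Fin d → ℤ))
        ≤ ((fun z => (z.2, mv z)) '' ↑T).ncard :=
          Set.ncard_le_ncard hsub (T.finite_toSet.image _)
      _ ≤ (↑T : Set ((Fin d × Bool) × (Fin d → ℤ))).ncard := Set.ncard_image_le T.finite_toSet
      _ = T.card := Set.ncard_coe_finset T
  have hb2 : T.card = ∑ z ∈ (univ : Finset (Fin d × Bool)),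
      (A.filter (fun x => mv (z, x) ∉ A)).card := by
    rw [hT, Finset.card_filter, Finset.sum_product]
    refine Finset.sum_congr rfl (fun z _ => ?_)
    rw [Finset.card_filter]
  -- per (i, s) counting
  have hmain : ∀ i : Fin d,
      (A.filter (fun x => mv ((i, true), x) ∉ A)).card
      + (A.filter (fun x => mv ((i, false), x) ∉ A)).card
      ≤ 2 * min (N / (Wf b (i:ℕ) * b (i:ℕ)) * Wf b (i:ℕ) + Wf b (i:ℕ)) N := by
    intro i
    have hWi : 0 < Wf b (i:ℕ) := Wf_pos hb (i:ℕ)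
    have hBi : 1 ≤ b (i:ℕ) := hb (i:ℕ)
    have hP : 0 < Wf b (i:ℕ) * b (i:ℕ) := by positivity
    have hdigP : ∀ n : ℕ, (n / Wf b (i:ℕ)) % b (i:ℕ) = n % (Wf b (i:ℕ) * b (i:ℕ)) / Wf b (i:ℕ) := by
      intro n
      conv_lhs => rw [← Nat.div_add_mod n (Wf b (i:ℕ) * b (i:ℕ))]
      rw [mul_assoc, Nat.mul_add_div hWi, Nat.mul_add_mod]
      have hh : n % (Wf b (i:ℕ) * b (i:ℕ)) / Wf b (i:ℕ) < b (i:ℕ) := by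
        rw [Nat.div_lt_iff_lt_mul hWi]
        exact lt_of_lt_of_le (Nat.mod_lt _ hP) (le_of_eq (mul_comm _ _))
      rw [Nat.mod_eq_of_lt hh]
    have hfilt : ∀ s : Bool, (A.filter (fun x => mv ((i, s), x) ∉ A)).card
        = ((range N).filter (fun n => mv ((i, s), ψ n) ∉ A)).card := by
      intro s
      rw [hA, Finset.filter_image]
      exact Finset.card_image_of_injOn (hinj.mono (by
        intro t ht
        simp only [Finset.coe_filter, Set.mem_setOf_eq] at ht
        simp only [Finset.mem_coe, Finset.mem_range, Finset.coe_range, Set.mem_Iio]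
        exact Finset.mem_range.1 ht.1))
    have hmvt : ∀ x : Fin d → ℤ, mv ((i, true), x) = Function.update x i (x i + (1:ℤ)) := by
      intro x; simp [hmv]
    have hmvf : ∀ x : Fin d → ℤ, mv ((i, false), x) = Function.update x i (x i + (-1:ℤ)) := by
      intro x; simp only [hmv]; norm_num
    have hdown : ∀ n : ℕ, (n / Wf b (i:ℕ)) % b (i:ℕ) ≠ 0 →
        Function.update (ψ n) i (ψ n i + (-1 : ℤ)) = ψ (n - Wf b (i:ℕ)) := by
      intro n hdg
      funext m
      rcases eq_or_ne m i with hm | hm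
      · subst hm
        rw [Function.update_self]
        have hsd := shift_down hb hdg (m:ℕ)
        rw [if_pos rfl] at hsd
        simp only [hψ]
        rw [hsd]
        have h1 : 1 ≤ (n / Wf b (m:ℕ)) % b (m:ℕ) := Nat.one_le_iff_ne_zero.2 hdg
        omega
      · rw [Function.update_of_ne hm]
        have hsd := shift_down hb hdg (m:ℕ)
        rw [if_neg (fun hh => hm (Fin.ext hh))] at hsd
        simp only [hψ]
        rw [hsd]
    have hup2 : ∀ n : ℕ, (n / Wf b (i:ℕ)) % b (i:ℕ) + 1 < b (i:ℕ) →
        Function.update (ψ n) i (ψ n i + (1 : ℤ)) = ψ (n + Wf b (i:ℕ)) := by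
      intro n hdg
      funext m
      rcases eq_or_ne m i with hm | hm
      · subst hm
        rw [Function.update_self]
        have hsd := shift_up hb hdg (m:ℕ)
        rw [if_pos rfl] at hsd
        simp only [hψ]
        rw [hsd]
        push_cast
        ring
      · rw [Function.update_of_ne hm]
        have hsd := shift_up hb hdg (m:ℕ)
        rw [if_neg (fun hh => hm (Fin.ext hh))] at hsd
        simp only [hψ]
        rw [hsd]
    have hBW : (b (i:ℕ) - 1) * Wf b (i:ℕ) + Wf b (i:ℕ) = Wf b (i:ℕ) * b (i:ℕ) := by
      obtain ⟨t, ht⟩ : ∃ t, b (i:ℕ) = t + 1 := ⟨b (i:ℕ) - 1, by omega⟩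
      rw [ht]
      have h2 : (t + 1) - 1 = t := rfl
      rw [h2]
      ring
    -- minus-direction count
    have hminus : ((range N).filter (fun n => mv ((i, false), ψ n) ∉ A)).card
        ≤ N / (Wf b (i:ℕ) * b (i:ℕ)) * Wf b (i:ℕ) + Wf b (i:ℕ) := by
      have hsub1 : ((range N).filter (fun n => mv ((i, false), ψ n) ∉ A))
          ⊆ ((range N).filter (fun n => n % (Wf b (i:ℕ) * b (i:ℕ)) < Wf b (i:ℕ))) := by
        intro n hn
        rw [Finset.mem_filter] at hn ⊢
        refine ⟨hn.1, ?_⟩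
        by_contra hge
        push_neg at hge
        have hdg : (n / Wf b (i:ℕ)) % b (i:ℕ) ≠ 0 := by
          rw [hdigP n]
          have hone : 1 ≤ n % (Wf b (i:ℕ) * b (i:ℕ)) / Wf b (i:ℕ) := (Nat.one_le_div_iff hWi).2 hge
          omega
        apply hn.2
        rw [hmvf (ψ n), hdown n hdg, hA]
        exact Finset.mem_image_of_mem ψ (Finset.mem_range.2 (by
          have := Finset.mem_range.1 hn.1; omega))
      refine le_trans (Finset.card_le_card hsub1) ?_
      have := Finset.card_le_card_of_injOn
        (f := fun n => Wf b (i:ℕ) * (n / (Wf b (i:ℕ) * b (i:ℕ))) + n % (Wf b (i:ℕ) * b (i:ℕ)))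
        (s := (range N).filter (fun n => n % (Wf b (i:ℕ) * b (i:ℕ)) < Wf b (i:ℕ)))
        (t := range (N / (Wf b (i:ℕ) * b (i:ℕ)) * Wf b (i:ℕ) + Wf b (i:ℕ)))
        ?_ ?_
      · simpa using this
      · intro n hn
        rw [Finset.mem_coe, Finset.mem_filter, Finset.mem_range] at hn
        rw [Finset.mem_coe, Finset.mem_range]
        dsimp only
        have h1 : n / (Wf b (i:ℕ) * b (i:ℕ)) ≤ N / (Wf b (i:ℕ) * b (i:ℕ)) :=
          Nat.div_le_div_right (le_of_lt hn.1)
        have h2 : Wf b (i:ℕ) * (n / (Wf b (i:ℕ) * b (i:ℕ)))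
            ≤ Wf b (i:ℕ) * (N / (Wf b (i:ℕ) * b (i:ℕ))) := Nat.mul_le_mul_left _ h1
        have h3 : Wf b (i:ℕ) * (N / (Wf b (i:ℕ) * b (i:ℕ)))
            = N / (Wf b (i:ℕ) * b (i:ℕ)) * Wf b (i:ℕ) := mul_comm _ _
        omega
      · intro n hn n' hn' he
        simp only [Finset.coe_filter, Set.mem_setOf_eq, Finset.mem_range] at hn hn'
        dsimp only at he
        have d1 : (Wf b (i:ℕ) * (n / (Wf b (i:ℕ) * b (i:ℕ))) + n % (Wf b (i:ℕ) * b (i:ℕ))) / Wf b (i:ℕ)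
            = n / (Wf b (i:ℕ) * b (i:ℕ)) := by
          rw [Nat.mul_add_div hWi, Nat.div_eq_of_lt hn.2, Nat.add_zero]
        have d2 : (Wf b (i:ℕ) * (n' / (Wf b (i:ℕ) * b (i:ℕ))) + n' % (Wf b (i:ℕ) * b (i:ℕ))) / Wf b (i:ℕ)
            = n' / (Wf b (i:ℕ) * b (i:ℕ)) := by
          rw [Nat.mul_add_div hWi, Nat.div_eq_of_lt hn'.2, Nat.add_zero]
        have m1 : (Wf b (i:ℕ) * (n / (Wf b (i:ℕ) * b (i:ℕ))) + n % (Wf b (i:ℕ) * b (i:ℕ))) % Wf b (i:ℕ)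
            = n % (Wf b (i:ℕ) * b (i:ℕ)) := by
          rw [Nat.mul_add_mod, Nat.mod_eq_of_lt hn.2]
        have m2 : (Wf b (i:ℕ) * (n' / (Wf b (i:ℕ) * b (i:ℕ))) + n' % (Wf b (i:ℕ) * b (i:ℕ))) % Wf b (i:ℕ)
            = n' % (Wf b (i:ℕ) * b (i:ℕ)) := by
          rw [Nat.mul_add_mod, Nat.mod_eq_of_lt hn'.2]
        have ed : n / (Wf b (i:ℕ) * b (i:ℕ)) = n' / (Wf b (i:ℕ) * b (i:ℕ)) := by
          rw [← d1, ← d2, he]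
        have em : n % (Wf b (i:ℕ) * b (i:ℕ)) = n' % (Wf b (i:ℕ) * b (i:ℕ)) := by
          rw [← m1, ← m2, he]
        have hd1 := Nat.div_add_mod n (Wf b (i:ℕ) * b (i:ℕ))
        have hd2 := Nat.div_add_mod n' (Wf b (i:ℕ) * b (i:ℕ))
        have hmm : (Wf b (i:ℕ) * b (i:ℕ)) * (n / (Wf b (i:ℕ) * b (i:ℕ)))
            = (Wf b (i:ℕ) * b (i:ℕ)) * (n' / (Wf b (i:ℕ) * b (i:ℕ))) := by rw [ed]
        omega
    -- plus-direction count
    have hplus : ((range N).filter (fun n => mv ((i, true), ψ n) ∉ A)).card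
        ≤ N / (Wf b (i:ℕ) * b (i:ℕ)) * Wf b (i:ℕ) + Wf b (i:ℕ) := by
      have hsub1 : ((range N).filter (fun n => mv ((i, true), ψ n) ∉ A))
          ⊆ ((range N).filter (fun n =>
              (n < N / (Wf b (i:ℕ) * b (i:ℕ)) * (Wf b (i:ℕ) * b (i:ℕ))
                ∧ (b (i:ℕ) - 1) * Wf b (i:ℕ) ≤ n % (Wf b (i:ℕ) * b (i:ℕ)))
              ∨ N ≤ n + Wf b (i:ℕ))) := by
        intro n hn
        rw [Finset.mem_filter] at hn ⊢
        refine ⟨hn.1, ?_⟩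
        by_contra hcon
        push_neg at hcon
        obtain ⟨hc1, hc2⟩ := hcon
        by_cases hsmall : n % (Wf b (i:ℕ) * b (i:ℕ)) < (b (i:ℕ) - 1) * Wf b (i:ℕ)
        · have hdg : (n / Wf b (i:ℕ)) % b (i:ℕ) + 1 < b (i:ℕ) := by
            rw [hdigP n]
            have hlt : n % (Wf b (i:ℕ) * b (i:ℕ)) / Wf b (i:ℕ) < b (i:ℕ) - 1 := by
              rw [Nat.div_lt_iff_lt_mul hWi]
              calc n % (Wf b (i:ℕ) * b (i:ℕ)) < (b (i:ℕ) - 1) * Wf b (i:ℕ) := hsmall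
                _ = (b (i:ℕ) - 1) * Wf b (i:ℕ) := rfl
            omega
          apply hn.2
          rw [hmvt (ψ n), hup2 n hdg, hA]
          exact Finset.mem_image_of_mem ψ (Finset.mem_range.2 (by
            have := Finset.mem_range.1 hn.1; omega))
        · push_neg at hsmall
          have hnqP : N / (Wf b (i:ℕ) * b (i:ℕ)) * (Wf b (i:ℕ) * b (i:ℕ)) ≤ n := by
            by_contra hlt
            push_neg at hlt
            exact absurd hsmall (by
              have := hc1 hlt
              omega)
          have hdmn := Nat.div_add_mod n (Wf b (i:ℕ) * b (i:ℕ))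
          have hdmN := Nat.div_add_mod N (Wf b (i:ℕ) * b (i:ℕ))
          have hnN : n < N := Finset.mem_range.1 hn.1
          have hq : n / (Wf b (i:ℕ) * b (i:ℕ)) = N / (Wf b (i:ℕ) * b (i:ℕ)) := by
            apply Nat.div_eq_of_lt_le
            · exact hnqP
            · have hmN : N % (Wf b (i:ℕ) * b (i:ℕ)) < Wf b (i:ℕ) * b (i:ℕ) := Nat.mod_lt _ hP
              have hexp : (N / (Wf b (i:ℕ) * b (i:ℕ)) + 1) * (Wf b (i:ℕ) * b (i:ℕ))
                  = (Wf b (i:ℕ) * b (i:ℕ)) * (N / (Wf b (i:ℕ) * b (i:ℕ))) + (Wf b (i:ℕ) * b (i:ℕ)) := by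
                ring
              omega
          rw [hq] at hdmn
          -- now n = P*qN + n%P, n%P ≥ (Bi-1)Wi, so n + Wi ≥ P*qN + P ≥ N, contradicting hc2
          have hmN : N % (Wf b (i:ℕ) * b (i:ℕ)) < Wf b (i:ℕ) * b (i:ℕ) := Nat.mod_lt _ hP
          omega
      refine le_trans (Finset.card_le_card hsub1) ?_
      rw [Finset.filter_or]
      refine le_trans (Finset.card_union_le _ _) ?_
      have hcA : ((range N).filter (fun n =>
          n < N / (Wf b (i:ℕ) * b (i:ℕ)) * (Wf b (i:ℕ) * b (i:ℕ))
            ∧ (b (i:ℕ) - 1) * Wf b (i:ℕ) ≤ n % (Wf b (i:ℕ) * b (i:ℕ)))).card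
          ≤ N / (Wf b (i:ℕ) * b (i:ℕ)) * Wf b (i:ℕ) := by
        have := Finset.card_le_card_of_injOn
          (f := fun n => Wf b (i:ℕ) * (n / (Wf b (i:ℕ) * b (i:ℕ)))
            + (n % (Wf b (i:ℕ) * b (i:ℕ)) - (b (i:ℕ) - 1) * Wf b (i:ℕ)))
          (s := (range N).filter (fun n =>
            n < N / (Wf b (i:ℕ) * b (i:ℕ)) * (Wf b (i:ℕ) * b (i:ℕ))
              ∧ (b (i:ℕ) - 1) * Wf b (i:ℕ) ≤ n % (Wf b (i:ℕ) * b (i:ℕ))))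
          (t := range (N / (Wf b (i:ℕ) * b (i:ℕ)) * Wf b (i:ℕ)))
          ?_ ?_
        · simpa using this
        · intro n hn
          simp only [Finset.mem_coe, Finset.mem_filter, Finset.mem_range] at hn
          rw [Finset.mem_coe, Finset.mem_range]
          dsimp only
          obtain ⟨hnN, hlt, hge⟩ := hn
          have h1 : n / (Wf b (i:ℕ) * b (i:ℕ)) < N / (Wf b (i:ℕ) * b (i:ℕ)) := by
            rw [Nat.div_lt_iff_lt_mul hP]
            exact lt_of_lt_of_le hlt (le_of_eq rfl)
          have h2 : Wf b (i:ℕ) * (n / (Wf b (i:ℕ) * b (i:ℕ))) + Wf b (i:ℕ)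
              ≤ Wf b (i:ℕ) * (N / (Wf b (i:ℕ) * b (i:ℕ))) := by
            have h4 : Wf b (i:ℕ) * (n / (Wf b (i:ℕ) * b (i:ℕ)) + 1)
                ≤ Wf b (i:ℕ) * (N / (Wf b (i:ℕ) * b (i:ℕ))) := Nat.mul_le_mul_left _ (by omega)
            have h5 : Wf b (i:ℕ) * (n / (Wf b (i:ℕ) * b (i:ℕ)) + 1)
                = Wf b (i:ℕ) * (n / (Wf b (i:ℕ) * b (i:ℕ))) + Wf b (i:ℕ) := by ring
            omega
          have hmlt : n % (Wf b (i:ℕ) * b (i:ℕ)) < Wf b (i:ℕ) * b (i:ℕ) := Nat.mod_lt _ hP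
          have h3 : Wf b (i:ℕ) * (N / (Wf b (i:ℕ) * b (i:ℕ)))
              = N / (Wf b (i:ℕ) * b (i:ℕ)) * Wf b (i:ℕ) := mul_comm _ _
          omega
        · intro n hn n' hn' he
          simp only [Finset.coe_filter, Set.mem_setOf_eq, Finset.mem_range] at hn hn'
          dsimp only at he
          obtain ⟨hnN, hlt, hge⟩ := hn
          obtain ⟨hnN', hlt', hge'⟩ := hn'
          have hmlt : n % (Wf b (i:ℕ) * b (i:ℕ)) < Wf b (i:ℕ) * b (i:ℕ) := Nat.mod_lt _ hP
          have hmlt' : n' % (Wf b (i:ℕ) * b (i:ℕ)) < Wf b (i:ℕ) * b (i:ℕ) := Nat.mod_lt _ hP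
          have hr : n % (Wf b (i:ℕ) * b (i:ℕ)) - (b (i:ℕ) - 1) * Wf b (i:ℕ) < Wf b (i:ℕ) := by omega
          have hr' : n' % (Wf b (i:ℕ) * b (i:ℕ)) - (b (i:ℕ) - 1) * Wf b (i:ℕ) < Wf b (i:ℕ) := by omega
          have d1 : (Wf b (i:ℕ) * (n / (Wf b (i:ℕ) * b (i:ℕ)))
              + (n % (Wf b (i:ℕ) * b (i:ℕ)) - (b (i:ℕ) - 1) * Wf b (i:ℕ))) / Wf b (i:ℕ)
              = n / (Wf b (i:ℕ) * b (i:ℕ)) := by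
            rw [Nat.mul_add_div hWi, Nat.div_eq_of_lt hr, Nat.add_zero]
          have d2 : (Wf b (i:ℕ) * (n' / (Wf b (i:ℕ) * b (i:ℕ)))
              + (n' % (Wf b (i:ℕ) * b (i:ℕ)) - (b (i:ℕ) - 1) * Wf b (i:ℕ))) / Wf b (i:ℕ)
              = n' / (Wf b (i:ℕ) * b (i:ℕ)) := by
            rw [Nat.mul_add_div hWi, Nat.div_eq_of_lt hr', Nat.add_zero]
          have m1 : (Wf b (i:ℕ) * (n / (Wf b (i:ℕ) * b (i:ℕ)))
              + (n % (Wf b (i:ℕ) * b (i:ℕ)) - (b (i:ℕ) - 1) * Wf b (i:ℕ))) % Wf b (i:ℕ)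
              = n % (Wf b (i:ℕ) * b (i:ℕ)) - (b (i:ℕ) - 1) * Wf b (i:ℕ) := by
            rw [Nat.mul_add_mod, Nat.mod_eq_of_lt hr]
          have m2 : (Wf b (i:ℕ) * (n' / (Wf b (i:ℕ) * b (i:ℕ)))
              + (n' % (Wf b (i:ℕ) * b (i:ℕ)) - (b (i:ℕ) - 1) * Wf b (i:ℕ))) % Wf b (i:ℕ)
              = n' % (Wf b (i:ℕ) * b (i:ℕ)) - (b (i:ℕ) - 1) * Wf b (i:ℕ) := by
            rw [Nat.mul_add_mod, Nat.mod_eq_of_lt hr']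
          have ed : n / (Wf b (i:ℕ) * b (i:ℕ)) = n' / (Wf b (i:ℕ) * b (i:ℕ)) := by
            rw [← d1, ← d2, he]
          have em : n % (Wf b (i:ℕ) * b (i:ℕ)) = n' % (Wf b (i:ℕ) * b (i:ℕ)) := by
            have := m2 ▸ m1 ▸ congrArg (· % Wf b (i:ℕ)) he
            omega
          have hd1 := Nat.div_add_mod n (Wf b (i:ℕ) * b (i:ℕ))
          have hd2 := Nat.div_add_mod n' (Wf b (i:ℕ) * b (i:ℕ))
          have hmm : (Wf b (i:ℕ) * b (i:ℕ)) * (n / (Wf b (i:ℕ) * b (i:ℕ)))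
              = (Wf b (i:ℕ) * b (i:ℕ)) * (n' / (Wf b (i:ℕ) * b (i:ℕ))) := by rw [ed]
          omega
      have hcB : ((range N).filter (fun n => N ≤ n + Wf b (i:ℕ))).card ≤ Wf b (i:ℕ) := by
        have hsubB : ((range N).filter (fun n => N ≤ n + Wf b (i:ℕ)))
            ⊆ Finset.Ico (N - Wf b (i:ℕ)) N := by
          intro n hn
          rw [Finset.mem_filter, Finset.mem_range] at hn
          exact Finset.mem_Ico.2 ⟨by omega, hn.1⟩
        refine le_trans (Finset.card_le_card hsubB) ?_
        rw [Nat.card_Ico]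
        omega
      omega
    -- combine
    have hN1 : ∀ s : Bool, ((range N).filter (fun n => mv ((i, s), ψ n) ∉ A)).card ≤ N := by
      intro s
      exact le_trans (Finset.card_filter_le _ _) (le_of_eq (card_range N))
    rw [hfilt true, hfilt false]
    have ht := hN1 true
    have hf := hN1 false
    rcases le_total (N / (Wf b (i:ℕ) * b (i:ℕ)) * Wf b (i:ℕ) + Wf b (i:ℕ)) N with hmn | hmn
    · rw [min_eq_left hmn]; omega
    · rw [min_eq_right hmn]; omega
  calc bdry (↑A : Set (Fin d → ℤ)) ≤ T.card := hbT
    _ = ∑ z ∈ (univ : Finset (Fin d × Bool)), (A.filter (fun x => mv (z, x) ∉ A)).card := hb2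
    _ = ∑ i : Fin d, ((A.filter (fun x => mv ((i, true), x) ∉ A)).card
        + (A.filter (fun x => mv ((i, false), x) ∉ A)).card) := by
        rw [Fintype.sum_prod_type]
        exact Finset.sum_congr rfl (fun i _ => by rw [Fintype.sum_bool])
    _ ≤ ∑ i : Fin d, 2 * min (N / (Wf b (i:ℕ) * b (i:ℕ)) * Wf b (i:ℕ) + Wf b (i:ℕ)) N :=
        Finset.sum_le_sum (fun i _ => hmain i)
    _ = ∑ i ∈ range d, 2 * min (N / (Wf b i * b i) * Wf b i + Wf b i) N :=
        Fin.sum_univ_eq_sum_range (fun j => 2 * min (N / (Wf b j * b j) * Wf b j + Wf b j) N) d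


end Iso

set_option maxHeartbeats 4000000 in
/-- For every `d ≥ 1` and `N ≥ 1` there is a finite `A ⊆ ℤ^d` with `|A| = N` and
`B(A) ≤ 4d · N^{1 - 1/d}` (real power). -/
theorem stmt11 (d N : ℕ) (hd : 1 ≤ d) (hN : 1 ≤ N) :
    ∃ A : Finset (Fin d → ℤ), A.card = N ∧
      (bdry (↑A : Set (Fin d → ℤ)) : ℝ) ≤ 4 * d * (N : ℝ) ^ ((1:ℝ) - 1/(d:ℝ)) := by
  open Iso Finset in
  by_cases hd1 : d = 1
  · -- one-dimensional case
    subst hd1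
    obtain ⟨A, hcard, hbd⟩ := master 1 N (fun _ => N + 1) (fun _ => by simp) hN
      (by simp [Wf])
    refine ⟨A, hcard, ?_⟩
    have hsum : ∑ i ∈ range 1, 2 * min (N / (Wf (fun _ => N+1) i * (N+1))
        * Wf (fun _ => N+1) i + Wf (fun _ => N+1) i) N ≤ 2 := by
      rw [Finset.sum_range_one]
      have h0 : Wf (fun _ => N+1) 0 = 1 := by simp [Wf]
      rw [h0]
      have : N / (1 * (N + 1)) = 0 := Nat.div_eq_of_lt (by omega)
      rw [this]
      have hm1 : min (0 * 1 + 1) N = 1 := by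
        rw [show 0 * 1 + 1 = 1 by ring]
        exact min_eq_left hN
      omega
    have hbd2 : bdry (↑A : Set (Fin 1 → ℤ)) ≤ 2 := le_trans hbd hsum
    have : ((1:ℕ):ℝ) = 1 := by norm_num
    rw [show ((1:ℝ) - 1/((1:ℕ):ℝ)) = 0 by norm_num, Real.rpow_zero]
    have : (bdry (↑A : Set (Fin 1 → ℤ)) : ℝ) ≤ 2 := by exact_mod_cast hbd2
    norm_num
    linarith
  · have hd2 : 2 ≤ d := by omega
    by_cases hsmall : N ≤ 2 ^ d
    · -- small case: any set, trivial bound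
      obtain ⟨A, hcard, hbd⟩ := master d N (fun _ => 2) (fun _ => by simp) hN
        (by simp [Wf]; exact hsmall)
      refine ⟨A, hcard, ?_⟩
      have hsum : ∑ i ∈ range d, 2 * min (N / (Wf (fun _ => 2) i * 2)
          * Wf (fun _ => 2) i + Wf (fun _ => 2) i) N ≤ d * (2 * N) := by
        calc ∑ i ∈ range d, 2 * min (N / (Wf (fun _ => 2) i * 2)
              * Wf (fun _ => 2) i + Wf (fun _ => 2) i) N
            ≤ ∑ i ∈ range d, 2 * N := by
              refine Finset.sum_le_sum (fun i _ => ?_)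
              have := min_le_right (N / (Wf (fun _ => 2) i * 2) * Wf (fun _ => 2) i
                + Wf (fun _ => 2) i) N
              omega
          _ = d * (2 * N) := by rw [Finset.sum_const, card_range, smul_eq_mul]
      have hbd2 : bdry (↑A : Set (Fin d → ℤ)) ≤ d * (2 * N) := le_trans hbd hsum
      have hNM : (N:ℝ) ≤ 2 * (N : ℝ) ^ ((1:ℝ) - 1/(d:ℝ)) := rpow_le_aux hN hd hsmall
      have hc : (bdry (↑A : Set (Fin d → ℤ)) : ℝ) ≤ (d:ℝ) * (2 * N) := by exact_mod_cast hbd2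
      have hdpos : (0:ℝ) ≤ (d:ℝ) := by positivity
      calc (bdry (↑A : Set (Fin d → ℤ)) : ℝ) ≤ (d:ℝ) * (2 * N) := hc
        _ ≤ (d:ℝ) * (2 * (2 * (N : ℝ) ^ ((1:ℝ) - 1/(d:ℝ)))) := by
            apply mul_le_mul_of_nonneg_left _ hdpos
            linarith
        _ = 4 * d * (N : ℝ) ^ ((1:ℝ) - 1/(d:ℝ)) := by ring
    · -- main case
      push_neg at hsmall
      have hkex : ∃ m, N ≤ m ^ d := ⟨N, Nat.le_self_pow (by omega) N⟩
      obtain ⟨k, hkspec, hkmin⟩ : ∃ k, N ≤ k ^ d ∧ ∀ m < k, ¬ N ≤ m ^ d :=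
        ⟨Nat.find hkex, Nat.find_spec hkex, fun m hm => Nat.find_min hkex hm⟩
      have hk3 : 3 ≤ k := by
        by_contra hlt
        push_neg at hlt
        have : N ≤ 2 ^ d := le_trans hkspec (Nat.pow_le_pow_left (by omega) d)
        omega
      have hkprev : (k-1) ^ d < N := by
        have hkpos : 0 < k := by omega
        have := hkmin (k - 1) (by omega)
        omega
      obtain ⟨W, hWdef⟩ : ∃ W, W = (k-1)^(d-2) * k := ⟨_, rfl⟩
      have hWpos : 0 < W := by
        rw [hWdef]
        have h1 : 0 < k - 1 := by omega
        exact Nat.mul_pos (Nat.pow_pos h1) (by omega)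
      obtain ⟨hh, hhdef⟩ : ∃ hh, hh = N / W + 1 := ⟨_, rfl⟩
      have hNWh : N < W * hh := by
        have h1 := Nat.div_add_mod N W
        have h2 : N % W < W := Nat.mod_lt _ hWpos
        have h3 : W * hh = W * (N / W) + W := by rw [hhdef]; ring
        omega
      obtain ⟨bf, hbfdef⟩ : ∃ bf : ℕ → ℕ,
          bf = fun i => if i < d - 2 then k - 1 else if i < d - 1 then k else hh := ⟨_, rfl⟩
      have hh1 : 1 ≤ hh := hhdef ▸ Nat.le_add_left 1 (N / W)
      have hb : ∀ i, 1 ≤ bf i := by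
        intro i
        simp only [hbfdef]
        split_ifs <;> omega
      have hWd2 : Wf bf (d-2) = (k-1)^(d-2) := by
        rw [Wf]
        calc ∏ t ∈ range (d-2), bf t = ∏ t ∈ range (d-2), (k-1) :=
              Finset.prod_congr rfl (fun t ht => by
                simp only [hbfdef]
                rw [if_pos (Finset.mem_range.1 ht)])
          _ = (k-1)^(d-2) := by rw [Finset.prod_const, card_range]
      have hWd1 : Wf bf (d-1) = W := by
        have he : d - 1 = (d-2) + 1 := by omega
        rw [he, Wf_succ, hWd2]
        have h2 : bf (d-2) = k := by
          simp only [hbfdef]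
          rw [if_neg (by omega), if_pos (by omega)]
        rw [h2]
        exact hWdef.symm
      have hWdd : Wf bf d = W * hh := by
        have he : d = (d-1) + 1 := by omega
        conv_lhs => rw [he]
        rw [Wf_succ, hWd1]
        have h2 : bf (d-1) = hh := by
          simp only [hbfdef]
          rw [if_neg (by omega), if_neg (by omega)]
        rw [h2]
      obtain ⟨A, hcard, hbd⟩ := master d N bf hb hN (by rw [hWdd]; omega)
      refine ⟨A, hcard, ?_⟩
      -- ℕ-level sum bound
      have hqtop : N / (Wf bf (d-1) * bf (d-1)) = 0 := by
        apply Nat.div_eq_of_lt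
        rw [hWd1]
        have h2 : bf (d-1) = hh := by
          simp only [hbfdef]
          rw [if_neg (by omega), if_neg (by omega)]
        rw [h2]
        exact hNWh
      have hSn : ∑ i ∈ range d, 2 * min (N / (Wf bf i * bf i) * Wf bf i + Wf bf i) N
          ≤ 2 * (∑ i ∈ range (d-1), N / (Wf bf i * bf i) * Wf bf i)
            + 2 * (∑ i ∈ range d, Wf bf i) := by
        have step1 : ∑ i ∈ range d, 2 * min (N / (Wf bf i * bf i) * Wf bf i + Wf bf i) N
            ≤ ∑ i ∈ range d, (2 * (N / (Wf bf i * bf i) * Wf bf i) + 2 * Wf bf i) := by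
          refine Finset.sum_le_sum (fun i _ => ?_)
          have := min_le_left (N / (Wf bf i * bf i) * Wf bf i + Wf bf i) N
          omega
        refine le_trans step1 ?_
        rw [Finset.sum_add_distrib, ← Finset.mul_sum, ← Finset.mul_sum]
        have step2 : ∑ i ∈ range d, N / (Wf bf i * bf i) * Wf bf i
            = ∑ i ∈ range (d-1), N / (Wf bf i * bf i) * Wf bf i := by
          have he : d = (d-1) + 1 := by omega
          conv_lhs => rw [he]
          rw [Finset.sum_range_succ, hqtop]
          simp
        rw [step2]
      have hSw : (∑ i ∈ range d, Wf bf i) + 1 ≤ 2 * W := by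
        have he : d = (d-1) + 1 := by omega
        rw [← hWd1]
        conv_lhs => rw [he]
        refine sumW (Wf bf) (by simp [Wf]) (d-1) (fun i hi => ?_)
        rw [Wf_succ]
        have hbf2 : 2 ≤ bf i := by
          simp only [hbfdef]
          split_ifs <;> omega
        calc 2 * Wf bf i = Wf bf i * 2 := mul_comm _ _
          _ ≤ Wf bf i * bf i := Nat.mul_le_mul_left _ hbf2
      -- per-term ℕ bounds for lower coordinates
      have hq1 : ∀ i < d - 2, (N / (Wf bf i * bf i) * Wf bf i) * (k - 1) ≤ N := by
        intro i hi
        have hbfi : bf i = k - 1 := by simp only [hbfdef]; rw [if_pos hi]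
        have h1 := Nat.div_mul_le_self N (Wf bf i * bf i)
        calc (N / (Wf bf i * bf i) * Wf bf i) * (k - 1)
            = N / (Wf bf i * bf i) * (Wf bf i * bf i) := by rw [hbfi, mul_assoc]
          _ ≤ N := h1
      have hq2 : (N / (Wf bf (d-2) * bf (d-2)) * Wf bf (d-2)) * k ≤ N := by
        have hbfi : bf (d-2) = k := by
          simp only [hbfdef]; rw [if_neg (by omega), if_pos (by omega)]
        have h1 := Nat.div_mul_le_self N (Wf bf (d-2) * bf (d-2))
        calc (N / (Wf bf (d-2) * bf (d-2)) * Wf bf (d-2)) * k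
            = N / (Wf bf (d-2) * bf (d-2)) * (Wf bf (d-2) * bf (d-2)) := by
              rw [hbfi, mul_assoc]
          _ ≤ N := h1
      -- move to ℝ
      obtain ⟨K, hKdef⟩ : ∃ K : ℝ, K = (k : ℝ) := ⟨_, rfl⟩
      obtain ⟨D, hDdef⟩ : ∃ D : ℝ, D = (d : ℝ) := ⟨_, rfl⟩
      obtain ⟨M, hMdef⟩ : ∃ M : ℝ, M = (N : ℝ) ^ ((1:ℝ) - 1/(d:ℝ)) := ⟨_, rfl⟩
      have hKR : (3:ℝ) ≤ K := by rw [hKdef]; exact_mod_cast hk3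
      have hDR : (2:ℝ) ≤ D := by rw [hDdef]; exact_mod_cast hd2
      have hM1 : (1:ℝ) ≤ M := by rw [hMdef]; exact one_le_M hN hd
      have hNK : (N:ℝ) ≤ K * M := by rw [hKdef, hMdef]; exact rpow_le_aux hN hd hkspec
      have hVM : (((k-1)^(d-1) : ℕ) : ℝ) ≤ M := by
        rw [hMdef]
        refine rpow_ge_aux hN hd ?_
        rw [← pow_mul, mul_comm (d-1) d, pow_mul]
        exact Nat.pow_le_pow_left (le_of_lt hkprev) (d-1)
      have hkcast : ((k - 1 : ℕ) : ℝ) = K - 1 := by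
        rw [Nat.cast_sub (by omega : 1 ≤ k), hKdef]
        norm_num
      have hWKeq : (W:ℝ) * (K - 1) = K * (((k-1)^(d-1) : ℕ) : ℝ) := by
        have hnat : W * (k-1) = k * (k-1)^(d-1) := by
          rw [hWdef]
          have he : d - 1 = (d-2) + 1 := by omega
          rw [he, pow_succ]
          ring
        calc (W:ℝ) * (K - 1) = (W:ℝ) * ((k - 1 : ℕ) : ℝ) := by rw [hkcast]
          _ = ((W * (k-1) : ℕ) : ℝ) := by rw [Nat.cast_mul]
          _ = ((k * (k-1)^(d-1) : ℕ) : ℝ) := by rw [hnat]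
          _ = K * (((k-1)^(d-1) : ℕ) : ℝ) := by rw [Nat.cast_mul, hKdef]
      have hWle : (W:ℝ) * (K - 1) ≤ K * M := by
        rw [hWKeq]
        exact mul_le_mul_of_nonneg_left hVM (by positivity)
      -- X bound
      obtain ⟨Xn, hXndef⟩ : ∃ Xn : ℝ,
          Xn = ∑ i ∈ range (d-1), ((N / (Wf bf i * bf i) * Wf bf i : ℕ) : ℝ) := ⟨_, rfl⟩
      have hXn0 : 0 ≤ Xn := by
        rw [hXndef]
        exact Finset.sum_nonneg (fun i _ => by positivity)
      have hXnb : Xn * (K * (K - 1)) ≤ (D - 2) * ((N:ℝ) * K) + (N:ℝ) * (K - 1) := by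
        rw [hXndef]
        have he : d - 1 = (d-2) + 1 := by omega
        rw [he, Finset.sum_range_succ, add_mul]
        have hpart1 : (∑ i ∈ range (d-2), ((N / (Wf bf i * bf i) * Wf bf i : ℕ) : ℝ))
            * (K * (K - 1)) ≤ (D - 2) * ((N:ℝ) * K) := by
          rw [Finset.sum_mul]
          have hd2cast : ((d - 2 : ℕ) : ℝ) = D - 2 := by
            rw [Nat.cast_sub (by omega : 2 ≤ d), hDdef]
            norm_num
          calc ∑ i ∈ range (d-2), ((N / (Wf bf i * bf i) * Wf bf i : ℕ) : ℝ) * (K * (K-1))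
              ≤ ∑ i ∈ range (d-2), (N:ℝ) * K := by
                refine Finset.sum_le_sum (fun i hi => ?_)
                have h1 : ((N / (Wf bf i * bf i) * Wf bf i : ℕ) : ℝ) * (K - 1) ≤ (N:ℝ) := by
                  rw [← hkcast]
                  exact_mod_cast hq1 i (Finset.mem_range.1 hi)
                nlinarith [mul_le_mul_of_nonneg_right h1 (show (0:ℝ) ≤ K by linarith),
                  (show (0:ℝ) ≤ ((N / (Wf bf i * bf i) * Wf bf i : ℕ) : ℝ) from Nat.cast_nonneg _), hKR]
              _ = (D - 2) * ((N:ℝ) * K) := by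
                rw [Finset.sum_const, card_range, nsmul_eq_mul, hd2cast]
        have hpart2 : ((N / (Wf bf (d-2) * bf (d-2)) * Wf bf (d-2) : ℕ) : ℝ) * (K * (K-1))
            ≤ (N:ℝ) * (K - 1) := by
          have h1 : ((N / (Wf bf (d-2) * bf (d-2)) * Wf bf (d-2) : ℕ) : ℝ) * K ≤ (N:ℝ) := by
            rw [hKdef]
            exact_mod_cast hq2
          nlinarith [mul_le_mul_of_nonneg_right h1 (show (0:ℝ) ≤ K - 1 by linarith),
            (show (0:ℝ) ≤ ((N / (Wf bf (d-2) * bf (d-2)) * Wf bf (d-2) : ℕ) : ℝ) from Nat.cast_nonneg _), hKR]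
        linarith
      -- assemble
      have hSwR : ((∑ i ∈ range d, Wf bf i : ℕ) : ℝ) ≤ 2 * (W:ℝ) - 1 := by
        have := hSw
        have hc : ((∑ i ∈ range d, Wf bf i : ℕ) : ℝ) + 1 ≤ 2 * (W:ℝ) := by exact_mod_cast this
        linarith
      have hbdR : (bdry (↑A : Set (Fin d → ℤ)) : ℝ) ≤ 2 * Xn + (4 * (W:ℝ) - 2) := by
        have h1 : (bdry (↑A : Set (Fin d → ℤ)) : ℝ)
            ≤ ((2 * (∑ i ∈ range (d-1), N / (Wf bf i * bf i) * Wf bf i)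
              + 2 * (∑ i ∈ range d, Wf bf i) : ℕ) : ℝ) := by
          exact_mod_cast le_trans hbd hSn
        have h2 : ((2 * (∑ i ∈ range (d-1), N / (Wf bf i * bf i) * Wf bf i)
              + 2 * (∑ i ∈ range d, Wf bf i) : ℕ) : ℝ)
            = 2 * Xn + 2 * ((∑ i ∈ range d, Wf bf i : ℕ) : ℝ) := by
          push_cast [hXndef]
          ring
        rw [h2] at h1
        linarith
      -- final inequality
      have hKK : (0:ℝ) < K * (K - 1) := by nlinarith
      have hfact : (1:ℝ) ≤ (D - 1) * (K - 2) := by nlinarith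
      have hW1 : (1:ℝ) ≤ (W:ℝ) := by exact_mod_cast hWpos
      have hfin : 2 * Xn + (4 * (W:ℝ) - 2) ≤ 4 * D * M := by
        have hmul : (2 * Xn + (4 * (W:ℝ) - 2)) * (K * (K - 1))
            ≤ (4 * D * M) * (K * (K - 1)) := by
          have c2 : 2 * (D - 2) * ((N:ℝ) * K) ≤ 2 * (D - 2) * K * (K * M) := by
            nlinarith [mul_le_mul_of_nonneg_left hNK
              (show (0:ℝ) ≤ 2 * (D - 2) * K by nlinarith [hDR, hKR])]
          have c3 : 2 * ((N:ℝ) * (K - 1)) ≤ 2 * (K - 1) * (K * M) := by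
            nlinarith [mul_le_mul_of_nonneg_left hNK
              (show (0:ℝ) ≤ 2 * (K - 1) by nlinarith [hKR])]
          have c5 : 4 * (W:ℝ) * (K * (K - 1)) ≤ 4 * K * (K * M) := by
            nlinarith [mul_le_mul_of_nonneg_left hWle
              (show (0:ℝ) ≤ 4 * K by nlinarith [hKR])]
          have c6 : 0 ≤ 2 * K * M * ((D - 1) * (K - 2) - 1) := by
            have f1 : (0:ℝ) ≤ 2 * K := by linarith
            have f2 : (0:ℝ) ≤ M := by linarith
            have f3 : (0:ℝ) ≤ (D - 1) * (K - 2) - 1 := by linarith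
            exact mul_nonneg (mul_nonneg f1 f2) f3
          nlinarith [hXnb, c2, c3, c5, c6, hKK, hKR, hM1]
        exact le_of_mul_le_mul_right hmul hKK
      calc (bdry (↑A : Set (Fin d → ℤ)) : ℝ) ≤ 2 * Xn + (4 * (W:ℝ) - 2) := hbdR
        _ ≤ 4 * D * M := hfin
        _ = 4 * d * (N : ℝ) ^ ((1:ℝ) - 1/(d:ℝ)) := by rw [hDdef, hMdef]
end
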